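/- arXiv:1201.5733 — 8 statements merged into one kernel-verified Lean document; each statement's English description precedes it below -/
import Mathlib

section
/- Let a < b be real numbers, X = [a,b], and let {h_0, h_1, …, h_m} ⊂ ℝ∖{0} be an additively ℚ-independent set. Then for each continuous function f : ⋃_{j=0}^m h_j X → ℂ with |f| ≡ 1 and each ε > 0, the set A_{f,ε}(h_0,…,h_m) := { σ ∈ P([a,b]) : there exists t ∈ ℝ with ‖f − ξ_t‖_{L²(ℝ, (1/(m+1)) Σ_{j=0}^m σ_{h_j})} < ε } is open and dense in P([a,b]). -/
open MeasureTheory Filter Topology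
open scoped ENNReal NNReal BoundedContinuousFunction

/-- `ξ_s(x) = exp(2πisx)`. -/
noncomputable def xi (s x : ℝ) : ℂ := Complex.exp (2 * Real.pi * Complex.I * s * x)

/-- A set `A ⊆ ℝ` is additively `ℚ`-independent. -/
def QIndep (A : Set ℝ) : Prop :=
  ∀ (m : ℕ) (a : Fin m → ℝ), (∀ i, a i ∈ A) → Function.Injective a →
    ∀ k : Fin m → ℤ, (∑ i, (k i : ℝ) * a i) = 0 → ∀ i, k i = 0

/-- The measure on `ℝ` induced by a probability measure on a subset of `ℝ`. -/
noncomputable def measOn {X : Set ℝ} (σ : ProbabilityMeasure X) : Measure ℝ :=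
  σ.toMeasure.map Subtype.val

/-- The set `A_{f,ε}(h_0, …, h_m)`. -/
noncomputable def Afe (a b : ℝ) (m : ℕ) (h : Fin (m + 1) → ℝ) (f : ℝ → ℂ) (ε : ℝ) :
    Set (ProbabilityMeasure (Set.Icc a b)) :=
  {σ | ∃ t : ℝ, eLpNorm (fun x => f x - xi t x) 2
      (((m + 1 : ℝ≥0∞))⁻¹ • ∑ j, (measOn σ).map (fun x => h j * x)) < ENNReal.ofReal ε}


-- Auxiliary lemmas

lemma mean_exp_zero {c : ℝ} (hc : c ≠ 0) :
    Tendsto (fun T : ℝ => (∫ t in (0:ℝ)..T, Complex.exp (2 * Real.pi * Complex.I * c * t)) / T)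
      atTop (𝓝 0) := by
  have hc' : (2 * Real.pi * Complex.I * (c:ℂ)) ≠ 0 := by
    apply mul_ne_zero (mul_ne_zero (mul_ne_zero two_ne_zero _) Complex.I_ne_zero)
    · exact_mod_cast hc
    · exact_mod_cast Real.pi_ne_zero
  have key : ∀ T : ℝ, (∫ t in (0:ℝ)..T, Complex.exp (2 * Real.pi * Complex.I * c * t))
      = (Complex.exp (2 * Real.pi * Complex.I * c * T) - 1) / (2 * Real.pi * Complex.I * c) := by
    intro T
    have := integral_exp_mul_complex (a := (0:ℝ)) (b := T) hc'
    simpa using this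
  have hnorm : ∀ T : ℝ, ‖Complex.exp (2 * Real.pi * Complex.I * c * T)‖ = 1 := by
    intro T
    have : (2 * Real.pi * Complex.I * c * T) = ((2 * Real.pi * c * T : ℝ) : ℂ) * Complex.I := by
      push_cast; ring
    rw [this]
    exact Complex.norm_exp_ofReal_mul_I _
  apply squeeze_zero_norm' (a := fun T : ℝ => (2 / ‖(2 * Real.pi * Complex.I * (c:ℂ))‖) / T)
  · filter_upwards [eventually_gt_atTop (0:ℝ)] with T hT
    rw [key]
    have h1 : ‖Complex.exp (2 * Real.pi * Complex.I * c * T) - 1‖ ≤ 2 := by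
      calc ‖Complex.exp (2 * Real.pi * Complex.I * c * T) - 1‖
          ≤ ‖Complex.exp (2 * Real.pi * Complex.I * c * T)‖ + ‖(1:ℂ)‖ := norm_sub_le _ _
        _ ≤ 2 := by rw [hnorm]; norm_num
    have h2 : ‖(Complex.exp (2 * Real.pi * Complex.I * c * T) - 1) / (2 * Real.pi * Complex.I * c) / T‖
        = ‖Complex.exp (2 * Real.pi * Complex.I * c * T) - 1‖ / ‖(2 * Real.pi * Complex.I * (c:ℂ))‖ / T := by
      rw [norm_div, norm_div]
      norm_num [abs_of_pos hT]
    rw [h2]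
    gcongr
  · exact Tendsto.div_atTop tendsto_const_nhds tendsto_id

lemma close_of_cos_lt {d x : ℝ} (hd0 : 0 < d) (hd1 : d ≤ 1)
    (hc : Real.cos d < Real.cos x) :
    ‖Complex.exp ((x:ℂ) * Complex.I) - 1‖ < 2 * d := by
  set k : ℤ := round (x / (2 * Real.pi)) with hk
  set x' : ℝ := x - k * (2 * Real.pi) with hx'
  have hpi : (0:ℝ) < Real.pi := Real.pi_pos
  have habs : |x'| ≤ Real.pi := by
    have h1 : |x / (2 * Real.pi) - k| ≤ 1/2 := abs_sub_round _
    have h2 : x' = (x / (2 * Real.pi) - k) * (2 * Real.pi) := by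
      field_simp
      ring
    rw [h2, abs_mul, abs_of_pos (by positivity : (0:ℝ) < 2 * Real.pi)]
    nlinarith [abs_nonneg (x / (2 * Real.pi) - k)]
  have hcos' : Real.cos x' = Real.cos x := by
    have := Real.cos_add_int_mul_two_pi x' k
    rw [hx'] at this ⊢
    rw [← this]; ring_nf
  have hlt : |x'| < d := by
    by_contra hge
    push_neg at hge
    have : Real.cos |x'| ≤ Real.cos d :=
      Real.cos_le_cos_of_nonneg_of_le_pi (le_of_lt hd0) habs hge
    rw [Real.cos_abs, hcos'] at this
    linarith
  have hexp : Complex.exp ((x:ℂ) * Complex.I) = Complex.exp ((x':ℂ) * Complex.I) := by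
    rw [hx']
    push_cast
    rw [sub_mul, Complex.exp_sub]
    have h1 : ((k:ℂ) * (2 * (Real.pi:ℂ))) * Complex.I = (k:ℂ) * (2 * (Real.pi:ℂ) * Complex.I) := by ring
    rw [h1, Complex.exp_int_mul_two_pi_mul_I k]
    simp
  rw [hexp]
  calc ‖Complex.exp ((x':ℂ) * Complex.I) - 1‖ ≤ 2 * ‖(x':ℂ) * Complex.I‖ := by
        apply Complex.norm_exp_sub_one_le
        simp only [norm_mul, Complex.norm_I, mul_one, Complex.norm_real, Real.norm_eq_abs]
        exact le_trans (le_of_lt hlt) hd1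
    _ < 2 * d := by
        simp only [norm_mul, Complex.norm_I, mul_one, Complex.norm_real, Real.norm_eq_abs]
        linarith

noncomputable def cfK (M : ℕ) (e : ℕ × ℕ) : ℝ := (M.choose e.1 * M.choose e.2 : ℝ) / 4 ^ M

def kZ (e : ℕ × ℕ) : ℤ := (e.1 : ℤ) - (e.2 : ℤ)

lemma cfK_nonneg (M : ℕ) (e : ℕ × ℕ) : 0 ≤ cfK M e := by
  unfold cfK; positivity

lemma factor_expand (M : ℕ) (x : ℝ) :
    (((1 + Real.cos x) / 2 : ℝ) : ℂ) ^ M =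
      ∑ e ∈ Finset.range (M+1) ×ˢ Finset.range (M+1),
        ((cfK M e : ℝ) : ℂ) * Complex.exp (Complex.I * ((kZ e : ℤ) : ℂ) * (x:ℂ)) := by
  set v := Complex.exp ((x:ℂ) * Complex.I) with hv
  set w := Complex.exp (-((x:ℂ) * Complex.I)) with hw
  have hvw : ∀ c d : ℕ, v ^ c * w ^ d
      = Complex.exp (Complex.I * (((c:ℤ) - (d:ℤ) : ℤ) : ℂ) * (x:ℂ)) := by
    intro c d
    rw [hv, hw, ← Complex.exp_nat_mul, ← Complex.exp_nat_mul, ← Complex.exp_add]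
    congr 1
    push_cast
    ring
  have h1 : v * w = 1 := by rw [hv, hw, ← Complex.exp_add]; simp
  have h2c : v + w = 2 * ((Real.cos x : ℝ) : ℂ) := by
    have h := Complex.two_cos (x := (x:ℂ))
    rw [neg_mul] at h
    rw [Complex.ofReal_cos]
    linear_combination -h
  have base : (((1 + Real.cos x) / 2 : ℝ) : ℂ) = (v + 1) * (w + 1) / 4 := by
    have expand : (v + 1) * (w + 1) = v * w + (v + w) + 1 := by ring
    rw [expand, h1, h2c]
    push_cast
    ring
  rw [base, div_pow, mul_pow, add_pow, add_pow]
  rw [Finset.sum_mul_sum]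
  rw [Finset.sum_product]
  rw [Finset.sum_div]
  refine Finset.sum_congr rfl fun c hc => ?_
  rw [Finset.sum_div]
  refine Finset.sum_congr rfl fun d hd => ?_
  have : v ^ c * 1 ^ (M - c) * (M.choose c : ℂ) * (w ^ d * 1 ^ (M - d) * (M.choose d : ℂ)) / 4 ^ M
      = ((M.choose c * M.choose d : ℝ) / 4 ^ M : ℝ) * (v ^ c * w ^ d) := by
    push_cast
    ring
  rw [this, hvw]
  unfold cfK kZ
  push_cast
  ring

lemma kronecker {ι : Type} [Fintype ι] (r : ι → ℝ)
    (hind : ∀ k : ι → ℤ, (∑ i, (k i : ℝ) * r i) = 0 → ∀ i, k i = 0)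
    (z : ι → ℂ) (hz : ∀ i, ‖z i‖ = 1) (δ : ℝ) (hδ : 0 < δ) :
    ∃ t : ℝ, ∀ i, ‖Complex.exp (2 * Real.pi * Complex.I * (r i) * t) - z i‖ < δ := by
  classical
  have hπ : (0:ℝ) < Real.pi := Real.pi_pos
  -- angles
  set θ : ι → ℝ := fun i => Complex.arg (z i) / (2 * Real.pi) with hθ
  have hzθ : ∀ i, z i = Complex.exp (((2 * Real.pi * θ i : ℝ) : ℂ) * Complex.I) := by
    intro i
    have h1 : 2 * Real.pi * θ i = Complex.arg (z i) := by
      rw [hθ]; field_simp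
    rw [h1]
    have h2 := Complex.norm_mul_exp_arg_mul_I (z i)
    rw [hz i] at h2
    simpa using h2.symm
  -- the parameter d
  set d : ℝ := min (δ/4) 1 with hd
  have hd0 : 0 < d := lt_min (by linarith) one_pos
  have hd1 : d ≤ 1 := min_le_right _ _
  have hdδ : 2 * d ≤ δ / 2 := by
    have : d ≤ δ/4 := min_le_left _ _
    linarith
  set β : ℝ := (1 + Real.cos d) / 2 with hβ
  have hβ0 : 0 ≤ β := by
    have := Real.neg_one_le_cos d
    rw [hβ]; linarith
  have hπ1 : (1:ℝ) < Real.pi := by nlinarith [Real.pi_gt_three]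
  have hβ1 : β < 1 := by
    have : Real.cos d < Real.cos 0 :=
      Real.cos_lt_cos_of_nonneg_of_le_pi le_rfl (by linarith) hd0
    rw [Real.cos_zero] at this
    rw [hβ]; linarith
  have hβpos : 0 < β := by
    have hπ3 : (3:ℝ) < Real.pi := Real.pi_gt_three
    have : 0 ≤ Real.cos d := Real.cos_nonneg_of_mem_Icc
      ⟨by linarith, by linarith⟩
    rw [hβ]; linarith
  set N : ℕ := Fintype.card ι with hN
  -- choose M
  obtain ⟨M, hM⟩ : ∃ M : ℕ, ((M:ℝ)+1) ^ (2*N) * β ^ M < 1 := by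
    have h0 : Tendsto (fun n : ℕ => (n:ℝ) ^ (2*N) * β ^ n) atTop (𝓝 0) :=
      tendsto_pow_const_mul_const_pow_of_lt_one (2*N) hβ0 hβ1
    have h1 : Tendsto (fun M : ℕ => ((M+1:ℕ):ℝ) ^ (2*N) * β ^ (M+1)) atTop (𝓝 0) :=
      h0.comp (tendsto_add_atTop_nat 1)
    have h2 : Tendsto (fun M : ℕ => ((M:ℝ)+1) ^ (2*N) * β ^ M) atTop (𝓝 (β⁻¹ * 0)) := by
      have h3 := h1.const_mul β⁻¹
      apply h3.congr
      intro M
      push_cast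
      field_simp
      ring
    rw [mul_zero] at h2
    exact (h2.eventually (eventually_lt_nhds one_pos)).exists
  -- the finitary expansion data
  set E : Finset (ℕ × ℕ) := Finset.range (M+1) ×ˢ Finset.range (M+1) with hE
  set PP : Finset (ι → ℕ × ℕ) := Fintype.piFinset (fun _ : ι => E) with hPP
  set ω : (ι → ℕ × ℕ) → ℝ := fun p => ∑ i, ((kZ (p i) : ℤ) : ℝ) * r i with hω
  set Θf : (ι → ℕ × ℕ) → ℝ := fun p => ∑ i, ((kZ (p i) : ℤ) : ℝ) * θ i with hΘ
  set coef : (ι → ℕ × ℕ) → ℝ := fun p => ∏ i, cfK M (p i) with hcoef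
  set Kp : (ι → ℕ × ℕ) → ℂ := fun p =>
    ((coef p : ℝ) : ℂ) * Complex.exp (-(2 * Real.pi * Complex.I * (Θf p))) with hKp
  set P : ℝ → ℝ := fun t => ∏ i, ((1 + Real.cos (2*Real.pi*(r i * t - θ i)))/2) ^ M with hP
  have hPcont : Continuous P := by
    apply continuous_finset_prod
    intro i _
    fun_prop
  -- pointwise expansion
  have expansion : ∀ t : ℝ, ((P t : ℝ) : ℂ)
      = ∑ p ∈ PP, Kp p * Complex.exp (2 * Real.pi * Complex.I * (ω p) * t) := by
    intro t
    have step1 : ((P t : ℝ) : ℂ)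
        = ∏ i, (((1 + Real.cos (2*Real.pi*(r i * t - θ i)))/2 : ℝ) : ℂ) ^ M := by
      rw [hP, Complex.ofReal_prod]
      exact Finset.prod_congr rfl fun i _ => (Complex.ofReal_pow _ _)
    rw [step1]
    have step2 : ∀ i : ι, (((1 + Real.cos (2*Real.pi*(r i * t - θ i)))/2 : ℝ) : ℂ) ^ M
        = ∑ e ∈ E, ((cfK M e : ℝ) : ℂ)
            * Complex.exp (Complex.I * ((kZ e : ℤ) : ℂ) * ((2*Real.pi*(r i * t - θ i) : ℝ) : ℂ)) := by
      intro i
      rw [hE, ← factor_expand M (2*Real.pi*(r i * t - θ i))]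
    calc (∏ i, (((1 + Real.cos (2*Real.pi*(r i * t - θ i)))/2 : ℝ) : ℂ) ^ M)
        = ∏ i, ∑ e ∈ E, ((cfK M e : ℝ) : ℂ)
            * Complex.exp (Complex.I * ((kZ e : ℤ) : ℂ) * ((2*Real.pi*(r i * t - θ i) : ℝ) : ℂ)) :=
          Finset.prod_congr rfl fun i _ => step2 i
      _ = ∑ p ∈ PP, ∏ i, (((cfK M (p i) : ℝ) : ℂ)
            * Complex.exp (Complex.I * ((kZ (p i) : ℤ) : ℂ) * ((2*Real.pi*(r i * t - θ i) : ℝ) : ℂ))) := by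
          rw [hPP, Finset.prod_univ_sum]
      _ = ∑ p ∈ PP, Kp p * Complex.exp (2 * Real.pi * Complex.I * (ω p) * t) := by
          refine Finset.sum_congr rfl fun p _ => ?_
          rw [Finset.prod_mul_distrib, ← Complex.exp_sum]
          rw [hKp]
          simp only []
          rw [← Complex.ofReal_prod, mul_assoc, ← Complex.exp_add]
          congr 2
          rw [hω, hΘ]
          push_cast
          rw [Finset.mul_sum, Finset.mul_sum, Finset.sum_mul, ← Finset.sum_neg_distrib,
            ← Finset.sum_add_distrib]
          exact Finset.sum_congr rfl fun i _ => by ring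
  -- limits of means
  set c₀ : ℝ := ∑ p ∈ PP, (if ω p = 0 then coef p else 0) with hc₀
  have hint : ∀ (p : ι → ℕ × ℕ) (T : ℝ), IntervalIntegrable
      (fun t => Kp p * Complex.exp (2 * Real.pi * Complex.I * (ω p) * t)) volume 0 T := by
    intro p T
    apply Continuous.intervalIntegrable
    fun_prop
  have meanlim : Tendsto (fun T : ℝ => (∫ t in (0:ℝ)..T, P t) / T) atTop (𝓝 c₀) := by
    have cplx : Tendsto (fun T : ℝ => ((∫ t in (0:ℝ)..T, P t : ℝ) : ℂ) / (T:ℂ)) atTop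
        (𝓝 ((c₀ : ℝ) : ℂ)) := by
      have keyint : ∀ T : ℝ, ((∫ t in (0:ℝ)..T, P t : ℝ) : ℂ)
          = ∑ p ∈ PP, Kp p * ∫ t in (0:ℝ)..T, Complex.exp (2 * Real.pi * Complex.I * (ω p) * t) := by
        intro T
        rw [← intervalIntegral.integral_ofReal]
        rw [intervalIntegral.integral_congr (g := fun t =>
          ∑ p ∈ PP, Kp p * Complex.exp (2 * Real.pi * Complex.I * (ω p) * t))
          (fun t _ => expansion t)]
        rw [intervalIntegral.integral_finset_sum (fun p _ => hint p T)]
        exact Finset.sum_congr rfl fun p _ => intervalIntegral.integral_const_mul _ _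
      have sumlim : Tendsto (fun T : ℝ => ∑ p ∈ PP, Kp p *
          ((∫ t in (0:ℝ)..T, Complex.exp (2 * Real.pi * Complex.I * (ω p) * t)) / T)) atTop
          (𝓝 (∑ p ∈ PP, (if ω p = 0 then Kp p else 0))) := by
        apply tendsto_finset_sum
        intro p _
        by_cases hωp : ω p = 0
        · simp only [hωp, if_pos]
          apply Tendsto.congr' _ tendsto_const_nhds
          filter_upwards [eventually_ne_atTop (0:ℝ)] with T hT
          simp only [Complex.ofReal_zero, mul_zero, zero_mul, Complex.exp_zero,
            intervalIntegral.integral_const, sub_zero, Complex.real_smul, smul_eq_mul, mul_one]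
          rw [div_self (Complex.ofReal_ne_zero.mpr hT), mul_one]
        · simp only [hωp, if_neg, not_false_iff]
          have h0 := (mean_exp_zero hωp).const_mul (Kp p)
          rw [mul_zero] at h0
          exact h0
      have : Tendsto (fun T : ℝ => ((∫ t in (0:ℝ)..T, P t : ℝ) : ℂ) / (T:ℂ)) atTop
          (𝓝 (∑ p ∈ PP, (if ω p = 0 then Kp p else 0))) := by
        apply sumlim.congr
        intro T
        rw [keyint, Finset.sum_div]
        exact Finset.sum_congr rfl fun p _ => by ring
      convert this using 2
      rw [hc₀, Complex.ofReal_sum]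
      refine Finset.sum_congr rfl fun p _ => ?_
      by_cases hωp : ω p = 0
      · simp only [hωp, if_pos]
        have hall : ∀ i, kZ (p i) = 0 := by
          apply hind (fun i => kZ (p i))
          exact hωp
        have hΘ0 : Θf p = 0 := by
          rw [hΘ]
          apply Finset.sum_eq_zero
          intro i _
          rw [hall i]
          simp
        rw [hKp]
        simp [hΘ0]
      · simp [hωp]
    have hre := (Complex.continuous_re.tendsto _).comp cplx
    simp only [Function.comp_def, Complex.ofReal_re] at hre
    exact hre.congr (fun T => by rw [← Complex.ofReal_div, Complex.ofReal_re])
  -- lower bound for c₀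
  have hc₀_lb : 1 / ((M:ℝ)+1) ^ (2*N) ≤ c₀ := by
    have hmem : (fun _ : ι => (M/2, M/2)) ∈ PP := by
      rw [hPP]
      apply Fintype.mem_piFinset.mpr
      intro i
      rw [hE, Finset.mem_product]
      constructor <;> (apply Finset.mem_range.mpr; exact Nat.lt_succ_of_le (Nat.div_le_self _ _))
    have hω0 : ω (fun _ : ι => (M/2, M/2)) = 0 := by
      rw [hω]
      apply Finset.sum_eq_zero
      intro i _
      simp [kZ]
    have hterm : (if ω (fun _ : ι => (M/2, M/2)) = 0 then coef (fun _ : ι => (M/2, M/2)) else 0)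
        = cfK M (M/2, M/2) ^ N := by
      rw [if_pos hω0]
      simp only [hcoef]
      rw [Finset.prod_const, Finset.card_univ, hN]
    have hsingle : cfK M (M/2, M/2) ^ N ≤ c₀ := by
      rw [hc₀, ← hterm]
      apply Finset.single_le_sum (f := fun p => if ω p = 0 then coef p else 0) _ hmem
      intro p _
      show (0:ℝ) ≤ if ω p = 0 then coef p else 0
      by_cases hωp : ω p = 0
      · rw [if_pos hωp]
        simp only [hcoef]
        exact Finset.prod_nonneg fun i _ => cfK_nonneg M _
      · rw [if_neg hωp]
    refine le_trans ?_ hsingle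
    -- cfK M (M/2,M/2) ≥ 1/(M+1)^2
    have hchoose : (2:ℝ) ^ M ≤ ((M:ℝ)+1) * (M.choose (M/2) : ℝ) := by
      have h1 : (2:ℕ) ^ M = ∑ c ∈ Finset.range (M+1), M.choose c := (Nat.sum_range_choose M).symm
      have h2 : ∑ c ∈ Finset.range (M+1), M.choose c ≤ (M+1) * M.choose (M/2) := by
        calc ∑ c ∈ Finset.range (M+1), M.choose c
            ≤ (Finset.range (M+1)).card • M.choose (M/2) :=
              Finset.sum_le_card_nsmul _ _ _ (fun c _ => Nat.choose_le_middle c M)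
          _ = (M+1) * M.choose (M/2) := by rw [Finset.card_range, smul_eq_mul]
      have := h1 ▸ h2
      exact_mod_cast this
    have hcf : 1 / ((M:ℝ)+1) ^ 2 ≤ cfK M (M/2, M/2) := by
      unfold cfK
      simp only []
      have h4 : (4:ℝ) ^ M = (2:ℝ)^M * (2:ℝ)^M := by
        rw [← pow_add, ← two_mul]
        rw [pow_mul]
        norm_num
      rw [div_le_div_iff₀ (by positivity) (by positivity)]
      have hM1 : (0:ℝ) < (M:ℝ)+1 := by positivity
      have hcnn : (0:ℝ) ≤ (M.choose (M/2) : ℝ) := by positivity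
      nlinarith [hchoose, sq_nonneg ((M:ℝ)+1), mul_le_mul hchoose hchoose (by positivity) (by positivity)]
    calc 1 / ((M:ℝ)+1) ^ (2*N) = (1 / ((M:ℝ)+1) ^ 2) ^ N := by
          rw [div_pow, one_pow, ← pow_mul]
      _ ≤ cfK M (M/2, M/2) ^ N := by
          apply pow_le_pow_left₀ (by positivity) hcf
  have hβM : β ^ M < c₀ := by
    have h1 : β ^ M < 1 / ((M:ℝ)+1) ^ (2*N) := by
      rw [lt_div_iff₀ (by positivity)]
      linarith [hM]
    linarith [hc₀_lb]
  -- find t with P t > β^M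
  obtain ⟨t, ht⟩ : ∃ t : ℝ, β ^ M < P t := by
    by_contra hnone
    push_neg at hnone
    have hev := meanlim.eventually (eventually_gt_nhds hβM)
    obtain ⟨T, hT1, hT0⟩ := (hev.and (eventually_gt_atTop (0:ℝ))).exists
    have hle : (∫ t in (0:ℝ)..T, P t) ≤ β ^ M * T := by
      calc (∫ t in (0:ℝ)..T, P t) ≤ ∫ _ in (0:ℝ)..T, β ^ M := by
            apply intervalIntegral.integral_mono_on (le_of_lt hT0)
              (hPcont.intervalIntegrable _ _) intervalIntegrable_const
            intro x _
            exact hnone x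
        _ = β ^ M * T := by
            rw [intervalIntegral.integral_const, smul_eq_mul]
            ring
      
    rw [lt_div_iff₀ hT0] at hT1
    linarith
  refine ⟨t, fun i => ?_⟩
  -- extract coordinatewise
  set ai : ℝ := 2*Real.pi*(r i * t - θ i) with hai
  have hfle1 : ∀ j : ι, ((1 + Real.cos (2*Real.pi*(r j * t - θ j)))/2) ^ M ≤ 1 := by
    intro j
    apply pow_le_one₀
    · have := Real.neg_one_le_cos (2*Real.pi*(r j * t - θ j)); linarith
    · have := Real.cos_le_one (2*Real.pi*(r j * t - θ j)); linarith
  have hfnn : ∀ j : ι, 0 ≤ ((1 + Real.cos (2*Real.pi*(r j * t - θ j)))/2) ^ M := by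
    intro j
    apply pow_nonneg
    have := Real.neg_one_le_cos (2*Real.pi*(r j * t - θ j)); linarith
  have hPle : P t ≤ ((1 + Real.cos ai)/2) ^ M := by
    rw [hP, hai]
    calc (∏ j, ((1 + Real.cos (2*Real.pi*(r j * t - θ j)))/2) ^ M)
        = ((1 + Real.cos (2*Real.pi*(r i * t - θ i)))/2) ^ M
          * ∏ j ∈ Finset.univ.erase i, ((1 + Real.cos (2*Real.pi*(r j * t - θ j)))/2) ^ M := by
          rw [← Finset.mul_prod_erase _ _ (Finset.mem_univ i)]
      _ ≤ ((1 + Real.cos (2*Real.pi*(r i * t - θ i)))/2) ^ M * 1 := by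
          apply mul_le_mul_of_nonneg_left _ (hfnn i)
          apply Finset.prod_le_one
          · intro j _; exact hfnn j
          · intro j _; exact hfle1 j
      _ = ((1 + Real.cos (2*Real.pi*(r i * t - θ i)))/2) ^ M := mul_one _
  have hfi : β ^ M < ((1 + Real.cos ai)/2) ^ M := lt_of_lt_of_le ht hPle
  have hβlt : β < (1 + Real.cos ai)/2 := by
    by_contra hle
    push_neg at hle
    have : ((1 + Real.cos ai)/2) ^ M ≤ β ^ M := by
      apply pow_le_pow_left₀ _ hle
      have := Real.neg_one_le_cos ai; linarith
    linarith
  have hcos : Real.cos d < Real.cos ai := by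
    rw [hβ] at hβlt; linarith
  have hclose := close_of_cos_lt hd0 hd1 hcos
  -- convert to the goal
  have hfac : Complex.exp (2 * Real.pi * Complex.I * (r i) * t) - z i
      = z i * (Complex.exp ((ai:ℂ) * Complex.I) - 1) := by
    rw [mul_sub, mul_one]
    congr 1
    rw [hzθ i, ← Complex.exp_add, hai]
    congr 1
    push_cast
    ring
  rw [hfac, norm_mul, hz i, one_mul]
  calc ‖Complex.exp ((ai:ℂ) * Complex.I) - 1‖ < 2*d := hclose
    _ ≤ δ/2 := hdδ
    _ < δ := by linarith

lemma continuous_xi (s : ℝ) : Continuous (xi s) := by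
  unfold xi
  fun_prop

/-- The Gt function. -/
noncomputable def Gfun (m : ℕ) (h : Fin (m + 1) → ℝ) (F : ℝ → ℂ) (a b t : ℝ)
    (x : Set.Icc a b) : ℝ≥0∞ :=
  ((m + 1 : ℝ≥0∞))⁻¹ * ∑ j, (‖F (h j * (x : ℝ)) - xi t (h j * (x : ℝ))‖₊ : ℝ≥0∞) ^ (2:ℕ)

lemma char_eLp {a b : ℝ} (m : ℕ) (h : Fin (m + 1) → ℝ) (f F : ℝ → ℂ) (hF : Continuous F)
    (hagree : ∀ y ∈ ⋃ j, (fun x => h j * x) '' Set.Icc a b, f y = F y)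
    (t : ℝ) (σ : ProbabilityMeasure (Set.Icc a b)) :
    eLpNorm (fun x => f x - xi t x) 2
        (((m + 1 : ℝ≥0∞))⁻¹ • ∑ j, (measOn σ).map (fun x => h j * x))
      = (∫⁻ x, Gfun m h F a b t x ∂(σ : Measure (Set.Icc a b))) ^ (1/2 : ℝ) := by
  set K := ⋃ j, (fun x => h j * x) '' Set.Icc a b with hK
  have hKclosed : IsClosed K := by
    rw [hK]
    exact (isCompact_iUnion fun j => isCompact_Icc.image (continuous_mul_left (h j))).isClosed
  set μσ := (((m + 1 : ℝ≥0∞))⁻¹ • ∑ j, (measOn σ).map (fun x => h j * x)) with hμσ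
  have hmapj : ∀ j, (measOn σ).map (fun x => h j * x)
      = Measure.map (fun x : Set.Icc a b => h j * (x : ℝ)) σ.toMeasure := by
    intro j
    rw [measOn, Measure.map_map (measurable_const_mul _) measurable_subtype_coe]
    rfl
  have hmem : ∀ j (x : Set.Icc a b), h j * (x : ℝ) ∈ K := by
    intro j x
    rw [hK]
    exact Set.mem_iUnion.mpr ⟨j, Set.mem_image_of_mem _ x.2⟩
  have hμK : μσ Kᶜ = 0 := by
    rw [hμσ]
    simp only [Measure.smul_apply, smul_eq_mul]
    have : (∑ j, (measOn σ).map (fun x => h j * x)) Kᶜ = 0 := by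
      rw [Measure.finset_sum_apply]
      apply Finset.sum_eq_zero
      intro j _
      rw [hmapj j, Measure.map_apply (by fun_prop) hKclosed.measurableSet.compl]
      convert measure_empty (μ := σ.toMeasure)
      ext x
      simp [hmem j x]
    rw [this, mul_zero]
  have hae : (fun x => f x - xi t x) =ᵐ[μσ] (fun x => F x - xi t x) := by
    have hKae : K ∈ ae μσ := by
      rw [mem_ae_iff, hμK]
    filter_upwards [hKae] with y hy
    rw [hagree y hy]
  rw [eLpNorm_congr_ae hae]
  rw [eLpNorm_eq_lintegral_rpow_enorm_toReal (by norm_num) (by norm_num)]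
  simp only [enorm_eq_nnnorm]
  have htoReal : (2 : ℝ≥0∞).toReal = (2:ℝ) := by norm_num
  rw [htoReal]
  congr 1
  have hrpow : ∀ y : ℝ, (‖F y - xi t y‖₊ : ℝ≥0∞) ^ (2:ℝ) = (‖F y - xi t y‖₊ : ℝ≥0∞) ^ (2:ℕ) := by
    intro y
    rw [← ENNReal.rpow_natCast _ 2]
    norm_num
  simp_rw [hrpow]
  have hφ : Measurable (fun y : ℝ => (‖F y - xi t y‖₊ : ℝ≥0∞) ^ (2:ℕ)) := by
    apply Measurable.pow_const
    exact ((hF.sub (continuous_xi t)).nnnorm.measurable).coe_nnreal_ennreal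
  rw [hμσ, lintegral_smul_measure, lintegral_finset_sum_measure]
  have hstep : ∀ j ∈ Finset.univ, ∫⁻ y, (‖F y - xi t y‖₊ : ℝ≥0∞) ^ (2:ℕ) ∂((measOn σ).map (fun x => h j * x))
      = ∫⁻ x, (‖F (h j * (x:ℝ)) - xi t (h j * (x:ℝ))‖₊ : ℝ≥0∞) ^ (2:ℕ) ∂(σ.toMeasure) := by
    intro j _
    rw [hmapj j, lintegral_map hφ (by fun_prop)]
  rw [Finset.sum_congr rfl hstep]
  rw [← lintegral_finset_sum]
  · rw [smul_eq_mul, ← lintegral_const_mul]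
    · rfl
    · apply Finset.measurable_sum
      intro j _
      exact hφ.comp (by fun_prop)
  · intro j _
    exact hφ.comp (by fun_prop)

lemma mem_Afe_iff {a b : ℝ} (m : ℕ) (h : Fin (m + 1) → ℝ) (f F : ℝ → ℂ) (hF : Continuous F)
    (hagree : ∀ y ∈ ⋃ j, (fun x => h j * x) '' Set.Icc a b, f y = F y)
    {ε : ℝ} (hε : 0 < ε) (σ : ProbabilityMeasure (Set.Icc a b)) :
    σ ∈ Afe a b m h f ε ↔ ∃ t : ℝ,
      (∫⁻ x, Gfun m h F a b t x ∂(σ : Measure (Set.Icc a b))) < (ENNReal.ofReal ε) ^ (2:ℕ) := by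
  unfold Afe
  simp only [Set.mem_setOf_eq]
  refine exists_congr fun t => ?_
  rw [char_eLp m h f F hF hagree t σ]
  set A := ∫⁻ x, Gfun m h F a b t x ∂(σ : Measure (Set.Icc a b)) with hA
  have hnat : (ENNReal.ofReal ε) ^ (2:ℕ) = (ENNReal.ofReal ε) ^ ((2:ℕ):ℝ) :=
    (ENNReal.rpow_natCast _ 2).symm
  constructor
  · intro hlt
    have h2 := (ENNReal.rpow_lt_rpow_iff (z := (2:ℝ)) (by norm_num)).mpr hlt
    rw [← ENNReal.rpow_mul] at h2
    norm_num at h2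
    rw [hnat]
    norm_num
    exact h2
  · intro hlt
    rw [hnat] at hlt
    have h2 := (ENNReal.rpow_lt_rpow_iff (z := (1/2:ℝ)) (by norm_num)).mpr hlt
    rw [← ENNReal.rpow_mul] at h2
    norm_num at h2
    exact h2

lemma isOpen_Afe {a b : ℝ} (hab : a < b) (m : ℕ) (h : Fin (m + 1) → ℝ) (f F : ℝ → ℂ)
    (hF : Continuous F)
    (hagree : ∀ y ∈ ⋃ j, (fun x => h j * x) '' Set.Icc a b, f y = F y)
    {ε : ℝ} (hε : 0 < ε) : IsOpen (Afe a b m h f ε) := by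
  haveI : CompactSpace (Set.Icc a b) := isCompact_iff_compactSpace.mp isCompact_Icc
  -- bounded continuous ℝ≥0-valued version of Gfun
  set g : ℝ → (Set.Icc a b) →ᵇ ℝ≥0 := fun t => BoundedContinuousFunction.mkOfCompact
    ⟨fun x => ((m + 1 : ℝ≥0))⁻¹ * ∑ j, ‖F (h j * (x:ℝ)) - xi t (h j * (x:ℝ))‖₊ ^ (2:ℕ),
      by
        apply Continuous.mul continuous_const
        apply continuous_finset_sum
        intro j _
        exact ((hF.comp (by fun_prop)).sub ((continuous_xi t).comp (by fun_prop))).nnnorm.pow 2⟩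
    with hg
  have hgcoe : ∀ t (x : Set.Icc a b), ((g t x : ℝ≥0) : ℝ≥0∞) = Gfun m h F a b t x := by
    intro t x
    rw [hg]
    simp only [BoundedContinuousFunction.mkOfCompact_apply, ContinuousMap.coe_mk]
    unfold Gfun
    push_cast
    rw [ENNReal.coe_inv (by positivity)]
    push_cast
    rfl
  have hlint : ∀ t (σ : ProbabilityMeasure (Set.Icc a b)),
      (∫⁻ x, Gfun m h F a b t x ∂(σ : Measure (Set.Icc a b)))
        = ((σ.toFiniteMeasure.testAgainstNN (g t) : ℝ≥0) : ℝ≥0∞) := by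
    intro t σ
    rw [FiniteMeasure.testAgainstNN_coe_eq]
    simp_rw [hgcoe t]
    rfl
  have : Afe a b m h f ε = ⋃ t : ℝ,
      (fun σ : ProbabilityMeasure (Set.Icc a b) =>
        ((σ.toFiniteMeasure.testAgainstNN (g t) : ℝ≥0) : ℝ≥0∞)) ⁻¹'
        (Set.Iio ((ENNReal.ofReal ε) ^ (2:ℕ))) := by
    ext σ
    rw [Set.mem_iUnion]
    rw [mem_Afe_iff m h f F hF hagree hε σ]
    refine exists_congr fun t => ?_
    rw [Set.mem_preimage, Set.mem_Iio, hlint t σ]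
  rw [this]
  apply isOpen_iUnion
  intro t
  apply IsOpen.preimage
  · exact ENNReal.continuous_coe.comp (ProbabilityMeasure.continuous_testAgainstNN_eval (g t))
  · exact isOpen_Iio

lemma exists_indep_points (m : ℕ) (h : Fin (m+1) → ℝ)
    (hs : ∀ k : Fin (m+1) → ℤ, (∑ j, (k j : ℝ) * h j) = 0 → ∀ j, k j = 0)
    (n : ℕ) (u v : Fin n → ℝ) (huv : ∀ i, u i < v i) :
    ∃ p : Fin n → ℝ, (∀ i, p i ∈ Set.Ioo (u i) (v i)) ∧
      (∀ K : Fin n → Fin (m+1) → ℤ, (∑ i, ∑ j, (K i j : ℝ) * (h j * p i)) = 0 →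
        ∀ i j, K i j = 0) := by
  induction n with
  | zero => exact ⟨Fin.elim0, fun i => i.elim0, fun K _ i => i.elim0⟩
  | succ n ih =>
    obtain ⟨p', hp'mem, hp'ind⟩ :=
      ih (fun i => u i.castSucc) (fun i => v i.castSucc) (fun i => huv _)
    set B : Set ℝ := Set.range (fun kK : ((Fin (m+1) → ℤ) × (Fin n → Fin (m+1) → ℤ)) =>
      -(∑ i, ∑ j, ((kK.2 i j : ℝ) * (h j * p' i))) / (∑ j, (kK.1 j : ℝ) * h j)) with hB
    have hBcount : B.Countable := Set.countable_range _
    have hfree : ∃ x, x ∈ Set.Ioo (u (Fin.last n)) (v (Fin.last n)) \ B := by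
      by_contra hcon
      push_neg at hcon
      have hsub : Set.Ioo (u (Fin.last n)) (v (Fin.last n)) ⊆ B := by
        intro x hx
        by_contra hxB
        exact (hcon x) ⟨hx, hxB⟩
      have h1 : volume (Set.Ioo (u (Fin.last n)) (v (Fin.last n))) = 0 :=
        measure_mono_null hsub (hBcount.measure_zero _)
      rw [Real.volume_Ioo, ENNReal.ofReal_eq_zero] at h1
      linarith [huv (Fin.last n)]
    obtain ⟨x, hxmem, hxB⟩ := hfree
    set pp : Fin (n+1) → ℝ := Fin.snoc p' x with hpp
    refine ⟨pp, ?_, ?_⟩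
    · intro i
      refine Fin.lastCases ?_ ?_ i
      · rw [hpp, Fin.snoc_last]; exact hxmem
      · intro i; rw [hpp, Fin.snoc_castSucc]; exact hp'mem i
    · intro K hK
      have hsplit : (∑ i : Fin (n+1), ∑ j, (K i j : ℝ) * (h j * pp i))
          = (∑ i : Fin n, ∑ j, (K i.castSucc j : ℝ) * (h j * p' i))
            + (∑ j, (K (Fin.last n) j : ℝ) * h j) * x := by
        rw [Fin.sum_univ_castSucc]
        congr 1
        · refine Finset.sum_congr rfl fun i _ => ?_
          refine Finset.sum_congr rfl fun j _ => ?_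
          rw [hpp, Fin.snoc_castSucc]
        · rw [Finset.sum_mul]
          refine Finset.sum_congr rfl fun j _ => ?_
          rw [hpp, Fin.snoc_last]
          ring
      rw [hsplit] at hK
      have hklast : ∀ j, K (Fin.last n) j = 0 := by
        by_contra hne
        push_neg at hne
        have hs0 : (∑ j, (K (Fin.last n) j : ℝ) * h j) ≠ 0 := by
          intro h0
          obtain ⟨j, hj⟩ := hne
          exact hj (hs _ h0 j)
        have hxval : x = -(∑ i : Fin n, ∑ j, (K i.castSucc j : ℝ) * (h j * p' i))
            / (∑ j, (K (Fin.last n) j : ℝ) * h j) := by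
          rw [eq_div_iff hs0]
          linear_combination hK
        exact hxB ⟨(K (Fin.last n), fun i j => K i.castSucc j), hxval.symm⟩
      have hrest : (∑ i : Fin n, ∑ j, (K i.castSucc j : ℝ) * (h j * p' i)) = 0 := by
        have hz : (∑ j, (K (Fin.last n) j : ℝ) * h j) = 0 := by
          apply Finset.sum_eq_zero; intro j _; rw [hklast j]; norm_num
        rw [hz, zero_mul, add_zero] at hK
        exact hK
      have hind' := hp'ind _ hrest
      intro i j
      refine Fin.lastCases ?_ ?_ i
      · exact hklast j
      · intro i'; exact hind' i' j

lemma dense_Afe {a b : ℝ} (hab : a < b) (m : ℕ) (h : Fin (m + 1) → ℝ)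
    (hne : ∀ j, h j ≠ 0) (hinj : Function.Injective h) (hQ : QIndep (Set.range h))
    (f F : ℝ → ℂ) (hF : Continuous F)
    (hagree : ∀ y ∈ ⋃ j, (fun x => h j * x) '' Set.Icc a b, f y = F y)
    (hf1 : ∀ x ∈ ⋃ j, (fun x => h j * x) '' Set.Icc a b, ‖f x‖ = 1)
    {ε : ℝ} (hε : 0 < ε) : Dense (Afe a b m h f ε) := by
  haveI : CompactSpace (Set.Icc a b) := isCompact_iff_compactSpace.mp isCompact_Icc
  have hsum0 : ∀ k : Fin (m+1) → ℤ, (∑ j, (k j : ℝ) * h j) = 0 → ∀ j, k j = 0 := by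
    intro k hk
    exact hQ (m+1) h (fun j => Set.mem_range_self j) hinj k hk
  set ℓ : ℕ → ℝ := fun n => (b - a)/(n+1) with hℓ
  have hℓpos : ∀ n, 0 < ℓ n := by
    intro n; rw [hℓ]; apply div_pos (by linarith) (by positivity)
  -- choose independent points in the cells
  have hptex : ∀ n : ℕ, ∃ p : Fin (n+1) → ℝ,
      (∀ i : Fin (n+1), p i ∈ Set.Ioo (a + (i.val:ℝ) * ℓ n) (a + ((i.val:ℝ)+1) * ℓ n)) ∧
      (∀ K : Fin (n+1) → Fin (m+1) → ℤ, (∑ i, ∑ j, (K i j : ℝ) * (h j * p i)) = 0 →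
        ∀ i j, K i j = 0) := by
    intro n
    apply exists_indep_points m h hsum0 (n+1)
      (fun i : Fin (n+1) => a + (i.val:ℝ) * ℓ n)
      (fun i : Fin (n+1) => a + ((i.val:ℝ)+1) * ℓ n)
    intro i
    have := hℓpos n
    nlinarith
  choose p hpmem hpind using hptex
  have hp_Icc : ∀ n (i : Fin (n+1)), p n i ∈ Set.Icc a b := by
    intro n i
    obtain ⟨h1, h2⟩ := hpmem n i
    constructor
    · have h0 : (0:ℝ) ≤ (i.val:ℝ) * ℓ n := mul_nonneg (by positivity) (hℓpos n).le
      linarith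
    · have hi : (i.val:ℝ) + 1 ≤ (n:ℝ)+1 := by
        have := i.is_le
        exact_mod_cast Nat.succ_le_succ this
      have h3 : ((i.val:ℝ)+1) * ℓ n ≤ ((n:ℝ)+1) * ℓ n :=
        mul_le_mul_of_nonneg_right hi (hℓpos n).le
      have hb : a + ((n:ℝ)+1) * ℓ n = b := by
        rw [hℓ]
        field_simp
        ring
      linarith
  -- the discretization maps
  set e : (n : ℕ) → ℕ → Set.Icc a b := fun n i =>
    if hi : i ≤ n then ⟨p n ⟨i, Nat.lt_succ_of_le hi⟩, hp_Icc n _⟩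
    else ⟨a, Set.left_mem_Icc.mpr hab.le⟩ with he
  set q : (n : ℕ) → Set.Icc a b → Set.Icc a b := fun n x =>
    e n (min n ⌊((x:ℝ) - a)/ℓ n⌋₊) with hq
  have hqmeas : ∀ n, Measurable (q n) := by
    intro n
    apply Measurable.comp (measurable_from_nat (f := e n))
    exact measurable_const.min
      (Nat.measurable_floor.comp ((measurable_subtype_coe.sub measurable_const).div_const (ℓ n)))
  have hq_key : ∀ n (x : Set.Icc a b), (∃ i : Fin (n+1), q n x = ⟨p n i, hp_Icc n i⟩) ∧
      |((q n x : Set.Icc a b) : ℝ) - (x:ℝ)| ≤ ℓ n := by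
    intro n x
    set fl := ⌊((x:ℝ) - a)/ℓ n⌋₊ with hfl
    set i0 := min n fl with hi0
    have hi0n : i0 ≤ n := min_le_left _ _
    have hqx : q n x = ⟨p n ⟨i0, Nat.lt_succ_of_le hi0n⟩, hp_Icc n _⟩ := by
      rw [hq, he]
      exact dif_pos hi0n
    have hxa := x.2.1
    have hxb := x.2.2
    have hnn : 0 ≤ ((x:ℝ) - a)/ℓ n := by
      apply div_nonneg (by linarith) (hℓpos n).le
    -- lower bound : a + i0 * ℓ n ≤ x
    have hlow : a + (i0:ℝ) * ℓ n ≤ (x:ℝ) := by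
      have h1 : (i0:ℝ) ≤ ((x:ℝ) - a)/ℓ n := by
        calc (i0:ℝ) ≤ (fl:ℝ) := by exact_mod_cast min_le_right n fl
          _ ≤ ((x:ℝ) - a)/ℓ n := Nat.floor_le hnn
      rw [le_div_iff₀ (hℓpos n)] at h1
      linarith
    -- upper bound : x ≤ a + (i0+1) * ℓ n
    have hhigh : (x:ℝ) ≤ a + ((i0:ℝ)+1) * ℓ n := by
      rcases le_or_gt fl n with hfln | hfln
      · have hieq : i0 = fl := min_eq_right hfln
        have h2 : ((x:ℝ) - a)/ℓ n < (fl:ℝ) + 1 := Nat.lt_floor_add_one _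
        rw [div_lt_iff₀ (hℓpos n)] at h2
        rw [hieq]
        push_cast
        linarith
      · have hieq : i0 = n := min_eq_left hfln.le
        have hb : a + ((n:ℝ)+1) * ℓ n = b := by
          rw [hℓ]; field_simp; ring
        rw [hieq]
        push_cast
        linarith
    refine ⟨⟨(⟨i0, Nat.lt_succ_of_le hi0n⟩ : Fin (n+1)), hqx⟩, ?_⟩
    rw [hqx]
    obtain ⟨hp1, hp2⟩ := hpmem n ⟨i0, Nat.lt_succ_of_le hi0n⟩
    simp only [Fin.val_mk] at hp1 hp2
    have hcoe : ((⟨p n ⟨i0, Nat.lt_succ_of_le hi0n⟩, hp_Icc n _⟩ : Set.Icc a b) : ℝ)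
        = p n ⟨i0, Nat.lt_succ_of_le hi0n⟩ := rfl
    rw [hcoe, abs_le]
    constructor
    · nlinarith [hp1, hhigh]
    · nlinarith [hp2, hlow]
  -- the approximating measures
  set σs : (n : ℕ) → ProbabilityMeasure (Set.Icc a b) → ProbabilityMeasure (Set.Icc a b) :=
    fun n σ => σ.map (hqmeas n).aemeasurable with hσs
  intro σ0
  have htend : Tendsto (fun n => σs n σ0) atTop (𝓝 σ0) := by
    rw [MeasureTheory.ProbabilityMeasure.tendsto_iff_forall_integral_tendsto]
    intro g
    have hint : ∀ n, ∫ ω, g ω ∂((σs n σ0) : Measure (Set.Icc a b))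
        = ∫ ω, g (q n ω) ∂(σ0 : Measure (Set.Icc a b)) := by
      intro n
      rw [hσs]
      simp only [MeasureTheory.ProbabilityMeasure.toMeasure_map]
      exact integral_map (hqmeas n).aemeasurable g.continuous.aestronglyMeasurable
    rw [Metric.tendsto_atTop]
    intro ε' hε'
    have huc := CompactSpace.uniformContinuous_of_continuous g.continuous
    rw [Metric.uniformContinuous_iff] at huc
    obtain ⟨δ, hδ0, hδ⟩ := huc (ε'/2) (by linarith)
    obtain ⟨N, hN⟩ : ∃ N : ℕ, ℓ N < δ := by
      obtain ⟨N, hN⟩ := exists_nat_gt ((b - a)/δ)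
      refine ⟨N, ?_⟩
      rw [hℓ, div_lt_iff₀ (by positivity)]
      rw [div_lt_iff₀ hδ0] at hN
      nlinarith
    refine ⟨N, fun n hn => ?_⟩
    have hℓn : ℓ n ≤ ℓ N := by
      rw [hℓ]
      apply div_le_div_of_nonneg_left (by linarith) (by positivity)
      exact_mod_cast Nat.succ_le_succ hn
    rw [hint n, Real.dist_eq]
    have hcomp_int : Integrable (fun ω => g (q n ω)) (σ0 : Measure (Set.Icc a b)) := by
      apply Integrable.mono' (integrable_const ‖g‖)
        ((g.continuous.measurable.comp (hqmeas n)).aestronglyMeasurable)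
      exact Eventually.of_forall fun ω => g.norm_coe_le_norm _
    have hgint : Integrable (fun ω => g ω) (σ0 : Measure (Set.Icc a b)) := g.integrable _
    rw [← integral_sub hcomp_int hgint]
    have hb : ∀ ω, ‖g (q n ω) - g ω‖ ≤ ε'/2 := by
      intro ω
      have hd : dist (q n ω) ω < δ := by
        rw [Subtype.dist_eq, Real.dist_eq]
        calc |((q n ω : Set.Icc a b) : ℝ) - (ω:ℝ)| ≤ ℓ n := (hq_key n ω).2
          _ ≤ ℓ N := hℓn
          _ < δ := hN
      have h5 := hδ hd
      rw [dist_eq_norm] at h5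
      linarith
    calc ‖∫ ω, (g (q n ω) - g ω) ∂(σ0 : Measure (Set.Icc a b))‖
        ≤ ε'/2 * ((σ0 : Measure (Set.Icc a b)) Set.univ).toReal :=
          norm_integral_le_of_norm_le_const (Eventually.of_forall hb)
      _ = ε'/2 := by simp
      _ < ε' := by linarith
  have hmem : ∀ n, σs n σ0 ∈ Afe a b m h f ε := by
    intro n
    rw [mem_Afe_iff m h f F hF hagree hε]
    have hKmem : ∀ (i : Fin (n+1)) (j : Fin (m+1)),
        h j * p n i ∈ ⋃ j, (fun x => h j * x) '' Set.Icc a b :=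
      fun i j => Set.mem_iUnion.mpr ⟨j, Set.mem_image_of_mem _ (hp_Icc n i)⟩
    have hind : ∀ k : (Fin (n+1) × Fin (m+1)) → ℤ,
        (∑ ij, (k ij : ℝ) * (h ij.2 * p n ij.1)) = 0 → ∀ ij, k ij = 0 := by
      intro k hk ij
      have h2 : (∑ i, ∑ j, ((k (i,j) : ℝ)) * (h j * p n i)) = 0 := by
        rw [Fintype.sum_prod_type] at hk
        exact hk
      exact hpind n (fun i j => k (i,j)) h2 ij.1 ij.2
    obtain ⟨t, ht⟩ := kronecker (fun ij : Fin (n+1) × Fin (m+1) => h ij.2 * p n ij.1) hind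
      (fun ij => f (h ij.2 * p n ij.1)) (fun ij => hf1 _ (hKmem ij.1 ij.2)) (ε/2) (by linarith)
    refine ⟨t, ?_⟩
    have hGmeas : Measurable (Gfun m h F a b t) := by
      apply Measurable.const_mul
      apply Finset.measurable_sum
      intro j _
      apply Measurable.pow_const
      apply Measurable.coe_nnreal_ennreal
      apply Continuous.measurable
      apply Continuous.nnnorm
      exact (hF.comp (by fun_prop)).sub ((continuous_xi t).comp (by fun_prop))
    have hmapmeasure : ((σs n σ0) : Measure (Set.Icc a b))
        = Measure.map (q n) (σ0 : Measure (Set.Icc a b)) := by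
      rw [hσs]
      simp only [MeasureTheory.ProbabilityMeasure.toMeasure_map]
    rw [hmapmeasure, lintegral_map hGmeas (hqmeas n)]
    have hbound : ∀ ω, Gfun m h F a b t (q n ω) ≤ ENNReal.ofReal ((ε/2)^2) := by
      intro ω
      obtain ⟨i, hi⟩ := (hq_key n ω).1
      rw [hi]
      unfold Gfun
      have hsummand : ∀ j : Fin (m+1),
          (‖F (h j * ((⟨p n i, hp_Icc n i⟩ : Set.Icc a b) : ℝ))
            - xi t (h j * ((⟨p n i, hp_Icc n i⟩ : Set.Icc a b) : ℝ))‖₊ : ℝ≥0∞) ^ (2:ℕ)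
          ≤ ENNReal.ofReal ((ε/2)^2) := by
        intro j
        have hyK := hKmem i j
        have hFf : F (h j * p n i) = f (h j * p n i) := (hagree _ hyK).symm
        have hxi : xi t (h j * p n i)
            = Complex.exp (2 * Real.pi * Complex.I * ((h j * p n i : ℝ) : ℂ) * (t:ℂ)) := by
          unfold xi
          congr 1
          ring
        have hnorm : ‖F (h j * p n i) - xi t (h j * p n i)‖ ≤ ε/2 := by
          rw [hFf, hxi, norm_sub_rev]
          exact (ht (i, j)).le
        calc (‖F (h j * p n i) - xi t (h j * p n i)‖₊ : ℝ≥0∞) ^ (2:ℕ)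
            = (ENNReal.ofReal ‖F (h j * p n i) - xi t (h j * p n i)‖) ^ (2:ℕ) := by
              rw [ofReal_norm, enorm_eq_nnnorm]
          _ = ENNReal.ofReal (‖F (h j * p n i) - xi t (h j * p n i)‖^(2:ℕ)) := by
              rw [ENNReal.ofReal_pow (norm_nonneg _)]
          _ ≤ ENNReal.ofReal ((ε/2)^2) := by
              apply ENNReal.ofReal_le_ofReal
              apply pow_le_pow_left₀ (norm_nonneg _) hnorm
      calc ((m + 1 : ℝ≥0∞))⁻¹ * ∑ j, (‖F (h j * ((⟨p n i, hp_Icc n i⟩ : Set.Icc a b) : ℝ))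
            - xi t (h j * ((⟨p n i, hp_Icc n i⟩ : Set.Icc a b) : ℝ))‖₊ : ℝ≥0∞) ^ (2:ℕ)
          ≤ ((m + 1 : ℝ≥0∞))⁻¹ * ∑ _j : Fin (m+1), ENNReal.ofReal ((ε/2)^2) := by
            apply mul_le_mul_right
            exact Finset.sum_le_sum (fun j _ => hsummand j)
        _ = ((m + 1 : ℝ≥0∞))⁻¹ * ((m + 1 : ℝ≥0∞)) * ENNReal.ofReal ((ε/2)^2) := by
            rw [Finset.sum_const, Finset.card_univ, Fintype.card_fin, mul_assoc]
            congr 1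
            rw [nsmul_eq_mul]
            push_cast
            ring
        _ = ENNReal.ofReal ((ε/2)^2) := by
            rw [ENNReal.inv_mul_cancel (by simp) (by
              apply ENNReal.add_ne_top.mpr
              exact ⟨ENNReal.natCast_ne_top m, ENNReal.one_ne_top⟩), one_mul]
    calc ∫⁻ ω, Gfun m h F a b t (q n ω) ∂(σ0 : Measure (Set.Icc a b))
        ≤ ∫⁻ _, ENNReal.ofReal ((ε/2)^2) ∂(σ0 : Measure (Set.Icc a b)) :=
          lintegral_mono hbound
      _ = ENNReal.ofReal ((ε/2)^2) := by simp
      _ < (ENNReal.ofReal ε)^(2:ℕ) := by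
          rw [← ENNReal.ofReal_pow hε.le]
          rw [ENNReal.ofReal_lt_ofReal_iff (by positivity)]
          nlinarith
  exact mem_closure_of_tendsto htend (Eventually.of_forall hmem)

theorem statement0 (a b : ℝ) (hab : a < b) (m : ℕ) (h : Fin (m + 1) → ℝ)
    (hne : ∀ j, h j ≠ 0) (hinj : Function.Injective h) (hQ : QIndep (Set.range h))
    (f : ℝ → ℂ)
    (hfc : ContinuousOn f (⋃ j, (fun x => h j * x) '' Set.Icc a b))
    (hf1 : ∀ x ∈ ⋃ j, (fun x => h j * x) '' Set.Icc a b, ‖f x‖ = 1)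
    (ε : ℝ) (hε : 0 < ε) :
    IsOpen (Afe a b m h f ε) ∧ Dense (Afe a b m h f ε) := by
  have hKclosed : IsClosed (⋃ j, (fun x => h j * x) '' Set.Icc a b) :=
    (isCompact_iUnion fun j => isCompact_Icc.image (continuous_mul_left (h j))).isClosed
  obtain ⟨F, hFrestrict⟩ := ContinuousMap.exists_restrict_eq (X := ℝ) hKclosed
    ⟨(⋃ j, (fun x => h j * x) '' Set.Icc a b).restrict f, hfc.restrict⟩
  have hagree : ∀ y ∈ ⋃ j, (fun x => h j * x) '' Set.Icc a b, f y = F y := by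
    intro y hy
    exact (ContinuousMap.congr_fun hFrestrict ⟨y, hy⟩).symm
  exact ⟨isOpen_Afe hab m h f F F.continuous hagree hε,
    dense_Afe hab m h hne hinj hQ f F F.continuous hagree hf1 hε⟩
end

section
/- Let (X, 𝓑) be a standard Borel space and let φ : X → X be a measurable map. Let σ be a finite positive continuous Borel measure on X such that the map φ : (X, σ) → (X, φ_*σ) is almost everywhere invertible (i.e., there is a measurable map ψ : X → X with ψ(φ(x)) = x for σ-a.e. x). Assume that σ({x ∈ X : φ(x) = x}) = 0 and that the measures σ and φ_*σ are not mutually singular. Then there exists a measurable set A ∈ 𝓑 such that σ(A) > 0, σ(A ∩ φ⁻¹A) = 0, and the measures σ and φ_*σ restricted to A are equivalent (mutually absolutely continuous). -/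
open MeasureTheory Filter Topology
open scoped ENNReal NNReal

theorem statement3 {X : Type*} [MeasurableSpace X] [StandardBorelSpace X]
    (φ : X → X) (hφ : Measurable φ)
    (σ : Measure X) [IsFiniteMeasure σ] (hσpos : σ ≠ 0)
    (hcont : ∀ x, σ {x} = 0)
    (hinv : ∃ ψ : X → X, Measurable ψ ∧ ∀ᵐ x ∂σ, ψ (φ x) = x)
    (hfix : σ {x | φ x = x} = 0)
    (hns : ¬ σ ⟂ₘ σ.map φ) :
    ∃ A : Set X, MeasurableSet A ∧ 0 < σ A ∧ σ (A ∩ φ ⁻¹' A) = 0 ∧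
      σ.restrict A ≪ (σ.map φ).restrict A ∧ (σ.map φ).restrict A ≪ σ.restrict A := by
  classical
  set ν := σ.map φ with hν
  have hνfin : IsFiniteMeasure ν := by
    rw [hν]; exact Measure.isFiniteMeasure_map σ φ
  set lam := σ + ν with hlam
  have hσac : σ ≪ lam := Measure.absolutelyContinuous_of_le (Measure.le_add_right le_rfl)
  have hνac : ν ≪ lam := Measure.absolutelyContinuous_of_le (Measure.le_add_left le_rfl)
  set f := σ.rnDeriv lam with hfdef
  set g := ν.rnDeriv lam with hgdef
  have hf : Measurable f := Measure.measurable_rnDeriv _ _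
  have hg : Measurable g := Measure.measurable_rnDeriv _ _
  have hσd : lam.withDensity f = σ := Measure.withDensity_rnDeriv_eq σ lam hσac
  have hνd : lam.withDensity g = ν := Measure.withDensity_rnDeriv_eq ν lam hνac
  set E := (f ⁻¹' {0})ᶜ ∩ (g ⁻¹' {0})ᶜ with hE
  have hEm : MeasurableSet E :=
    ((hf (measurableSet_singleton 0)).compl).inter ((hg (measurableSet_singleton 0)).compl)
  -- key: on sets inside {f ≠ 0} (resp {g ≠ 0}), nullity for σ (resp ν) gives nullity for lam
  have keyf : ∀ T : Set X, T ⊆ (f ⁻¹' {0})ᶜ → σ T = 0 → lam T = 0 := by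
    intro T hT hT0
    rw [← hσd, withDensity_apply_eq_zero hf] at hT0
    have : {x | f x ≠ 0} ∩ T = T := by
      apply Set.inter_eq_self_of_subset_right
      intro x hx
      exact hT hx
    rwa [this] at hT0
  have keyg : ∀ T : Set X, T ⊆ (g ⁻¹' {0})ᶜ → ν T = 0 → lam T = 0 := by
    intro T hT hT0
    rw [← hνd, withDensity_apply_eq_zero hg] at hT0
    have : {x | g x ≠ 0} ∩ T = T := by
      apply Set.inter_eq_self_of_subset_right
      intro x hx
      exact hT hx
    rwa [this] at hT0
  have lamσ : ∀ T : Set X, lam T = 0 → σ T = 0 := by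
    intro T hT
    rw [hlam, Measure.add_apply] at hT
    exact (add_eq_zero.mp hT).1
  have lamν : ∀ T : Set X, lam T = 0 → ν T = 0 := by
    intro T hT
    rw [hlam, Measure.add_apply] at hT
    exact (add_eq_zero.mp hT).2
  have hσf0 : σ (f ⁻¹' {0}) = 0 := by
    rw [← hσd, withDensity_apply_eq_zero hf]
    have : {x | f x ≠ 0} ∩ f ⁻¹' {0} = ∅ := by
      ext x; simp only [Set.mem_inter_iff, Set.mem_setOf_eq, Set.mem_preimage,
        Set.mem_singleton_iff, Set.mem_empty_iff_false, iff_false, not_and]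
      tauto
    rw [this]; exact measure_empty
  have hνg0 : ν (g ⁻¹' {0}) = 0 := by
    rw [← hνd, withDensity_apply_eq_zero hg]
    have : {x | g x ≠ 0} ∩ g ⁻¹' {0} = ∅ := by
      ext x; simp only [Set.mem_inter_iff, Set.mem_setOf_eq, Set.mem_preimage,
        Set.mem_singleton_iff, Set.mem_empty_iff_false, iff_false, not_and]
      tauto
    rw [this]; exact measure_empty
  -- σ E > 0, otherwise σ ⟂ₘ ν
  have hσE : σ E ≠ 0 := by
    intro h0
    apply hns
    refine ⟨f ⁻¹' {0} ∪ E, (hf (measurableSet_singleton 0)).union hEm, ?_, ?_⟩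
    · refine le_antisymm ?_ zero_le
      calc σ (f ⁻¹' {0} ∪ E) ≤ σ (f ⁻¹' {0}) + σ E := measure_union_le _ _
        _ = 0 := by rw [hσf0, h0, add_zero]
    · refine measure_mono_null ?_ hνg0
      intro x hx
      simp only [Set.mem_compl_iff, Set.mem_union, not_or, hE, Set.mem_inter_iff,
        Set.mem_preimage, Set.mem_singleton_iff, not_and, not_not] at hx
      exact hx.2 hx.1
  -- restricted measures on measurable subsets of E are equivalent
  have hAC : ∀ A : Set X, MeasurableSet A → A ⊆ E →
      σ.restrict A ≪ ν.restrict A ∧ ν.restrict A ≪ σ.restrict A := by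
    intro A hAm hAE
    constructor
    · refine Measure.AbsolutelyContinuous.mk ?_
      intro s hs hs0
      rw [Measure.restrict_apply hs] at hs0 ⊢
      exact lamσ _ (keyg _ (fun x hx => (hAE hx.2).2) hs0)
    · refine Measure.AbsolutelyContinuous.mk ?_
      intro s hs hs0
      rw [Measure.restrict_apply hs] at hs0 ⊢
      exact lamν _ (keyf _ (fun x hx => (hAE hx.2).1) hs0)
  -- separating sequence of measurable sets
  obtain ⟨S, hSm, hSsep⟩ := exists_seq_separating X MeasurableSet.empty Set.univ
  set C : ℕ → Set X := fun n => (S n ∩ φ ⁻¹' (S n)ᶜ) ∪ ((S n)ᶜ ∩ φ ⁻¹' (S n)) with hC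
  have hcover : E \ {x | φ x = x} ⊆ ⋃ n, E ∩ C n := by
    intro x hx
    have hne : φ x ≠ x := hx.2
    have hnot : ¬ ∀ n, x ∈ S n ↔ φ x ∈ S n := by
      intro h
      exact hne (hSsep x trivial (φ x) trivial h).symm
    push_neg at hnot
    obtain ⟨n, hn⟩ := hnot
    refine Set.mem_iUnion.mpr ⟨n, hx.1, ?_⟩
    rcases hn with ⟨hxS, hφS⟩ | ⟨hxS, hφS⟩
    · exact Or.inl ⟨hxS, hφS⟩
    · exact Or.inr ⟨hxS, hφS⟩
  have hEdiff : σ (E \ {x | φ x = x}) = σ E := measure_diff_null hfix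
  have hex : ∃ n, σ (E ∩ C n) ≠ 0 := by
    by_contra h
    push_neg at h
    have : σ (⋃ n, E ∩ C n) = 0 := measure_iUnion_null h
    exact hσE (by rw [← hEdiff]; exact measure_mono_null hcover this)
  obtain ⟨n, hn⟩ := hex
  have hsplit : E ∩ C n = (E ∩ (S n ∩ φ ⁻¹' (S n)ᶜ)) ∪ (E ∩ ((S n)ᶜ ∩ φ ⁻¹' (S n))) :=
    Set.inter_union_distrib_left _ _ _
  have hone : σ (E ∩ (S n ∩ φ ⁻¹' (S n)ᶜ)) ≠ 0 ∨ σ (E ∩ ((S n)ᶜ ∩ φ ⁻¹' (S n))) ≠ 0 := by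
    by_contra h
    push_neg at h
    apply hn
    rw [hsplit]
    exact measure_union_null h.1 h.2
  rcases hone with h1 | h2
  · refine ⟨E ∩ (S n ∩ φ ⁻¹' (S n)ᶜ),
      hEm.inter ((hSm n).inter (hφ (hSm n).compl)), pos_iff_ne_zero.mpr h1, ?_, ?_⟩
    · have : E ∩ (S n ∩ φ ⁻¹' (S n)ᶜ) ∩ φ ⁻¹' (E ∩ (S n ∩ φ ⁻¹' (S n)ᶜ)) = ∅ := by
        ext x
        simp only [Set.mem_inter_iff, Set.mem_preimage, Set.mem_compl_iff,
          Set.mem_empty_iff_false, iff_false, not_and]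
        tauto
      rw [this]; exact measure_empty
    · exact hAC _ (hEm.inter ((hSm n).inter (hφ (hSm n).compl))) Set.inter_subset_left
  · refine ⟨E ∩ ((S n)ᶜ ∩ φ ⁻¹' (S n)),
      hEm.inter (((hSm n).compl).inter (hφ (hSm n))), pos_iff_ne_zero.mpr h2, ?_, ?_⟩
    · have : E ∩ ((S n)ᶜ ∩ φ ⁻¹' (S n)) ∩ φ ⁻¹' (E ∩ ((S n)ᶜ ∩ φ ⁻¹' (S n))) = ∅ := by
        ext x
        simp only [Set.mem_inter_iff, Set.mem_preimage, Set.mem_compl_iff,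
          Set.mem_empty_iff_false, iff_false, not_and]
        tauto
      rw [this]; exact measure_empty
    · exact hAC _ (hEm.inter (((hSm n).compl).inter (hφ (hSm n)))) Set.inter_subset_left
end

section
/- Let σ be a continuous Kronecker measure on ℝ. Then for every rational s ∉ {0, 1} and every r ∈ ℝ, the measures σ and σ_s * δ_r are mutually singular. -/
open MeasureTheory Filter Topology
open scoped ENNReal NNReal

/-- A finite positive Borel measure on `ℝ` is a Kronecker measure. -/
def IsKronecker (σ : Measure ℝ) : Prop :=
  ∀ f : ℝ → ℂ, MemLp f 2 σ → (∀ᵐ x ∂σ, ‖f x‖ = 1) →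
    ∃ t : ℕ → ℝ, Tendsto t atTop atTop ∧
      Tendsto (fun n => eLpNorm (fun x => xi (t n) x - f x) 2 σ) atTop (𝓝 0)


lemma xi_eq (s x : ℝ) : xi s x = Complex.exp (((2 * Real.pi * s * x : ℝ) : ℂ) * Complex.I) := by
  unfold xi; congr 1; push_cast; ring

lemma xi_norm (s x : ℝ) : ‖xi s x‖ = 1 := by
  rw [xi_eq, Complex.norm_exp_ofReal_mul_I]

lemma xi_measurable (s : ℝ) : Measurable (xi s) := by
  unfold xi
  exact Complex.measurable_exp.comp (Complex.measurable_ofReal.const_mul _)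

lemma xi_nat_mul (n : ℕ) (t x : ℝ) : xi ((n : ℝ) * t) x = xi t x ^ n := by
  unfold xi; rw [← Complex.exp_nat_mul]; congr 1; push_cast; ring

lemma norm_pow_sub_pow (a b : ℂ) (ha : ‖a‖ = 1) (hb : ‖b‖ = 1) :
    ∀ n : ℕ, ‖a ^ n - b ^ n‖ ≤ (n : ℝ) * ‖a - b‖
  | 0 => by simp
  | (n + 1) => by
    have h1 : a ^ (n + 1) - b ^ (n + 1) = a * (a ^ n - b ^ n) + (a - b) * b ^ n := by ring
    have h2 := norm_pow_sub_pow a b ha hb n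
    calc ‖a ^ (n+1) - b ^ (n+1)‖ ≤ ‖a * (a ^ n - b ^ n)‖ + ‖(a - b) * b ^ n‖ := by
          rw [h1]; exact norm_add_le _ _
      _ = ‖a ^ n - b ^ n‖ + ‖a - b‖ := by
          rw [norm_mul, norm_mul, ha, norm_pow, hb, one_pow, one_mul, mul_one]
      _ ≤ (n : ℝ) * ‖a - b‖ + ‖a - b‖ := by linarith
      _ = ((n + 1 : ℕ) : ℝ) * ‖a - b‖ := by push_cast; ring

lemma norm_zpow_sub_zpow (a b : ℂ) (ha : ‖a‖ = 1) (hb : ‖b‖ = 1) (k : ℤ) :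
    ‖a ^ k - b ^ k‖ ≤ |(k : ℝ)| * ‖a - b‖ := by
  obtain ⟨n, rfl | rfl⟩ := k.eq_nat_or_neg
  · simpa using norm_pow_sub_pow a b ha hb n
  · have han : a ^ (n : ℤ) ≠ 0 := by
      intro h
      have : ‖a ^ (n : ℤ)‖ = 0 := by rw [h, norm_zero]
      rw [norm_zpow, ha, one_zpow] at this; norm_num at this
    have hbn : b ^ (n : ℤ) ≠ 0 := by
      intro h
      have : ‖b ^ (n : ℤ)‖ = 0 := by rw [h, norm_zero]
      rw [norm_zpow, hb, one_zpow] at this; norm_num at this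
    have key : a ^ (-(n : ℤ)) - b ^ (-(n : ℤ))
        = (b ^ (n : ℤ) - a ^ (n : ℤ)) * ((a ^ (n : ℤ))⁻¹ * (b ^ (n : ℤ))⁻¹) := by
      have ha0 : a ≠ 0 := fun h => by simp [h] at ha
      have hb0 : b ≠ 0 := fun h => by simp [h] at hb
      rw [zpow_neg, zpow_neg]
      field_simp
    have h2 : ‖a ^ (-(n:ℤ)) - b ^ (-(n:ℤ))‖ = ‖a ^ (n:ℤ) - b ^ (n:ℤ)‖ := by
      rw [key, norm_mul, norm_mul, norm_inv, norm_inv, norm_zpow, norm_zpow, ha, hb,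
        norm_sub_rev]
      simp
    rw [h2]
    have := norm_pow_sub_pow a b ha hb n
    simp only [zpow_natCast]
    calc ‖a ^ n - b ^ n‖ ≤ (n : ℝ) * ‖a - b‖ := this
      _ ≤ |((-(n:ℤ) : ℤ) : ℝ)| * ‖a - b‖ := by
          apply mul_le_mul_of_nonneg_right _ (norm_nonneg _)
          push_cast; rw [abs_neg, abs_of_nonneg (by positivity)]
      _ = _ := rfl

lemma quad_roots (A B C : ℝ) (hA : A ≠ 0) :
    ∃ a b : ℝ, {y : ℝ | A * y ^ 2 + B * y + C = 0} ⊆ {a, b} := by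
  set S := {y : ℝ | A * y ^ 2 + B * y + C = 0} with hS
  by_cases h1 : ∃ a, a ∈ S
  · obtain ⟨a, ha⟩ := h1
    by_cases h2 : ∃ b ∈ S, b ≠ a
    · obtain ⟨b, hb, hba⟩ := h2
      refine ⟨a, b, fun y hy => ?_⟩
      by_contra hy'
      simp only [Set.mem_insert_iff, Set.mem_singleton_iff] at hy'
      obtain ⟨hya, hyb⟩ : y ≠ a ∧ y ≠ b := by
        constructor <;> intro h <;> simp [h] at hy'
      have e1 : (y - a) * (A * (y + a) + B) = 0 := by
        have h₁ : A * y ^ 2 + B * y + C = 0 := hy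
        have h₂ : A * a ^ 2 + B * a + C = 0 := ha
        linear_combination h₁ - h₂
      have e2 : (y - b) * (A * (y + b) + B) = 0 := by
        have h₁ : A * y ^ 2 + B * y + C = 0 := hy
        have h₂ : A * b ^ 2 + B * b + C = 0 := hb
        linear_combination h₁ - h₂
      have f1 : A * (y + a) + B = 0 := by
        rcases mul_eq_zero.mp e1 with h | h
        · exact absurd (sub_eq_zero.mp h) hya
        · exact h
      have f2 : A * (y + b) + B = 0 := by
        rcases mul_eq_zero.mp e2 with h | h
        · exact absurd (sub_eq_zero.mp h) hyb
        · exact h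
      have : A * (a - b) = 0 := by linarith
      rcases mul_eq_zero.mp this with h | h
      · exact hA h
      · exact hba (sub_eq_zero.mp h).symm
    · push_neg at h2
      exact ⟨a, a, fun y hy => by simp [h2 y hy]⟩
  · push_neg at h1
    exact ⟨0, 0, fun y hy => absurd hy (h1 y)⟩

lemma exp_identity (p : ℤ) (q' : ℕ) (ε a b : ℝ) :
    Complex.exp (((ε * ((p : ℝ) * a - (q' : ℝ) * b) : ℝ) : ℂ) * Complex.I)
      = Complex.exp (((ε * a : ℝ) : ℂ) * Complex.I) ^ p
        * (Complex.exp (((ε * b : ℝ) : ℂ) * Complex.I) ^ q')⁻¹ := by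
  rw [← Complex.exp_int_mul, ← Complex.exp_nat_mul, ← Complex.exp_neg, ← Complex.exp_add]
  congr 1
  push_cast
  ring

lemma keyA (σ ρ : Measure ℝ) [IsFiniteMeasure σ] (hK : IsKronecker σ)
    (hρσ : ρ ≤ σ) (hρ0 : ρ ≠ 0)
    (B : ℝ → ℝ) (hB : Measurable B) (hmap : ρ.map B ≤ σ)
    (p : ℤ) (q' : ℕ)
    (hx2 : ∀ t : ℝ, ∃ c : ℂ, ‖c‖ = 1 ∧ ∀ x, (xi t (B x)) ^ p = c * xi ((q' : ℝ) * t) x)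
    (u : ℝ → ℝ) (hu : Measurable u) (M : ℝ) (hM : ∀ x, |u x| ≤ M) :
    ∃ c : ℝ, ∀ᵐ x ∂ρ, (p : ℝ) * u (B x) - (q' : ℝ) * u x = c := by
  haveI : IsFiniteMeasure ρ := isFiniteMeasure_of_le σ hρσ
  have hM0 : 0 ≤ M := le_trans (abs_nonneg _) (hM 0)
  set K : ℝ := (|(p : ℝ)| + q' + 1) * (M + 1) with hK_def
  have hKpos : 0 < K := by positivity
  set ε : ℝ := 1 / K with hε_def
  have hε : 0 < ε := by positivity
  set w : ℝ → ℝ := fun x => (p : ℝ) * u (B x) - (q' : ℝ) * u x with hw_def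
  have hwb : ∀ x, |ε * w x| ≤ 1 := by
    intro x
    have h1 : |w x| ≤ (|(p : ℝ)| + q') * M := by
      have := hM (B x); have := hM x
      have h2 : |w x| ≤ |(p : ℝ)| * |u (B x)| + (q' : ℝ) * |u x| := by
        calc |w x| ≤ |(p:ℝ) * u (B x)| + |(q':ℝ) * u x| := abs_sub _ _
          _ = |(p:ℝ)| * |u (B x)| + (q':ℝ) * |u x| := by
              rw [abs_mul, abs_mul, abs_of_nonneg (by positivity : (0:ℝ) ≤ (q':ℝ))]
      nlinarith [abs_nonneg ((p:ℝ)), abs_nonneg (u (B x)), abs_nonneg (u x)]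
    rw [abs_mul, abs_of_nonneg hε.le]
    rw [hε_def, div_mul_eq_mul_div, div_le_one hKpos, one_mul]
    calc |w x| ≤ (|(p : ℝ)| + q') * M := h1
      _ ≤ K := by rw [hK_def]; nlinarith [abs_nonneg ((p:ℝ))]
  set f : ℝ → ℂ := fun x => Complex.exp (((ε * u x : ℝ) : ℂ) * Complex.I) with hf_def
  have hfnorm : ∀ x, ‖f x‖ = 1 := fun x => by
    rw [hf_def]; exact Complex.norm_exp_ofReal_mul_I _
  have hfm : Measurable f := by
    apply Complex.measurable_exp.comp
    exact (Complex.measurable_ofReal.comp (hu.const_mul ε)).mul_const _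
  have hmem : MemLp f 2 σ :=
    MemLp.of_bound hfm.aestronglyMeasurable 1 (Eventually.of_forall fun x => (hfnorm x).le)
  obtain ⟨t, -, hconv⟩ := hK f hmem (Eventually.of_forall hfnorm)
  -- convergence transferred to ρ
  have hgm : ∀ n, Measurable fun x => xi (t n) x - f x :=
    fun n => (xi_measurable (t n)).sub hfm
  have hX : Tendsto (fun n => eLpNorm (fun x => xi (t n) x - f x) 2 ρ) atTop (𝓝 0) := by
    refine tendsto_of_tendsto_of_tendsto_of_le_of_le tendsto_const_nhds hconv
      (fun n => zero_le) (fun n => eLpNorm_mono_measure _ hρσ)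
  have hY : Tendsto (fun n => eLpNorm (fun x => xi (t n) (B x) - f (B x)) 2 ρ) atTop (𝓝 0) := by
    refine tendsto_of_tendsto_of_tendsto_of_le_of_le tendsto_const_nhds hconv
      (fun n => zero_le) (fun n => ?_)
    have heq : eLpNorm (fun x => xi (t n) x - f x) 2 (ρ.map B)
        = eLpNorm ((fun x => xi (t n) x - f x) ∘ B) 2 ρ :=
      eLpNorm_map_measure ((hgm n).aestronglyMeasurable) hB.aemeasurable
    calc eLpNorm (fun x => xi (t n) (B x) - f (B x)) 2 ρ
        = eLpNorm (fun x => xi (t n) x - f x) 2 (ρ.map B) := heq.symm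
      _ ≤ eLpNorm (fun x => xi (t n) x - f x) 2 σ := eLpNorm_mono_measure _ hmap
  choose c hc1 hc2 using hx2
  set G : ℝ → ℂ := fun x => Complex.exp (((ε * w x : ℝ) : ℂ) * Complex.I) with hG_def
  have hGnorm : ∀ x, ‖G x‖ = 1 := fun x => Complex.norm_exp_ofReal_mul_I _
  have hGm : Measurable G := by
    apply Complex.measurable_exp.comp
    apply Measurable.mul_const _ Complex.I
    apply Complex.measurable_ofReal.comp
    apply Measurable.const_mul _ ε
    exact ((hu.comp hB).const_mul _).sub (hu.const_mul _)
  -- pointwise bound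
  have hpt : ∀ n x, ‖c (t n) - G x‖ ≤
      (q' : ℝ) * ‖xi (t n) x - f x‖ + |(p : ℝ)| * ‖xi (t n) (B x) - f (B x)‖ := by
    intro n x
    have hfq0 : f x ^ q' ≠ 0 := by
      intro h
      have : ‖f x ^ q'‖ = 0 := by rw [h, norm_zero]
      rw [norm_pow, hfnorm, one_pow] at this; norm_num at this
    have hGid : G x = f (B x) ^ p * (f x ^ q')⁻¹ :=
      exp_identity p q' ε (u (B x)) (u x)
    have hkey : c (t n) - G x = (c (t n) * f x ^ q' - f (B x) ^ p) * (f x ^ q')⁻¹ := by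
      rw [hGid, sub_mul, mul_assoc, mul_inv_cancel₀ hfq0, mul_one]
    have hn1 : ‖c (t n) - G x‖ = ‖c (t n) * f x ^ q' - f (B x) ^ p‖ := by
      rw [hkey, norm_mul, norm_inv, norm_pow, hfnorm, one_pow, inv_one, mul_one]
    rw [hn1]
    have step : ‖c (t n) * f x ^ q' - f (B x) ^ p‖ ≤
        ‖c (t n) * f x ^ q' - c (t n) * xi (t n) x ^ q'‖ +
        ‖c (t n) * xi (t n) x ^ q' - f (B x) ^ p‖ := by
      have : c (t n) * f x ^ q' - f (B x) ^ p =
          (c (t n) * f x ^ q' - c (t n) * xi (t n) x ^ q') +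
          (c (t n) * xi (t n) x ^ q' - f (B x) ^ p) := by ring
      rw [this]; exact norm_add_le _ _
    have e1 : ‖c (t n) * f x ^ q' - c (t n) * xi (t n) x ^ q'‖
        ≤ (q' : ℝ) * ‖xi (t n) x - f x‖ := by
      rw [← mul_sub, norm_mul, hc1, one_mul]
      rw [norm_sub_rev]
      exact norm_pow_sub_pow _ _ (xi_norm _ _) (hfnorm x) q'
    have e2 : ‖c (t n) * xi (t n) x ^ q' - f (B x) ^ p‖
        ≤ |(p : ℝ)| * ‖xi (t n) (B x) - f (B x)‖ := by
      have hcx : c (t n) * xi (t n) x ^ q' = xi (t n) (B x) ^ p := by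
        rw [← xi_nat_mul]; exact (hc2 (t n) x).symm
      rw [hcx]
      exact norm_zpow_sub_zpow _ _ (xi_norm _ _) (hfnorm _) p
    linarith [step, e1, e2]
  -- eLpNorm bound
  have hmaj : ∀ n, eLpNorm (fun x => c (t n) - G x) 2 ρ ≤
      ((q' : ℝ≥0) : ℝ≥0∞) * eLpNorm (fun x => xi (t n) x - f x) 2 ρ
        + ((‖(p : ℝ)‖₊ : ℝ≥0) : ℝ≥0∞) * eLpNorm (fun x => xi (t n) (B x) - f (B x)) 2 ρ := by
    intro n
    have h1 : eLpNorm (fun x => c (t n) - G x) 2 ρ ≤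
        eLpNorm (fun x => (q' : ℝ) * ‖xi (t n) x - f x‖
          + |(p : ℝ)| * ‖xi (t n) (B x) - f (B x)‖) 2 ρ := by
      apply eLpNorm_mono_ae (Eventually.of_forall fun x => ?_)
      rw [Real.norm_eq_abs]
      refine (hpt n x).trans (le_abs_self _)
    refine h1.trans ?_
    have hm1 : AEStronglyMeasurable (fun x => (q' : ℝ) * ‖xi (t n) x - f x‖) ρ :=
      (((hgm n).norm).const_mul _).aestronglyMeasurable
    have hm2 : AEStronglyMeasurable (fun x => |(p : ℝ)| * ‖xi (t n) (B x) - f (B x)‖) ρ :=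
      ((((xi_measurable (t n)).comp hB).sub (hfm.comp hB)).norm.const_mul _).aestronglyMeasurable
    refine (eLpNorm_add_le hm1 hm2 one_le_two).trans ?_
    have e1 : eLpNorm (fun x => (q' : ℝ) * ‖xi (t n) x - f x‖) 2 ρ
        = ((q' : ℝ≥0) : ℝ≥0∞) * eLpNorm (fun x => xi (t n) x - f x) 2 ρ := by
      have : (fun x => (q' : ℝ) * ‖xi (t n) x - f x‖)
          = (q' : ℝ) • (fun x => ‖xi (t n) x - f x‖) := rfl
      rw [this, eLpNorm_const_smul, eLpNorm_norm]
      congr 1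
      simp [Real.nnnorm_natCast]
    have e2 : eLpNorm (fun x => |(p : ℝ)| * ‖xi (t n) (B x) - f (B x)‖) 2 ρ
        = ((‖(p : ℝ)‖₊ : ℝ≥0) : ℝ≥0∞) * eLpNorm (fun x => xi (t n) (B x) - f (B x)) 2 ρ := by
      have : (fun x => |(p : ℝ)| * ‖xi (t n) (B x) - f (B x)‖)
          = |(p : ℝ)| • (fun x => ‖xi (t n) (B x) - f (B x)‖) := rfl
      rw [this, eLpNorm_const_smul, eLpNorm_norm]
      congr 1
      simp [enorm, Real.norm_eq_abs, abs_abs]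
    rw [e1, e2]
  have hZ : Tendsto (fun n => eLpNorm (fun x => c (t n) - G x) 2 ρ) atTop (𝓝 0) := by
    have hlim : Tendsto (fun n =>
        ((q' : ℝ≥0) : ℝ≥0∞) * eLpNorm (fun x => xi (t n) x - f x) 2 ρ
        + ((‖(p : ℝ)‖₊ : ℝ≥0) : ℝ≥0∞) * eLpNorm (fun x => xi (t n) (B x) - f (B x)) 2 ρ)
        atTop (𝓝 0) := by
      have l1 := ENNReal.Tendsto.const_mul hX (Or.inr ENNReal.coe_ne_top)
        (a := ((q' : ℝ≥0) : ℝ≥0∞))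
      have l2 := ENNReal.Tendsto.const_mul hY (Or.inr ENNReal.coe_ne_top)
        (a := ((‖(p : ℝ)‖₊ : ℝ≥0) : ℝ≥0∞))
      simpa using l1.add l2
    exact tendsto_of_tendsto_of_tendsto_of_le_of_le tendsto_const_nhds hlim
      (fun n => zero_le) hmaj
  -- compactness
  have hc_mem : ∀ n, c (t n) ∈ Metric.closedBall (0 : ℂ) 1 := fun n => by
    simp only [Metric.mem_closedBall, dist_zero_right]
    exact (hc1 (t n)).le
  obtain ⟨L, _, φ, hφ, hLtend⟩ := (isCompact_closedBall (0 : ℂ) 1).tendsto_subseq hc_mem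
  have hLnorm : ‖L‖ = 1 := by
    have h1 : Tendsto (fun k => ‖c (t (φ k))‖) atTop (𝓝 ‖L‖) := hLtend.norm
    have h2 : (fun k => ‖c (t (φ k))‖) = fun _ => (1 : ℝ) := funext fun k => hc1 _
    rw [h2] at h1
    exact tendsto_nhds_unique h1 tendsto_const_nhds
  have hGL0 : eLpNorm (fun x => G x - L) 2 ρ = 0 := by
    have hbound : ∀ k, eLpNorm (fun x => G x - L) 2 ρ ≤
        eLpNorm (fun x => c (t (φ k)) - G x) 2 ρ
          + eLpNorm (fun _ : ℝ => c (t (φ k)) - L) 2 ρ := by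
      intro k
      have hdec : (fun x => G x - L)
          = (-(fun x => c (t (φ k)) - G x)) + (fun _ => c (t (φ k)) - L) := by
        funext x
        show G x - L = -(c (t (φ k)) - G x) + (c (t (φ k)) - L)
        ring
      rw [hdec]
      refine (eLpNorm_add_le ((measurable_const.sub hGm).neg.aestronglyMeasurable)
        aestronglyMeasurable_const one_le_two).trans ?_
      exact add_le_add (le_of_eq (eLpNorm_neg ..)) le_rfl
    have hterm1 : Tendsto (fun k => eLpNorm (fun x => c (t (φ k)) - G x) 2 ρ) atTop (𝓝 0) :=
      hZ.comp hφ.tendsto_atTop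
    have hterm2 : Tendsto (fun k => eLpNorm (fun _ : ℝ => c (t (φ k)) - L) 2 ρ) atTop (𝓝 0) := by
      have hconst : ∀ k, eLpNorm (fun _ : ℝ => c (t (φ k)) - L) 2 ρ
          = ((‖c (t (φ k)) - L‖₊ : ℝ≥0) : ℝ≥0∞) * (ρ Set.univ) ^ (1 / (2 : ℝ)) := by
        intro k
        rw [eLpNorm_const _ two_ne_zero hρ0]
        norm_num
        rfl
      simp only [hconst]
      have hnn : Tendsto (fun k => (‖c (t (φ k)) - L‖₊ : ℝ≥0)) atTop (𝓝 0) := by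
        have : Tendsto (fun k => c (t (φ k)) - L) atTop (𝓝 0) := by
          simpa using hLtend.sub_const L
        simpa [Function.comp_def] using (continuous_nnnorm.tendsto (0 : ℂ)).comp this
      have hcoe : Tendsto (fun k => ((‖c (t (φ k)) - L‖₊ : ℝ≥0) : ℝ≥0∞)) atTop (𝓝 0) := by
        rw [show ((0 : ℝ≥0∞)) = ((0 : ℝ≥0) : ℝ≥0∞) by simp]
        exact ENNReal.tendsto_coe.mpr hnn
      have := ENNReal.Tendsto.mul_const (b := (ρ Set.univ) ^ (1 / (2:ℝ))) hcoe
        (Or.inr (ENNReal.rpow_ne_top_of_nonneg (by norm_num) (measure_ne_top ρ _)))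
      simpa using this
    have hle := ge_of_tendsto (hterm1.add hterm2)
      (Eventually.of_forall hbound)
    simpa using hle
  have hGLae : ∀ᵐ x ∂ρ, G x = L := by
    have h0 := (eLpNorm_eq_zero_iff ((hGm.sub measurable_const).aestronglyMeasurable)
      two_ne_zero).mp hGL0
    filter_upwards [h0] with x hx
    have hx' : G x - L = 0 := hx
    exact sub_eq_zero.mp hx'
  -- extract the constant
  have hLabs : (‖L‖ : ℝ) = 1 := by exact hLnorm
  have hLexp : L = Complex.exp ((L.arg : ℂ) * Complex.I) := by
    conv_lhs => rw [← Complex.norm_mul_exp_arg_mul_I L]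
    rw [hLabs]
    simp
  refine ⟨L.arg / ε, ?_⟩
  filter_upwards [hGLae] with x hx
  have hexp : Complex.exp (((ε * w x : ℝ) : ℂ) * Complex.I)
      = Complex.exp ((L.arg : ℂ) * Complex.I) := by rw [← hLexp]; exact hx
  obtain ⟨k, hk⟩ := Complex.exp_eq_exp_iff_exists_int.mp hexp
  have him' : ε * w x = L.arg + (k : ℝ) * (2 * Real.pi) := by
    have h2 : ((ε * w x : ℝ) : ℂ) = ((L.arg + (k : ℝ) * (2 * Real.pi) : ℝ) : ℂ) := by
      push_cast at hk ⊢
      linear_combination (-Complex.I) * hk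
        + ((ε : ℂ) * (w x : ℂ) - ((L.arg : ℂ) + (k : ℂ) * (2 * (Real.pi : ℂ)))) * Complex.I_sq
    exact_mod_cast h2
  have hπ : (3 : ℝ) < Real.pi := Real.pi_gt_three
  have harg : |L.arg| ≤ Real.pi := Complex.abs_arg_le_pi L
  have hk0 : k = 0 := by
    by_contra hkne
    have hk1 : (1 : ℝ) ≤ |(k : ℝ)| := by
      rw [← Int.cast_abs]
      exact_mod_cast Int.one_le_abs (by exact_mod_cast hkne)
    have h1 : |(k : ℝ) * (2 * Real.pi)| ≤ 1 + Real.pi := by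
      have : (k : ℝ) * (2 * Real.pi) = ε * w x - L.arg := by linarith [him']
      rw [this]
      calc |ε * w x - L.arg| ≤ |ε * w x| + |L.arg| := abs_sub _ _
        _ ≤ 1 + Real.pi := add_le_add (hwb x) harg
    have h2 : 2 * Real.pi ≤ |(k : ℝ) * (2 * Real.pi)| := by
      rw [abs_mul, abs_of_nonneg (by positivity : (0:ℝ) ≤ 2 * Real.pi)]
      nlinarith
    linarith
  rw [hk0] at him'
  simp at him'
  rw [eq_div_iff hε.ne']
  linear_combination him'

theorem statement4 (σ : Measure ℝ) [IsFiniteMeasure σ] (hσpos : σ ≠ 0)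
    (hcont : ∀ x, σ {x} = 0) (hK : IsKronecker σ)
    (s : ℚ) (hs0 : s ≠ 0) (hs1 : s ≠ 1) (r : ℝ) :
    σ ⟂ₘ (σ.map (fun x => (s : ℝ) * x)).map (fun x => x + r) := by
  by_contra hns
  set τ : Measure ℝ := (σ.map (fun x => (s : ℝ) * x)).map (fun x => x + r) with hτ_def
  have hsr : (s : ℝ) ≠ 0 := by exact_mod_cast hs0
  have hA1 : Measurable (fun x : ℝ => (s : ℝ) * x) := measurable_id.const_mul _
  have hA2 : Measurable (fun x : ℝ => x + r) := measurable_id.add_const r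
  have hτmap : τ = σ.map (fun x : ℝ => (s : ℝ) * x + r) := by
    rw [hτ_def, Measure.map_map hA2 hA1]
    rfl
  have hAm : Measurable (fun x : ℝ => (s : ℝ) * x + r) := hA1.add_const r
  haveI : IsFiniteMeasure τ := by
    constructor
    rw [hτmap, Measure.map_apply hAm MeasurableSet.univ, Set.preimage_univ]
    exact measure_lt_top σ _
  set ρ : Measure ℝ := τ.withDensity (fun x => min 1 (σ.rnDeriv τ x)) with hρ_def
  have hρτ : ρ ≤ τ := by
    rw [hρ_def]
    have h1 : (fun x => min 1 (σ.rnDeriv τ x)) ≤ᵐ[τ] (fun _ => 1) :=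
      Eventually.of_forall fun x => min_le_left _ _
    calc τ.withDensity (fun x => min 1 (σ.rnDeriv τ x)) ≤ τ.withDensity (fun _ => 1) :=
          withDensity_mono h1
      _ = τ := by
          rw [show (fun _ : ℝ => (1 : ℝ≥0∞)) = (1 : ℝ → ℝ≥0∞) from rfl, withDensity_one]
  have hρσ : ρ ≤ σ := by
    rw [hρ_def]
    have h1 : (fun x => min 1 (σ.rnDeriv τ x)) ≤ᵐ[τ] σ.rnDeriv τ :=
      Eventually.of_forall fun x => min_le_right _ _
    exact (withDensity_mono h1).trans (Measure.withDensity_rnDeriv_le σ τ)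
  have hρ0 : ρ ≠ 0 := by
    intro h0
    apply hns
    have hae : (fun x => min 1 (σ.rnDeriv τ x)) =ᵐ[τ] 0 :=
      (withDensity_eq_zero_iff ((measurable_const.min (σ.measurable_rnDeriv τ)).aemeasurable)).mp h0
    have hae2 : σ.rnDeriv τ =ᵐ[τ] 0 := by
      filter_upwards [hae] with x hx
      by_contra hne
      have hpos : 0 < σ.rnDeriv τ x := pos_iff_ne_zero.mpr hne
      have : (0 : ℝ≥0∞) < min 1 (σ.rnDeriv τ x) := lt_min one_pos hpos
      rw [hx] at this
      exact lt_irrefl _ this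
    exact (Measure.rnDeriv_eq_zero σ τ).mp hae2
  -- the inverse map
  set B : ℝ → ℝ := fun y => (y - r) / (s : ℝ) with hB_def
  have hB : Measurable B := (measurable_id.sub_const r).div_const _
  have hBA : (B ∘ fun x : ℝ => (s : ℝ) * x + r) = id := by
    funext x
    simp only [hB_def, Function.comp_apply, id_eq]
    rw [add_sub_cancel_right, mul_div_cancel_left₀ _ hsr]
  have hmapB : ρ.map B ≤ σ := by
    calc ρ.map B ≤ τ.map B := Measure.map_mono hρτ hB
      _ = σ := by rw [hτmap, Measure.map_map hB hAm, hBA, Measure.map_id]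
  -- rational arithmetic
  set p : ℤ := s.num with hp_def
  set q' : ℕ := s.den with hq_def
  have hq'0 : (q' : ℝ) ≠ 0 := by
    exact_mod_cast s.den_nz
  have hpq : (p : ℝ) = (q' : ℝ) * (s : ℝ) := by
    rw [Rat.cast_def]
    field_simp
    rw [hp_def, hq_def]; ring
  have hpq' : (p : ℝ) ≠ (q' : ℝ) := by
    intro h
    apply hs1
    have : (s : ℝ) = 1 := by
      rw [hpq] at h
      field_simp at h
      exact h
    exact_mod_cast this
  -- the exponential identity hypothesis
  have hx2 : ∀ t : ℝ, ∃ c : ℂ, ‖c‖ = 1 ∧ ∀ x, (xi t (B x)) ^ p = c * xi ((q' : ℝ) * t) x := by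
    intro t
    refine ⟨Complex.exp (((-(2 * Real.pi * (q' : ℝ) * t * r) : ℝ) : ℂ) * Complex.I),
      ?_, ?_⟩
    · rw [Complex.norm_exp_ofReal_mul_I]
    · intro x
      have hBx : ((B x : ℝ) : ℂ) = ((x : ℂ) - (r : ℂ)) / ((s : ℝ) : ℂ) := by
        rw [hB_def]
        push_cast
        ring
      have hsC : ((s : ℝ) : ℂ) ≠ 0 := Complex.ofReal_ne_zero.mpr hsr
      have hpqC : ((p : ℝ) : ℂ) = ((q' : ℝ) : ℂ) * ((s : ℝ) : ℂ) := by
        exact_mod_cast congrArg (fun x : ℝ => (x : ℂ)) hpq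
      unfold xi
      rw [← Complex.exp_int_mul, ← Complex.exp_add]
      congr 1
      rw [hBx]
      push_cast at hpqC ⊢
      rw [hpqC]
      have hsC2 : ((s : ℚ) : ℂ) ≠ 0 := by exact_mod_cast hs0
      field_simp [hsC2]
      ring
  -- no atoms for ρ
  haveI : NullSingletonClass ρ := by
    constructor
    intro x
    have h1 : ρ {x} ≤ σ {x} := hρσ _
    rw [hcont x] at h1
    exact le_antisymm h1 zero_le
  -- for every n, ρ (Ioo (-(n+1)) (n+1)) = 0
  have hIoo : ∀ n : ℕ, ρ (Set.Ioo (-(n : ℝ) - 1) ((n : ℝ) + 1)) = 0 := by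
    intro n
    set M : ℝ := (n : ℝ) + 1 with hM_def
    have hMpos : 0 < M := by positivity
    set u : ℝ → ℝ := fun x => max (-M) (min M x) with hu_def
    have hum : Measurable u :=
      (continuous_const.max (continuous_const.min continuous_id)).measurable
    have hub : ∀ x, |u x| ≤ M := by
      intro x
      rw [abs_le]
      constructor
      · exact le_max_left _ _
      · exact max_le (by linarith) (min_le_left _ _)
    have hub2 : ∀ x, |u x * u x| ≤ M * M := by
      intro x
      rw [abs_mul]
      exact mul_le_mul (hub x) (hub x) (abs_nonneg _) hMpos.le
    obtain ⟨c₁, hc₁⟩ := keyA σ ρ hK hρσ hρ0 B hB hmapB p q' hx2 u hum M hub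
    obtain ⟨c₂, hc₂⟩ := keyA σ ρ hK hρσ hρ0 B hB hmapB p q' hx2
      (fun x => u x * u x) (hum.mul hum) (M * M) hub2
    have hA0 : (q' : ℝ) * (q' : ℝ) - (p : ℝ) * (q' : ℝ) ≠ 0 := by
      intro h
      apply hpq'
      have : ((q' : ℝ) - (p : ℝ)) * (q' : ℝ) = 0 := by linarith
      rcases mul_eq_zero.mp this with h' | h'
      · linarith
      · exact absurd h' hq'0
    obtain ⟨a, b, hab⟩ := quad_roots ((q' : ℝ) * (q' : ℝ) - (p : ℝ) * (q' : ℝ))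
      (2 * c₁ * (q' : ℝ)) (c₁ * c₁ - (p : ℝ) * c₂) hA0
    have hae : ∀ᵐ x ∂ρ, x ∈ Set.Ioo (-(n : ℝ) - 1) ((n : ℝ) + 1) → x ∈ ({a, b} : Set ℝ) := by
      filter_upwards [hc₁, hc₂] with x h1 h2 hx
      have hux : u x = x := by
        have hx1 : x < M := hx.2
        have hx2' : -M < x := by rw [hM_def]; linarith [hx.1]
        show max (-M) (min M x) = x
        rw [min_eq_right hx1.le, max_eq_right hx2'.le]
      have hquad : ((q' : ℝ) * (q' : ℝ) - (p : ℝ) * (q' : ℝ)) * (u x) ^ 2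
          + (2 * c₁ * (q' : ℝ)) * u x + (c₁ * c₁ - (p : ℝ) * c₂) = 0 := by
        linear_combination (-(c₁ + (p : ℝ) * u (B x) + (q' : ℝ) * u x)) * h1 + (p : ℝ) * h2
      have := hab hquad
      rwa [hux] at this
    have h1 : ρ (Set.Ioo (-(n : ℝ) - 1) ((n : ℝ) + 1)) ≤ ρ {a, b} := measure_mono_ae hae
    have h2 : ρ ({a, b} : Set ℝ) = 0 :=
      Set.Countable.measure_zero ((Set.countable_singleton b).insert a) ρ
    rw [h2] at h1
    exact le_antisymm h1 zero_le
  have hρuniv : ρ Set.univ = 0 := by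
    have hcover : (Set.univ : Set ℝ) ⊆ ⋃ n : ℕ, Set.Ioo (-(n : ℝ) - 1) ((n : ℝ) + 1) := by
      intro x _
      obtain ⟨n, hn⟩ := exists_nat_gt |x|
      refine Set.mem_iUnion.mpr ⟨n, ?_⟩
      rw [Set.mem_Ioo]
      rw [abs_lt] at hn
      constructor <;> linarith [hn.1, hn.2]
    have hle : ρ Set.univ ≤ 0 :=
      calc ρ Set.univ ≤ ρ (⋃ n : ℕ, Set.Ioo (-(n : ℝ) - 1) ((n : ℝ) + 1)) := measure_mono hcover
        _ = 0 := measure_iUnion_null hIoo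
    exact le_antisymm hle zero_le
  exact hρ0 (Measure.measure_univ_eq_zero.mp hρuniv)
end

section
/- Let σ be a continuous Kronecker measure on ℝ. Then for any two distinct nonzero rational numbers r_1 and r_2 and every t ∈ ℝ, the measures σ_{r_1} and σ_{r_2} * δ_t are mutually singular. -/
open MeasureTheory Filter Topology
open scoped ENNReal NNReal

lemma exp_int_mul_I_inj {k k' : ℤ}
    (h : Complex.exp ((k : ℂ) * Complex.I) = Complex.exp ((k' : ℂ) * Complex.I)) : k = k' := by
  rw [Complex.exp_eq_exp_iff_exists_int] at h
  obtain ⟨n, hn⟩ := h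
  have him := congrArg Complex.im hn
  simp [Complex.add_im, Complex.mul_im, Complex.mul_re] at him
  rcases eq_or_ne n 0 with h0 | h0
  · subst h0; simp at him; exact_mod_cast him
  · exfalso
    have hn0 : (n : ℝ) ≠ 0 := Int.cast_ne_zero.mpr h0
    have hpi : Real.pi = ((k : ℝ) - k') / (2 * n) := by
      field_simp
      linarith [him]
    exact irrational_pi ⟨((k - k' : ℤ) : ℚ) / (2 * (n : ℚ)), by push_cast; rw [hpi]⟩

lemma exists_mem_of_ae {α : Type*} [MeasurableSpace α] {ρ : Measure α} {B : Set α} {P : α → Prop}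
    (hB : ρ B ≠ 0) (hP : ∀ᵐ y ∂ρ, P y) : ∃ y, y ∈ B ∧ P y := by
  by_contra h
  push_neg at h
  exact hB (measure_mono_null (fun y hy => h y hy) (ae_iff.mp hP))

lemma exists_Iic_split (ρ : Measure ℝ) [IsFiniteMeasure ρ] (h0 : ρ ≠ 0)
    (hc : ∀ x : ℝ, ρ {x} = 0) :
    ∃ v : ℝ, 0 < ρ (Set.Iic v) ∧ ρ (Set.Iic v) < ρ Set.univ := by
  by_contra hcon
  push_neg at hcon
  have hM : ρ Set.univ ≠ 0 := by
    simpa [Measure.measure_univ_eq_zero] using h0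
  have hdich : ∀ v : ℝ, ρ (Set.Iic v) = 0 ∨ ρ (Set.Iic v) = ρ Set.univ := by
    intro v
    rcases eq_or_ne (ρ (Set.Iic v)) 0 with h | h
    · exact Or.inl h
    · exact Or.inr (le_antisymm (measure_mono (Set.subset_univ _))
        (hcon v (pos_iff_ne_zero.mpr h)))
  have hex : ∃ n : ℕ, ρ (Set.Iic (n : ℝ)) = ρ Set.univ := by
    by_contra hno
    push_neg at hno
    have h0' : ∀ n : ℕ, ρ (Set.Iic (n : ℝ)) = 0 := fun n => (hdich n).resolve_right (hno n)
    have huniv : (⋃ n : ℕ, Set.Iic (n : ℝ)) = Set.univ := by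
      ext x
      simp only [Set.mem_iUnion, Set.mem_Iic, Set.mem_univ, iff_true]
      exact exists_nat_ge x
    exact hM (by rw [← huniv]; exact measure_iUnion_null h0')
  have hlow : ∃ m : ℕ, ρ (Set.Iic (-(m : ℝ))) = 0 := by
    by_contra hno
    push_neg at hno
    have hM' : ∀ m : ℕ, ρ (Set.Ioi (-(m : ℝ))) = 0 := by
      intro m
      have h1 : ρ (Set.Iic (-(m : ℝ))) = ρ Set.univ := (hdich _).resolve_left (hno m)
      have h2 := measure_compl (measurableSet_Iic (a := -(m : ℝ))) (measure_ne_top ρ _)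
      rw [Set.compl_Iic] at h2
      rw [h2, h1, tsub_self]
    have huniv : (⋃ m : ℕ, Set.Ioi (-(m : ℝ))) = Set.univ := by
      ext x
      simp only [Set.mem_iUnion, Set.mem_Ioi, Set.mem_univ, iff_true]
      obtain ⟨m, hm⟩ := exists_nat_ge (-x)
      exact ⟨m + 1, by push_cast; linarith⟩
    exact hM (by rw [← huniv]; exact measure_iUnion_null hM')
  obtain ⟨n₀, hn₀⟩ := hex
  obtain ⟨m₀, hm₀⟩ := hlow
  set T : Set ℝ := {v | ρ (Set.Iic v) = ρ Set.univ} with hT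
  have hTne : T.Nonempty := ⟨n₀, hn₀⟩
  have hTbdd : BddBelow T := by
    refine ⟨-(m₀ : ℝ), fun v hv => ?_⟩
    by_contra hlt
    push_neg at hlt
    have hle : ρ (Set.Iic v) ≤ ρ (Set.Iic (-(m₀ : ℝ))) :=
      measure_mono (Set.Iic_subset_Iic.mpr hlt.le)
    rw [hv, hm₀] at hle
    exact hM (le_antisymm hle (zero_le))
  set s := sInf T with hs
  have hlt : ∀ v, v < s → ρ (Set.Iic v) = 0 := by
    intro v hv
    rcases hdich v with h | h
    · exact h
    · exact absurd (csInf_le hTbdd h) (not_le.mpr hv)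
  have hgt : ∀ v, s < v → ρ (Set.Iic v) = ρ Set.univ := by
    intro v hv
    obtain ⟨w, hwT, hwv⟩ := (csInf_lt_iff hTbdd hTne).mp hv
    exact le_antisymm (measure_mono (Set.subset_univ _))
      (by rw [← hwT]; exact measure_mono (Set.Iic_subset_Iic.mpr hwv.le))
  have hIio : ρ (Set.Iio s) = 0 := by
    have hsub : Set.Iio s ⊆ ⋃ n : ℕ, Set.Iic (s - 1 / (n + 1)) := by
      intro x hx
      obtain ⟨n, hn⟩ := exists_nat_one_div_lt (K := ℝ) (sub_pos.mpr hx)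
      exact Set.mem_iUnion.mpr ⟨n, by simp only [Set.mem_Iic]; linarith⟩
    refine measure_mono_null hsub (measure_iUnion_null fun n => hlt _ ?_)
    have : (0:ℝ) < 1 / (n + 1) := by positivity
    linarith
  have hIic : ρ (Set.Iic s) = 0 := by
    have hsub : Set.Iic s ⊆ Set.Iio s ∪ {s} := by
      intro x hx
      rcases (Set.mem_Iic.mp hx).lt_or_eq with h | h
      · exact Or.inl h
      · exact Or.inr (by simp [h])
    refine measure_mono_null hsub (le_antisymm ?_ (zero_le))
    calc ρ (Set.Iio s ∪ {s}) ≤ ρ (Set.Iio s) + ρ {s} := measure_union_le _ _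
    _ = 0 := by rw [hIio, hc, add_zero]
  have hIoi : ρ (Set.Ioi s) = 0 := by
    have hsub : Set.Ioi s ⊆ ⋃ n : ℕ, Set.Ioi (s + 1 / (n + 1)) := by
      intro x hx
      obtain ⟨n, hn⟩ := exists_nat_one_div_lt (K := ℝ) (sub_pos.mpr hx)
      exact Set.mem_iUnion.mpr ⟨n, by simp only [Set.mem_Ioi]; linarith⟩
    refine measure_mono_null hsub (measure_iUnion_null fun n => ?_)
    have h1 : ρ (Set.Iic (s + 1 / (n + 1))) = ρ Set.univ := by
      refine hgt _ ?_
      have : (0:ℝ) < 1 / (n + 1) := by positivity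
      linarith
    have h2 := measure_compl (measurableSet_Iic (a := s + 1 / (n + 1))) (measure_ne_top ρ _)
    rw [Set.compl_Iic] at h2
    rw [h2, h1, tsub_self]
  have hfin : ρ Set.univ ≤ ρ (Set.Iic s) + ρ (Set.Ioi s) := by
    rw [← Set.Iic_union_Ioi (a := s)]
    exact measure_union_le _ _
  rw [hIic, hIoi, add_zero] at hfin
  exact hM (le_antisymm hfin (zero_le))

lemma exists_Icc_split (ρ : Measure ℝ) [IsFiniteMeasure ρ] (h0 : ρ ≠ 0)
    (hc : ∀ x : ℝ, ρ {x} = 0) (m : ℝ) :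
    ∃ s : ℝ, 0 < ρ (Set.Icc (m - s) (m + s)) ∧ ρ (Set.Icc (m - s) (m + s)) < ρ Set.univ := by
  by_contra hcon
  push_neg at hcon
  have hM : ρ Set.univ ≠ 0 := by
    simpa [Measure.measure_univ_eq_zero] using h0
  have hdich : ∀ s : ℝ, ρ (Set.Icc (m - s) (m + s)) = 0 ∨
      ρ (Set.Icc (m - s) (m + s)) = ρ Set.univ := by
    intro s
    rcases eq_or_ne (ρ (Set.Icc (m - s) (m + s))) 0 with h | h
    · exact Or.inl h
    · exact Or.inr (le_antisymm (measure_mono (Set.subset_univ _))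
        (hcon s (pos_iff_ne_zero.mpr h)))
  have hmono : ∀ s s' : ℝ, s ≤ s' → Set.Icc (m - s) (m + s) ⊆ Set.Icc (m - s') (m + s') := by
    intro s s' h
    apply Set.Icc_subset_Icc <;> linarith
  have hex : ∃ n : ℕ, ρ (Set.Icc (m - n) (m + n)) = ρ Set.univ := by
    by_contra hno
    push_neg at hno
    have h0' : ∀ n : ℕ, ρ (Set.Icc (m - n) (m + n)) = 0 :=
      fun n => (hdich n).resolve_right (hno n)
    have huniv : (⋃ n : ℕ, Set.Icc (m - n) (m + n)) = Set.univ := by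
      ext x
      simp only [Set.mem_iUnion, Set.mem_Icc, Set.mem_univ, iff_true]
      obtain ⟨n, hn⟩ := exists_nat_ge |x - m|
      rw [abs_le] at hn
      exact ⟨n, by constructor <;> linarith [hn.1, hn.2]⟩
    exact hM (by rw [← huniv]; exact measure_iUnion_null h0')
  obtain ⟨n₀, hn₀⟩ := hex
  set T : Set ℝ := {s | ρ (Set.Icc (m - s) (m + s)) = ρ Set.univ} with hT
  have hTne : T.Nonempty := ⟨n₀, hn₀⟩
  have hTbdd : BddBelow T := by
    refine ⟨0, fun s hs => ?_⟩
    by_contra hlt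
    push_neg at hlt
    have : Set.Icc (m - s) (m + s) = ∅ := by
      apply Set.Icc_eq_empty
      intro hle
      linarith
    rw [hT] at hs
    simp only [Set.mem_setOf_eq, this, measure_empty] at hs
    exact hM hs.symm
  set s₀ := sInf T with hs₀
  have hs₀nonneg : 0 ≤ s₀ := le_csInf hTne (by
    intro s hs
    by_contra hlt
    push_neg at hlt
    have : Set.Icc (m - s) (m + s) = ∅ := Set.Icc_eq_empty (by intro hle; linarith)
    rw [hT] at hs
    simp only [Set.mem_setOf_eq, this, measure_empty] at hs
    exact hM hs.symm)
  have hlt : ∀ s, s < s₀ → ρ (Set.Icc (m - s) (m + s)) = 0 := by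
    intro s hv
    rcases hdich s with h | h
    · exact h
    · exact absurd (csInf_le hTbdd h) (not_le.mpr hv)
  have hgt : ∀ s, s₀ < s → ρ (Set.Icc (m - s) (m + s)) = ρ Set.univ := by
    intro s hv
    obtain ⟨w, hwT, hwv⟩ := (csInf_lt_iff hTbdd hTne).mp hv
    exact le_antisymm (measure_mono (Set.subset_univ _))
      (by rw [← hwT]; exact measure_mono (hmono _ _ hwv.le))
  have hI0 : ρ (Set.Icc (m - s₀) (m + s₀)) = 0 := by
    have hsub : Set.Icc (m - s₀) (m + s₀) ⊆
        ({m - s₀} ∪ {m + s₀}) ∪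
          ⋃ n : ℕ, Set.Icc (m - (s₀ - 1 / (n + 1))) (m + (s₀ - 1 / (n + 1))) := by
      intro x hx
      rw [Set.mem_Icc] at hx
      have hdle : |x - m| ≤ s₀ := abs_le.mpr ⟨by linarith [hx.1], by linarith [hx.2]⟩
      rcases eq_or_lt_of_le hdle with h | h
      · rcases (abs_eq hs₀nonneg).mp h with h' | h'
        · exact Or.inl (Or.inr (by simp only [Set.mem_singleton_iff]; linarith))
        · exact Or.inl (Or.inl (by simp only [Set.mem_singleton_iff]; linarith))
      · obtain ⟨n, hn⟩ := exists_nat_one_div_lt (K := ℝ) (sub_pos.mpr h)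
        refine Or.inr (Set.mem_iUnion.mpr ⟨n, ?_⟩)
        rw [Set.mem_Icc]
        have h2 : |x - m| ≤ s₀ - 1 / (n + 1) := by linarith
        have h3 := abs_le.mp h2
        exact ⟨by linarith [h3.1], by linarith [h3.2]⟩
    refine measure_mono_null hsub (le_antisymm ?_ (zero_le))
    calc ρ (({m - s₀} ∪ {m + s₀}) ∪
          ⋃ n : ℕ, Set.Icc (m - (s₀ - 1 / (n + 1))) (m + (s₀ - 1 / (n + 1))))
        ≤ ρ ({m - s₀} ∪ {m + s₀}) +
          ρ (⋃ n : ℕ, Set.Icc (m - (s₀ - 1 / (n + 1))) (m + (s₀ - 1 / (n + 1)))) :=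
          measure_union_le _ _
      _ ≤ (ρ {m - s₀} + ρ {m + s₀}) +
          ρ (⋃ n : ℕ, Set.Icc (m - (s₀ - 1 / (n + 1))) (m + (s₀ - 1 / (n + 1)))) := by
          gcongr
          exact measure_union_le _ _
      _ = 0 := by
          rw [hc, hc, measure_iUnion_null fun n => hlt _ (by
            have : (0:ℝ) < 1 / ((n:ℝ) + 1) := by positivity
            linarith)]
          simp
  have hcompl : ρ ((Set.Icc (m - s₀) (m + s₀))ᶜ) = 0 := by
    have hsub : (Set.Icc (m - s₀) (m + s₀))ᶜ ⊆
        ⋃ n : ℕ, (Set.Icc (m - (s₀ + 1 / (n + 1))) (m + (s₀ + 1 / (n + 1))))ᶜ := by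
      intro x hx
      simp only [Set.mem_compl_iff, Set.mem_Icc, not_and_or, not_le] at hx
      have habs : s₀ < |x - m| := by
        rcases hx with h | h
        · have := neg_abs_le (x - m)
          linarith
        · have := le_abs_self (x - m)
          linarith
      obtain ⟨n, hn⟩ := exists_nat_one_div_lt (K := ℝ) (sub_pos.mpr habs)
      refine Set.mem_iUnion.mpr ⟨n, ?_⟩
      simp only [Set.mem_compl_iff, Set.mem_Icc]
      intro hmem
      have : |x - m| ≤ s₀ + 1 / (n + 1) :=
        abs_le.mpr ⟨by linarith [hmem.1], by linarith [hmem.2]⟩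
      linarith
    refine measure_mono_null hsub (measure_iUnion_null fun n => ?_)
    have h1 : ρ (Set.Icc (m - (s₀ + 1 / (n + 1))) (m + (s₀ + 1 / (n + 1)))) = ρ Set.univ := by
      refine hgt _ ?_
      have : (0:ℝ) < 1 / ((n:ℝ) + 1) := by positivity
      linarith
    have h2 := measure_compl (measurableSet_Icc
      (a := m - (s₀ + 1 / (n + 1))) (b := m + (s₀ + 1 / (n + 1)))) (measure_ne_top ρ _)
    rw [h2, h1, tsub_self]
  have hfin : ρ Set.univ ≤ ρ (Set.Icc (m - s₀) (m + s₀)) + ρ ((Set.Icc (m - s₀) (m + s₀))ᶜ) := by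
    rw [← Set.union_compl_self (Set.Icc (m - s₀) (m + s₀))]
    exact measure_union_le _ _
  rw [hI0, hcompl, add_zero] at hfin
  exact hM (le_antisymm hfin (zero_le))

set_option maxHeartbeats 1000000 in
theorem statement5 (σ : Measure ℝ) [IsFiniteMeasure σ] (hσpos : σ ≠ 0)
    (hcont : ∀ x, σ {x} = 0) (hK : IsKronecker σ)
    (r₁ r₂ : ℚ) (hr₁ : r₁ ≠ 0) (hr₂ : r₂ ≠ 0) (hne : r₁ ≠ r₂) (t : ℝ) :
    σ.map (fun x => (r₁ : ℝ) * x) ⟂ₘ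
      (σ.map (fun x => (r₂ : ℝ) * x)).map (fun x => x + t) := by
  classical
  have hr₁' : (r₁ : ℝ) ≠ 0 := Rat.cast_ne_zero.mpr hr₁
  have hr₂' : (r₂ : ℝ) ≠ 0 := Rat.cast_ne_zero.mpr hr₂
  by_contra hsing
  set m₁ : ℝ → ℝ := fun x => (r₁ : ℝ) * x with hm₁
  set m₂ : ℝ → ℝ := fun x => (r₂ : ℝ) * x + t with hm₂
  have hm₁meas : Measurable m₁ := (measurable_id.const_mul _)
  have hm₂meas : Measurable m₂ := (measurable_id.const_mul ((r₂:ℝ))).add_const _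
  set μ : Measure ℝ := σ.map m₁ with hμ
  have hνeq : (σ.map (fun x => (r₂ : ℝ) * x)).map (fun x => x + t) = σ.map m₂ := by
    rw [Measure.map_map (measurable_add_const t) (measurable_const_mul _)]
    rfl
  rw [hνeq] at hsing
  set ν : Measure ℝ := σ.map m₂ with hν
  haveI : IsFiniteMeasure μ := σ.isFiniteMeasure_map m₁
  haveI : IsFiniteMeasure ν := σ.isFiniteMeasure_map m₂
  set ρ : Measure ℝ := μ.withDensity (ν.rnDeriv μ) with hρdef
  have hρμ : ρ ≪ μ := withDensity_absolutelyContinuous _ _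
  have hρν : ρ ≤ ν := Measure.withDensity_rnDeriv_le ν μ
  haveI : IsFiniteMeasure ρ := isFiniteMeasure_of_le ν hρν
  have hρ0 : ρ ≠ 0 := by
    intro h
    apply hsing
    have hdec := ν.haveLebesgueDecomposition_add μ
    rw [← hρdef, h, add_zero] at hdec
    rw [hdec]
    exact (Measure.mutuallySingular_singularPart ν μ).symm
  set φ₁ : ℝ → ℝ := fun y => y / (r₁ : ℝ) with hφ₁
  set φ₂ : ℝ → ℝ := fun y => (y - t) / (r₂ : ℝ) with hφ₂
  have hφ₁meas : Measurable φ₁ := measurable_id.div_const _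
  have hφ₂meas : Measurable φ₂ := (measurable_id.sub_const _).div_const _
  have htrans : ∀ N : Set ℝ, MeasurableSet N → σ N = 0 →
      (∀ᵐ y ∂ρ, φ₁ y ∉ N ∧ φ₂ y ∉ N) := by
    intro N hN hN0
    have h1 : μ (φ₁ ⁻¹' N) = 0 := by
      rw [hμ, Measure.map_apply hm₁meas (hφ₁meas hN)]
      have hpre : m₁ ⁻¹' (φ₁ ⁻¹' N) = N := by
        ext x
        simp only [Set.mem_preimage, hm₁, hφ₁]
        rw [mul_comm, mul_div_assoc, div_self hr₁', mul_one]
      rw [hpre, hN0]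
    have h2 : ν (φ₂ ⁻¹' N) = 0 := by
      rw [hν, Measure.map_apply hm₂meas (hφ₂meas hN)]
      have hpre : m₂ ⁻¹' (φ₂ ⁻¹' N) = N := by
        ext x
        simp only [Set.mem_preimage, hm₂, hφ₂]
        rw [add_sub_cancel_right, mul_comm, mul_div_assoc, div_self hr₂', mul_one]
      rw [hpre, hN0]
    have hρ1 : ρ (φ₁ ⁻¹' N) = 0 := hρμ h1
    have hρ2 : ρ (φ₂ ⁻¹' N) = 0 :=
      le_antisymm ((Measure.le_iff'.mp hρν _).trans h2.le) (zero_le)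
    have e1 : ∀ᵐ y ∂ρ, φ₁ y ∉ N := measure_eq_zero_iff_ae_notMem.mp hρ1
    have e2 : ∀ᵐ y ∂ρ, φ₂ y ∉ N := measure_eq_zero_iff_ae_notMem.mp hρ2
    exact e1.and e2
  -- the integers p, q with p / q = r₁ / r₂
  set p : ℤ := r₁.num * r₂.den with hp
  set q : ℤ := r₂.num * r₁.den with hq
  have hp0 : p ≠ 0 := mul_ne_zero (Rat.num_ne_zero.mpr hr₁)
    (Int.natCast_ne_zero.mpr r₂.den_nz)
  have hq0 : q ≠ 0 := mul_ne_zero (Rat.num_ne_zero.mpr hr₂)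
    (Int.natCast_ne_zero.mpr r₁.den_nz)
  have hpqQ : (p : ℚ) * r₂ = (q : ℚ) * r₁ := by
    have h1 : ((r₁.den : ℚ)) * r₁ = r₁.num := by
      rw [mul_comm]
      rw_mod_cast [Rat.mul_den_eq_num]
    have h2 : ((r₂.den : ℚ)) * r₂ = r₂.num := by
      rw [mul_comm]
      rw_mod_cast [Rat.mul_den_eq_num]
    push_cast [hp, hq]
    calc (r₁.num : ℚ) * (r₂.den : ℚ) * r₂ = (r₁.num : ℚ) * ((r₂.den : ℚ) * r₂) := by ring
      _ = (r₁.num : ℚ) * r₂.num := by rw [h2]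
      _ = (r₂.num : ℚ) * ((r₁.den : ℚ) * r₁) := by rw [h1]; ring
      _ = (r₂.num : ℚ) * (r₁.den : ℚ) * r₁ := by ring
  have hpq : (p : ℝ) * (r₂ : ℝ) = (q : ℝ) * (r₁ : ℝ) := by exact_mod_cast hpqQ
  have hpq_ne : p ≠ q := by
    intro h
    apply hne
    have : (p : ℚ) * r₂ = (p : ℚ) * r₁ := by rw [hpqQ, h]
    exact (mul_left_cancel₀ (Int.cast_ne_zero.mpr hp0) this).symm
  -- the key constraint: for every measurable A, the integer combination is a.e. constant
  have hxi_cont : ∀ s : ℝ, Continuous (xi s) := by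
    intro s
    unfold xi
    exact Complex.continuous_exp.comp (by continuity)
  have hxi_norm : ∀ s x : ℝ, ‖xi s x‖ = 1 := by
    intro s x
    unfold xi
    have harg : 2 * (Real.pi : ℂ) * Complex.I * (s : ℂ) * (x : ℂ)
        = ((2 * Real.pi * s * x : ℝ) : ℂ) * Complex.I := by push_cast; ring
    rw [harg, Complex.norm_exp_ofReal_mul_I]
  haveI : (ae ρ).NeBot := ae_neBot.mpr hρ0
  have key : ∀ A : Set ℝ, MeasurableSet A → ∃ k₀ : ℤ, ∀ᵐ y ∂ρ,
      q * (if φ₂ y ∈ A then (1:ℤ) else 0) - p * (if φ₁ y ∈ A then (1:ℤ) else 0) = k₀ := by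
    intro A hA
    set χ : ℝ → ℝ := fun x => if x ∈ A then (1:ℝ) else 0 with hχ
    have hχmeas : Measurable χ := Measurable.ite hA measurable_const measurable_const
    set f : ℝ → ℂ := fun x => Complex.exp ((χ x : ℂ) * Complex.I) with hf
    have hfmeas : Measurable f :=
      Complex.measurable_exp.comp ((Complex.measurable_ofReal.comp hχmeas).mul_const _)
    have hfnorm : ∀ x, ‖f x‖ = 1 := by
      intro x
      rw [hf]
      exact Complex.norm_exp_ofReal_mul_I _
    have hfL2 : MemLp f 2 σ :=
      MemLp.of_bound hfmeas.aestronglyMeasurable 1 (ae_of_all _ fun x => (hfnorm x).le)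
    obtain ⟨ts, hts, hconv⟩ := hK f hfL2 (ae_of_all _ hfnorm)
    have him : TendstoInMeasure σ (fun n => xi (ts n)) atTop f := by
      refine tendstoInMeasure_of_tendsto_eLpNorm (p := 2) (by norm_num)
        (fun n => (hxi_cont _).measurable.aestronglyMeasurable)
        hfmeas.aestronglyMeasurable ?_
      exact hconv
    obtain ⟨ns, hns, haeσ⟩ := him.exists_seq_tendsto_ae
    set S : Set ℝ := {x | Tendsto (fun i => xi (ts (ns i)) x) atTop (𝓝 (f x))} with hS
    have hSc : σ Sᶜ = 0 := by
      have h := ae_iff.mp haeσ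
      exact measure_mono_null (fun x hx => hx) h
    set N : Set ℝ := toMeasurable σ Sᶜ with hN
    have hNmeas : MeasurableSet N := measurableSet_toMeasurable σ Sᶜ
    have hN0 : σ N = 0 := by rw [hN, measure_toMeasurable]; exact hSc
    have haeS : ∀ᵐ y ∂ρ, φ₁ y ∈ S ∧ φ₂ y ∈ S := by
      filter_upwards [htrans N hNmeas hN0] with y hy
      constructor
      · by_contra h
        exact hy.1 (subset_toMeasurable σ Sᶜ h)
      · by_contra h
        exact hy.2 (subset_toMeasurable σ Sᶜ h)
    set w₀ : ℝ := -((q : ℝ) * t) / (r₂ : ℝ) with hw₀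
    set c : ℕ → ℂ := fun i => xi (ts (ns i)) w₀ with hc
    have harith : ∀ y : ℝ, (q : ℝ) * (φ₂ y) - (p : ℝ) * (φ₁ y) = w₀ := by
      intro y
      simp only [hφ₁, hφ₂, hw₀]
      field_simp
      first
      | linear_combination (-y) * hpq
      | linear_combination y * hpq
      | linear_combination (y * (r₁:ℝ)) * hpq
      | linear_combination (-(y * (r₁:ℝ))) * hpq
      | linear_combination (y * (r₂:ℝ)) * hpq
      | linear_combination (-(y * (r₂:ℝ))) * hpq
    have hprod : ∀ (i : ℕ) (y : ℝ),
        (xi (ts (ns i)) (φ₂ y)) ^ (q : ℤ) * (xi (ts (ns i)) (φ₁ y)) ^ (-p : ℤ) = c i := by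
      intro i y
      simp only [hc]
      unfold xi
      rw [← Complex.exp_int_mul, ← Complex.exp_int_mul, ← Complex.exp_add]
      congr 1
      have hC : ((q : ℝ) * (φ₂ y) : ℝ) - (p : ℝ) * (φ₁ y) = w₀ := harith y
      have hCc : ((q : ℂ)) * ((φ₂ y : ℝ) : ℂ) - (p : ℂ) * ((φ₁ y : ℝ) : ℂ) = ((w₀ : ℝ) : ℂ) := by
        exact_mod_cast congrArg (fun r : ℝ => (r : ℂ)) hC
      push_cast
      linear_combination (2 * (Real.pi : ℂ) * Complex.I * ((ts (ns i) : ℝ) : ℂ)) * hCc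
    set F : ℝ → ℂ := fun y => (f (φ₂ y)) ^ (q : ℤ) * (f (φ₁ y)) ^ (-p : ℤ) with hF
    have haeF : ∀ᵐ y ∂ρ, Tendsto c atTop (𝓝 (F y)) := by
      filter_upwards [haeS] with y hy
      have h1 : Tendsto (fun i => xi (ts (ns i)) (φ₁ y)) atTop (𝓝 (f (φ₁ y))) := hy.1
      have h2 : Tendsto (fun i => xi (ts (ns i)) (φ₂ y)) atTop (𝓝 (f (φ₂ y))) := hy.2
      have hne1 : f (φ₁ y) ≠ 0 := by
        intro h
        have := hfnorm (φ₁ y)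
        rw [h] at this
        simpa using this
      have hne2 : f (φ₂ y) ≠ 0 := by
        intro h
        have := hfnorm (φ₂ y)
        rw [h] at this
        simpa using this
      have hz2 : Tendsto (fun i => (xi (ts (ns i)) (φ₂ y)) ^ (q : ℤ)) atTop
          (𝓝 ((f (φ₂ y)) ^ (q : ℤ))) :=
        ((continuousAt_zpow₀ _ _ (Or.inl hne2)).tendsto).comp h2
      have hz1 : Tendsto (fun i => (xi (ts (ns i)) (φ₁ y)) ^ (-p : ℤ)) atTop
          (𝓝 ((f (φ₁ y)) ^ (-p : ℤ))) :=
        ((continuousAt_zpow₀ _ _ (Or.inl hne1)).tendsto).comp h1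
      have := hz2.mul hz1
      have heq : (fun i => (xi (ts (ns i)) (φ₂ y)) ^ (q : ℤ) * (xi (ts (ns i)) (φ₁ y)) ^ (-p : ℤ)) = c := by
        funext i
        exact hprod i y
      rwa [heq] at this
    obtain ⟨y₀, hy₀⟩ := haeF.exists
    have haeFz : ∀ᵐ y ∂ρ, F y = F y₀ := haeF.mono fun y hy => tendsto_nhds_unique hy hy₀
    set e : ℝ → ℤ := fun y =>
      q * (if φ₂ y ∈ A then (1:ℤ) else 0) - p * (if φ₁ y ∈ A then (1:ℤ) else 0) with he
    have hFexp : ∀ y, F y = Complex.exp (((e y : ℤ) : ℂ) * Complex.I) := by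
      intro y
      simp only [hF, hf, he, hχ]
      rw [← Complex.exp_int_mul, ← Complex.exp_int_mul, ← Complex.exp_add]
      congr 1
      by_cases h2 : φ₂ y ∈ A <;> by_cases h1 : φ₁ y ∈ A <;>
        simp only [h1, h2, if_true, if_false] <;> push_cast <;> ring
    refine ⟨e y₀, ?_⟩
    filter_upwards [haeFz] with y hy
    rw [hFexp y, hFexp y₀] at hy
    exact exp_int_mul_I_inj hy
  -- pushforward of ρ under φ₁
  set ρ₁ : Measure ℝ := ρ.map φ₁ with hρ₁def
  haveI : IsFiniteMeasure ρ₁ := ρ.isFiniteMeasure_map φ₁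
  have hρ₁apply : ∀ B : Set ℝ, MeasurableSet B → ρ₁ B = ρ (φ₁ ⁻¹' B) :=
    fun B hB => Measure.map_apply hφ₁meas hB
  have hρuniv : ρ Set.univ ≠ 0 := by simpa [Measure.measure_univ_eq_zero] using hρ0
  have hρ₁0 : ρ₁ ≠ 0 := by
    intro h
    apply hρuniv
    have h2 := hρ₁apply Set.univ MeasurableSet.univ
    rw [h] at h2
    simpa using h2.symm
  have hρcontpt : ∀ x : ℝ, ρ {x} = 0 := by
    intro x
    apply hρμ
    rw [hμ, Measure.map_apply hm₁meas (measurableSet_singleton x)]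
    have hpre : m₁ ⁻¹' {x} = {x / (r₁ : ℝ)} := by
      ext z
      simp only [Set.mem_preimage, Set.mem_singleton_iff, hm₁]
      rw [eq_div_iff hr₁', mul_comm]
    rw [hpre]
    exact hcont _
  have hρ₁cont : ∀ x : ℝ, ρ₁ {x} = 0 := by
    intro x
    rw [hρ₁apply _ (measurableSet_singleton x)]
    have hpre : φ₁ ⁻¹' {x} = {(r₁ : ℝ) * x} := by
      ext z
      simp only [Set.mem_preimage, Set.mem_singleton_iff, hφ₁]
      rw [div_eq_iff hr₁', mul_comm]
    rw [hpre]
    exact hρcontpt _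
  by_cases hsum : p + q = 0
  · -- case r₂ = -r₁ : use a symmetric interval
    have hq0' : (q : ℝ) ≠ 0 := Int.cast_ne_zero.mpr hq0
    have hr21 : (r₂ : ℝ) = -(r₁ : ℝ) := by
      have hpneg : (p : ℝ) = -(q : ℝ) := by
        have : p = -q := eq_neg_of_add_eq_zero_left hsum
        exact_mod_cast this
      have h := hpq
      rw [hpneg] at h
      have h2 : (q : ℝ) * (r₂ : ℝ) = (q : ℝ) * (-(r₁ : ℝ)) := by linear_combination -h
      exact mul_left_cancel₀ hq0' h2
    set mc : ℝ := t / (2 * (r₁ : ℝ)) with hmc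
    obtain ⟨s₀, hs1, hs2⟩ := exists_Icc_split ρ₁ hρ₁0 hρ₁cont mc
    set A : Set ℝ := Set.Icc (mc - s₀) (mc + s₀) with hAdef
    have hsym : ∀ y : ℝ, (φ₂ y ∈ A ↔ φ₁ y ∈ A) := by
      intro y
      have hφ2y : φ₂ y = 2 * mc - φ₁ y := by
        simp only [hφ₁, hφ₂, hmc, hr21]
        rw [div_neg, ← neg_div, neg_sub]
        have h2r : 2 * (t / (2 * (r₁ : ℝ))) = t / (r₁ : ℝ) := by
          rw [eq_div_iff hr₁']
          field_simp
        rw [h2r, div_sub_div_same]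
      rw [hφ2y, hAdef, Set.mem_Icc, Set.mem_Icc]
      constructor
      · rintro ⟨h1, h2⟩
        exact ⟨by linarith, by linarith⟩
      · rintro ⟨h1, h2⟩
        exact ⟨by linarith, by linarith⟩
    obtain ⟨k₀, hk⟩ := key A measurableSet_Icc
    have hpos1 : ρ (φ₁ ⁻¹' A) ≠ 0 := by
      rw [← hρ₁apply _ measurableSet_Icc]
      exact hs1.ne'
    have hpos2 : ρ ((φ₁ ⁻¹' A)ᶜ) ≠ 0 := by
      rw [← Set.preimage_compl, ← hρ₁apply _ measurableSet_Icc.compl]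
      intro h
      have hcompl := measure_compl (measurableSet_Icc :
        MeasurableSet (Set.Icc (mc - s₀) (mc + s₀))) (measure_ne_top ρ₁ _)
      rw [h] at hcompl
      have hle : ρ₁ Set.univ ≤ ρ₁ A := tsub_eq_zero_iff_le.mp hcompl.symm
      exact absurd hs2 (not_lt.mpr hle)
    obtain ⟨ya, hyaA, hka⟩ := exists_mem_of_ae hpos1 hk
    obtain ⟨yb, hybA, hkb⟩ := exists_mem_of_ae hpos2 hk
    have hya' : φ₁ ya ∈ A := hyaA
    have hyb' : φ₁ yb ∉ A := hybA
    have h2a : φ₂ ya ∈ A := (hsym ya).mpr hya'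
    have h2b : φ₂ yb ∉ A := fun h => hyb' ((hsym yb).mp h)
    rw [if_pos h2a, if_pos hya'] at hka
    rw [if_neg h2b, if_neg hyb'] at hkb
    exact hpq_ne (by omega)
  · -- case p + q ≠ 0 : use a half line
    obtain ⟨v, hs1, hs2⟩ := exists_Iic_split ρ₁ hρ₁0 hρ₁cont
    set A : Set ℝ := Set.Iic v with hAdef
    obtain ⟨k₀, hk⟩ := key A measurableSet_Iic
    have hpos1 : ρ (φ₁ ⁻¹' A) ≠ 0 := by
      rw [← hρ₁apply _ measurableSet_Iic]
      exact hs1.ne'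
    have hpos2 : ρ ((φ₁ ⁻¹' A)ᶜ) ≠ 0 := by
      rw [← Set.preimage_compl, ← hρ₁apply _ measurableSet_Iic.compl]
      intro h
      have hcompl := measure_compl (measurableSet_Iic :
        MeasurableSet (Set.Iic v)) (measure_ne_top ρ₁ _)
      rw [h] at hcompl
      have hle : ρ₁ Set.univ ≤ ρ₁ A := tsub_eq_zero_iff_le.mp hcompl.symm
      exact absurd hs2 (not_lt.mpr hle)
    obtain ⟨ya, hyaA, hka⟩ := exists_mem_of_ae hpos1 hk
    obtain ⟨yb, hybA, hkb⟩ := exists_mem_of_ae hpos2 hk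
    have hya' : φ₁ ya ∈ A := hyaA
    have hyb' : φ₁ yb ∉ A := hybA
    rw [if_pos hya'] at hka
    rw [if_neg hyb'] at hkb
    by_cases h2a : φ₂ ya ∈ A <;> by_cases h2b : φ₂ yb ∈ A <;>
      [rw [if_pos h2a] at hka; rw [if_pos h2a] at hka;
       rw [if_neg h2a] at hka; rw [if_neg h2a] at hka] <;>
      [rw [if_pos h2b] at hkb; rw [if_neg h2b] at hkb;
       rw [if_pos h2b] at hkb; rw [if_neg h2b] at hkb] <;>
      omega
end

section
/- Let A ⊂ ℝ⁺∖{0} be a Borel set which is additively ℚ-independent, and let σ be a nonzero finite positive continuous Borel measure on ℝ concentrated on A (i.e. σ(ℝ∖A) = 0). Let H ⊂ ℝ⁺∖{0} be a multiplicative subgroup such that σ_h is equivalent to σ for every h ∈ H. Then H is an additively ℚ-independent set. -/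
open MeasureTheory Filter Topology
open scoped ENNReal NNReal

theorem statement9 (A : Set ℝ) (hAm : MeasurableSet A) (hA : A ⊆ Set.Ioi (0 : ℝ))
    (hAQ : QIndep A)
    (σ : Measure ℝ) [IsFiniteMeasure σ] (hσpos : σ ≠ 0) (hcont : ∀ x, σ {x} = 0)
    (hconc : σ Aᶜ = 0)
    (H : Set ℝ) (hH : H ⊆ Set.Ioi (0 : ℝ)) (hone : (1 : ℝ) ∈ H)
    (hmul : ∀ x ∈ H, ∀ y ∈ H, x * y ∈ H) (hinv : ∀ x ∈ H, x⁻¹ ∈ H)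
    (hequiv : ∀ h ∈ H, σ.map (fun x => h * x) ≪ σ ∧ σ ≪ σ.map (fun x => h * x)) :
    QIndep H := by
  intro m a haH hainj k hsum
  have hnull : ∀ i, σ ((fun x => a i * x) ⁻¹' Aᶜ) = 0 := by
    intro i
    have h1 : σ.map (fun x => a i * x) Aᶜ = 0 := (hequiv (a i) (haH i)).1 hconc
    rwa [Measure.map_apply (measurable_const_mul (a i)) hAm.compl] at h1
  set N : Set ℝ := Aᶜ ∪ ⋃ i, (fun x => a i * x) ⁻¹' Aᶜ with hN
  have hNnull : σ N = 0 := measure_union_null hconc (measure_iUnion_null hnull)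
  obtain ⟨x, hx⟩ : ∃ x, x ∉ N := by
    by_contra h
    push_neg at h
    have : N = Set.univ := Set.eq_univ_of_forall h
    rw [this] at hNnull
    exact hσpos (Measure.measure_univ_eq_zero.mp hNnull)
  have hxA : x ∈ A := by
    by_contra hxa
    exact hx (Set.mem_union_left _ hxa)
  have hxpos : 0 < x := hA hxA
  have hax : ∀ i, a i * x ∈ A := by
    intro i
    by_contra hia
    exact hx (Set.mem_union_right _ (Set.mem_iUnion.mpr ⟨i, hia⟩))
  refine hAQ m (fun i => a i * x) hax ?_ k ?_
  · intro i j hij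
    exact hainj (mul_right_cancel₀ (ne_of_gt hxpos) hij)
  · have : (∑ i, (k i : ℝ) * (a i * x)) = (∑ i, (k i : ℝ) * a i) * x := by
      rw [Finset.sum_mul]
      exact Finset.sum_congr rfl fun i _ => (mul_assoc _ _ _).symm
    rw [this, hsum, zero_mul]
end

section
/- Let a < b be real numbers, let {h_0, h_1, …, h_m} ⊂ ℝ∖{0} be an additively ℚ-independent set, let y_1, …, y_N ∈ [a,b], and let δ > 0. Then there exist x_1, …, x_N ∈ [a,b] with |x_s − y_s| < δ for s = 1, …, N such that the set L = { h_j x_s : 0 ≤ j ≤ m, 1 ≤ s ≤ N } consists of (m+1)N distinct elements and is additively ℚ-independent. -/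
open MeasureTheory Filter Topology
open scoped ENNReal NNReal

def Good (m : ℕ) (h : Fin (m+1) → ℝ) (n : ℕ) (x : Fin n → ℝ) : Prop :=
  ∀ k : Fin (m+1) × Fin n → ℤ,
    (∑ p : Fin (m+1) × Fin n, (k p : ℝ) * (h p.1 * x p.2)) = 0 → ∀ p, k p = 0

lemma exists_not_mem_countable {S : Set ℝ} (hS : S.Countable) {c d : ℝ} (hcd : c < d) :
    ∃ t ∈ Set.Ioo c d, t ∉ S := by
  by_contra hcon
  push_neg at hcon
  have hsub : Set.Ioo c d ⊆ S := fun t ht => hcon t ht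
  have h1 : volume (Set.Ioo c d) ≤ volume S := measure_mono hsub
  rw [hS.measure_zero, Real.volume_Ioo] at h1
  simp only [nonpos_iff_eq_zero, ENNReal.ofReal_eq_zero] at h1
  linarith

lemma good_extend (m : ℕ) (h : Fin (m+1) → ℝ)
    (hQ' : ∀ k : Fin (m+1) → ℤ, (∑ j, (k j : ℝ) * h j) = 0 → ∀ j, k j = 0)
    (n : ℕ) (x : Fin n → ℝ) (hx : Good m h n x) {c d : ℝ} (hcd : c < d) :
    ∃ t ∈ Set.Ioo c d, Good m h (n+1) (Fin.snoc x t) := by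
  set f : (Fin (m+1) × Fin (n+1) → ℤ) → ℝ := fun k =>
    -(∑ p : Fin (m+1) × Fin n, (k (p.1, p.2.castSucc) : ℝ) * (h p.1 * x p.2)) /
      (∑ j, (k (j, Fin.last n) : ℝ) * h j) with hf
  obtain ⟨t, ht, htS⟩ := exists_not_mem_countable (Set.countable_range f) hcd
  refine ⟨t, ht, ?_⟩
  intro k hk
  have hsum : (∑ p : Fin (m+1) × Fin (n+1), (k p : ℝ) * (h p.1 * (Fin.snoc x t : Fin (n+1) → ℝ) p.2))
      = (∑ p : Fin (m+1) × Fin n, (k (p.1, p.2.castSucc) : ℝ) * (h p.1 * x p.2))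
        + (∑ j, (k (j, Fin.last n) : ℝ) * h j) * t := by
    rw [Fintype.sum_prod_type, Fintype.sum_prod_type, Finset.sum_mul]
    rw [← Finset.sum_add_distrib]
    refine Finset.sum_congr rfl fun j _ => ?_
    rw [Fin.sum_univ_castSucc]
    simp [Fin.snoc_castSucc, Fin.snoc_last]
    ring
  set C := (∑ j, (k (j, Fin.last n) : ℝ) * h j) with hC
  by_cases hC0 : C = 0
  · have hlast : ∀ j, k (j, Fin.last n) = 0 :=
      hQ' (fun j => k (j, Fin.last n)) (hC ▸ hC0)
    have hrest : ∀ p : Fin (m+1) × Fin n, k (p.1, p.2.castSucc) = 0 := by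
      apply hx (fun p => k (p.1, p.2.castSucc))
      have := hsum
      rw [hk] at this
      rw [hC0, zero_mul, add_zero] at this
      linarith [this]
    intro p
    obtain ⟨j, s⟩ := p
    refine Fin.lastCases (motive := fun s => k (j, s) = 0) (hlast j) (fun i => hrest (j, i)) s
  · exfalso
    apply htS
    refine ⟨k, ?_⟩
    rw [hf]
    beta_reduce
    rw [div_eq_iff hC0]
    rw [hk] at hsum
    linarith [hsum]

lemma build (m : ℕ) (h : Fin (m+1) → ℝ)
    (hQ' : ∀ k : Fin (m+1) → ℤ, (∑ j, (k j : ℝ) * h j) = 0 → ∀ j, k j = 0)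
    (a b δ : ℝ) (hab : a < b) (hδ : 0 < δ)
    (N : ℕ) (y : Fin N → ℝ) (hy : ∀ s, y s ∈ Set.Icc a b) :
    ∀ n (hn : n ≤ N), ∃ x : Fin n → ℝ,
      (∀ s : Fin n, x s ∈ Set.Icc a b ∧ |x s - y (Fin.castLE hn s)| < δ) ∧ Good m h n x := by
  intro n
  induction n with
  | zero => exact fun _ => ⟨Fin.elim0, fun s => s.elim0, fun k _ p => p.2.elim0⟩
  | succ n ih =>
    intro hn
    obtain ⟨x, hx1, hx2⟩ := ih (le_trans (Nat.le_succ n) hn)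
    set yn := y (Fin.castLE hn (Fin.last n)) with hyn
    have hyn1 : a ≤ yn := (hy _).1
    have hyn2 : yn ≤ b := (hy _).2
    set c := max a (yn - δ) with hc
    set d := min b (yn + δ) with hd
    have hcd : c < d := by
      rw [hc, hd]
      apply max_lt <;> apply lt_min <;> linarith
    obtain ⟨t, ht, htg⟩ := good_extend m h hQ' n x hx2 hcd
    have htc : c < t := ht.1
    have htd : t < d := ht.2
    rw [hc] at htc; rw [hd] at htd
    refine ⟨Fin.snoc x t, ?_, htg⟩
    intro s
    refine Fin.lastCases ?_ ?_ s
    · constructor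
      · simp only [Fin.snoc_last]
        constructor
        · exact le_of_lt (lt_of_le_of_lt (le_max_left _ _) htc)
        · exact le_of_lt (lt_of_lt_of_le htd (min_le_left _ _))
      · simp only [Fin.snoc_last]
        rw [abs_sub_lt_iff]
        constructor
        · have := lt_of_lt_of_le htd (min_le_right _ _); linarith
        · have := lt_of_le_of_lt (le_max_right _ _) htc; linarith
    · intro i
      have hcast : y (Fin.castLE hn i.castSucc)
          = y (Fin.castLE (le_trans (Nat.le_succ n) hn) i) := by
        congr 1
      simp only [Fin.snoc_castSucc, hcast]
      exact hx1 i

theorem statement11 (a b : ℝ) (hab : a < b) (m : ℕ) (h : Fin (m + 1) → ℝ)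
    (hne : ∀ j, h j ≠ 0) (hinj : Function.Injective h) (hQ : QIndep (Set.range h))
    (N : ℕ) (y : Fin N → ℝ) (hy : ∀ s, y s ∈ Set.Icc a b) (δ : ℝ) (hδ : 0 < δ) :
    ∃ x : Fin N → ℝ, (∀ s, x s ∈ Set.Icc a b) ∧ (∀ s, |x s - y s| < δ) ∧
      Function.Injective (fun p : Fin (m + 1) × Fin N => h p.1 * x p.2) ∧
      QIndep {z : ℝ | ∃ j s, z = h j * x s} := by
  have hQ' : ∀ k : Fin (m+1) → ℤ, (∑ j, (k j : ℝ) * h j) = 0 → ∀ j, k j = 0 :=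
    fun k hk => hQ (m+1) h (fun i => ⟨i, rfl⟩) hinj k hk
  obtain ⟨x, hx1, hx2⟩ := build m h hQ' a b δ hab hδ N y hy N le_rfl
  have hcast : ∀ s : Fin N, Fin.castLE le_rfl s = s := fun s => rfl
  refine ⟨x, fun s => (hx1 s).1, fun s => by simpa [hcast] using (hx1 s).2, ?_, ?_⟩
  · -- injectivity
    intro p q hpq
    by_contra hne'
    simp only at hpq
    set K : Fin (m+1) × Fin N → ℤ :=
      fun r => (if r = p then 1 else 0) - (if r = q then 1 else 0) with hK
    have hsum : (∑ r : Fin (m+1) × Fin N, (K r : ℝ) * (h r.1 * x r.2)) = 0 := by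
      simp only [hK, Int.cast_sub, apply_ite (Int.cast : ℤ → ℝ), Int.cast_one, Int.cast_zero,
        sub_mul, ite_mul, one_mul, zero_mul]
      rw [Finset.sum_sub_distrib, Finset.sum_ite_eq' Finset.univ p, Finset.sum_ite_eq' Finset.univ q]
      simp [hpq]
    have := hx2 K hsum p
    simp [hK, hne'] at this
  · -- QIndep
    intro m' a' ha' hainj k hk i
    simp only [Set.mem_setOf_eq] at ha'
    choose j s he using ha'
    set e : Fin m' → Fin (m+1) × Fin N := fun i => (j i, s i) with hee
    have heinj : Function.Injective e := by
      intro i1 i2 h12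
      apply hainj
      rw [he i1, he i2]
      have : j i1 = j i2 ∧ s i1 = s i2 := Prod.mk.injEq .. ▸ (by
        simpa [hee, Prod.ext_iff] using h12)
      rw [this.1, this.2]
    set K : Fin (m+1) × Fin N → ℤ := fun p => ∑ i, if e i = p then k i else 0 with hK
    have hsum : (∑ p : Fin (m+1) × Fin N, (K p : ℝ) * (h p.1 * x p.2)) = 0 := by
      simp only [hK, Int.cast_sum, apply_ite (Int.cast : ℤ → ℝ), Int.cast_zero,
        Finset.sum_mul, ite_mul, zero_mul]
      rw [Finset.sum_comm]
      have : ∀ i : Fin m', (∑ p : Fin (m+1) × Fin N,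
          if e i = p then (k i : ℝ) * (h p.1 * x p.2) else 0) = (k i : ℝ) * a' i := by
        intro i
        rw [Finset.sum_ite_eq Finset.univ (e i)]
        simp [he i, hee]
      rw [Finset.sum_congr rfl (fun i _ => this i), hk]
    have hKz := hx2 K hsum (e i)
    rw [hK] at hKz
    have : (∑ i', if e i' = e i then k i' else 0) = k i := by
      rw [Finset.sum_eq_single i]
      · simp
      · intro i' _ hne''
        exact if_neg fun hcon => hne'' (heinj hcon)
      · simp
    have hKz' : (∑ i', if e i' = e i then k i' else 0) = 0 := hKz
    rw [this] at hKz'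
    exact hKz'
end

section
/- Let [a,b] ⊂ ℝ be a nontrivial compact interval. Then: (i) the set P_c^{[a,b]}(ℝ) = { ν ∈ P_c(ℝ) : ν([a,b]) > 0 } is open and dense in P_c(ℝ); (ii) the map Δ : P_c^{[a,b]}(ℝ) → P_c([a,b]) sending ν to the conditional probability measure ν(· | [a,b]) = ν(· ∩ [a,b]) / ν([a,b]) is continuous; (iii) the Δ-preimage of any dense subset of P_c([a,b]) is dense in P_c^{[a,b]}(ℝ); consequently the Δ-preimage of any G_δ dense subset of P_c([a,b]) is G_δ dense in P_c^{[a,b]}(ℝ). -/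
open MeasureTheory Filter Topology
open scoped ENNReal NNReal

/-- `P_c(ℝ)`: the continuous (atomless) Borel probability measures on `ℝ`,
with the weak topology. -/
abbrev PcR : Type := {ν : ProbabilityMeasure ℝ // ∀ x : ℝ, ν.toMeasure {x} = 0}

/-- `P_c([a,b])`: the continuous Borel probability measures on `[a,b]`,
with the weak topology. -/
abbrev PcIcc (a b : ℝ) : Type :=
  {σ : ProbabilityMeasure (Set.Icc a b) // ∀ x, σ.toMeasure {x} = 0}

/-- `P_c^{[a,b]}(ℝ)`: members of `P_c(ℝ)` giving positive mass to `[a,b]`. -/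
def PcIccPos (a b : ℝ) : Set PcR := {ν | 0 < ν.1.toMeasure (Set.Icc a b)}

namespace S12

open Set BoundedContinuousFunction

variable {a b : ℝ}

lemma me (a b : ℝ) : MeasurableEmbedding ((↑) : Set.Icc a b → ℝ) :=
  MeasurableEmbedding.subtype_coe measurableSet_Icc

/-- conditional measure on `[a,b]`, as a measure on the subtype. -/
noncomputable def condM (a b : ℝ) (μ : Measure ℝ) : Measure (Set.Icc a b) :=
  Measure.comap Subtype.val ((μ (Set.Icc a b))⁻¹ • μ.restrict (Set.Icc a b))

lemma map_condM (μ : Measure ℝ) :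
    Measure.map Subtype.val (condM a b μ) =
      (μ (Set.Icc a b))⁻¹ • μ.restrict (Set.Icc a b) := by
  rw [condM, (me a b).map_comap, Subtype.range_coe, Measure.restrict_smul,
    Measure.restrict_restrict measurableSet_Icc, Set.inter_self]

lemma condM_univ (μ : Measure ℝ) [IsFiniteMeasure μ] (hpos : 0 < μ (Set.Icc a b)) :
    condM a b μ Set.univ = 1 := by
  rw [condM, (me a b).comap_apply, Set.image_univ, Subtype.range_coe,
    Measure.smul_apply, Measure.restrict_apply measurableSet_Icc, Set.inter_self, smul_eq_mul]
  exact ENNReal.inv_mul_cancel hpos.ne' (measure_ne_top μ _)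

lemma condM_singleton (μ : Measure ℝ) (hμ : ∀ x : ℝ, μ {x} = 0) (x : Set.Icc a b) :
    condM a b μ {x} = 0 := by
  rw [condM, (me a b).comap_apply, Set.image_singleton, Measure.smul_apply,
    Measure.restrict_apply (measurableSet_singleton _), smul_eq_mul]
  have h0 : μ ({(x : ℝ)} ∩ Set.Icc a b) = 0 :=
    le_antisymm ((measure_mono Set.inter_subset_left).trans (hμ _).le) zero_le
  rw [h0, mul_zero]

lemma integral_condM (μ : Measure ℝ) [IsFiniteMeasure μ] (g : ℝ →ᵇ ℝ) :
    ∫ x, g (x : ℝ) ∂(condM a b μ) =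
      ((μ (Set.Icc a b)).toReal)⁻¹ * ∫ x in Set.Icc a b, g x ∂μ := by
  rw [← integral_map measurable_subtype_coe.aemeasurable g.continuous.aestronglyMeasurable,
    map_condM, integral_smul_measure, ENNReal.toReal_inv, smul_eq_mul]

/-- The key portmanteau-type lemma: if `μs → μ` weakly and `μ` has no atom at `a` nor `b`,
then integrals of bounded continuous functions restricted to `[a,b]` converge. -/
lemma tendsto_setIntegral (hab : a < b) {ι : Type*} {L : Filter ι}
    {μs : ι → ProbabilityMeasure ℝ} {μ : ProbabilityMeasure ℝ}
    (h : Tendsto μs L (𝓝 μ))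
    (hna : μ.toMeasure {a} = 0) (hnb : μ.toMeasure {b} = 0) (g : ℝ →ᵇ ℝ) :
    Tendsto (fun i => ∫ x in Set.Icc a b, g x ∂(μs i).toMeasure) L
      (𝓝 (∫ x in Set.Icc a b, g x ∂μ.toMeasure)) := by
  rw [Metric.tendsto_nhds]
  intro ε hε
  set M : ℝ := ‖g‖ + 1 with hMdef
  have hM0 : 0 < M := by positivity
  have hgx : ∀ x : ℝ, ‖g x‖ ≤ M := fun x => (g.norm_coe_le_norm x).trans (by simp [hMdef])
  set ε' : ℝ := ε / (4 * M) with hε'def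
  have hε'0 : 0 < ε' := by positivity
  have hpair : μ.toMeasure {a, b} = 0 := by
    rw [Set.insert_eq]
    exact measure_union_null hna hnb
  obtain ⟨δ, hδ0, hδδ, hKsmall⟩ :
      ∃ δ : ℝ, 0 < δ ∧ a + δ < b - δ ∧
        μ.toMeasure (Set.Icc a b \ Set.Ioo (a + δ) (b - δ)) < ENNReal.ofReal ε' := by
    set d : ℕ → ℝ := fun n => (b - a) / (4 * ((n : ℝ) + 1)) with hd
    have hdpos : ∀ n, 0 < d n := fun n => by
      have hba : (0:ℝ) < b - a := by linarith
      have : (0:ℝ) < (n : ℝ) + 1 := by positivity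
      rw [hd]; positivity
    have hdle : ∀ n, d n ≤ (b - a) / 4 := by
      intro n
      rw [hd, div_le_div_iff₀ (by positivity) (by norm_num)]
      nlinarith [Nat.cast_nonneg (α := ℝ) n, hab]
    have hdlt : ∀ n, a + d n < b - d n := fun n => by
      have h1 := hdle n; have h2 := hdpos n; linarith
    set S : ℕ → Set ℝ := fun n => Set.Icc a b \ Set.Ioo (a + d n) (b - d n) with hS
    have hanti : Antitone S := by
      intro n m hnm
      apply Set.diff_subset_diff_right
      have hd' : d m ≤ d n := by
        rw [hd, div_le_div_iff₀ (by positivity) (by positivity)]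
        have : (n : ℝ) ≤ (m : ℝ) := by exact_mod_cast hnm
        nlinarith [hab]
      exact Set.Ioo_subset_Ioo (by linarith) (by linarith)
    have hdtend : Tendsto d atTop (𝓝 0) := by
      have h1 : Tendsto (fun n : ℕ => 4 * ((n : ℝ) + 1)) atTop atTop := by
        apply Tendsto.const_mul_atTop (by norm_num)
        exact tendsto_atTop_add_const_right _ _ tendsto_natCast_atTop_atTop
      have h2 := h1.inv_tendsto_atTop
      have h3 : Tendsto (fun n : ℕ => (b - a) * (4 * ((n : ℝ) + 1))⁻¹) atTop (𝓝 ((b - a) * 0)) :=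
        h2.const_mul _
      rw [mul_zero] at h3
      exact h3.congr fun n => (div_eq_mul_inv _ _).symm
    have hInter : μ.toMeasure (⋂ n, S n) = 0 := by
      refine measure_mono_null ?_ hpair
      intro x hx
      simp only [Set.mem_iInter, hS, Set.mem_diff] at hx
      by_contra hxab
      simp only [Set.mem_insert_iff, Set.mem_singleton_iff, not_or] at hxab
      have hxa : a < x := lt_of_le_of_ne (hx 0).1.1 (Ne.symm hxab.1)
      have hxb : x < b := lt_of_le_of_ne (hx 0).1.2 hxab.2
      have : ∀ᶠ n in atTop, d n < min (x - a) (b - x) :=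
        hdtend.eventually_lt_const (by simp [hxa, hxb])
      obtain ⟨n, hn⟩ := this.exists
      exact (hx n).2 ⟨by have := lt_of_lt_of_le hn (min_le_left _ _); linarith,
        by have := lt_of_lt_of_le hn (min_le_right _ _); linarith⟩
    have htend := tendsto_measure_iInter_atTop (μ := μ.toMeasure)
      (fun n => ((measurableSet_Icc.diff measurableSet_Ioo)).nullMeasurableSet)
      hanti ⟨0, measure_ne_top _ _⟩
    rw [hInter] at htend
    have := (htend.eventually_lt_const (ENNReal.ofReal_pos.mpr hε'0)).exists
    obtain ⟨n, hn⟩ := this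
    exact ⟨d n, hdpos n, hdlt n, hn⟩
  have hsubIoo : Set.Icc (a + δ) (b - δ) ⊆ Set.Ioo a b :=
    fun x hx => ⟨by have := hx.1; linarith, by have := hx.2; linarith⟩
  obtain ⟨φ, hφ0, hφ1, hφ01⟩ :=
    exists_continuous_zero_one_of_isClosed (isOpen_Ioo (a := a) (b := b)).isClosed_compl
      isClosed_Icc (Set.disjoint_left.mpr fun x hxc hxt => hxc (hsubIoo hxt))
  set φb : ℝ →ᵇ ℝ :=
    BoundedContinuousFunction.ofNormedAddCommGroup φ φ.continuous 1 (fun x => by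
      have h01 := hφ01 x
      rw [Real.norm_eq_abs, abs_le]
      exact ⟨by linarith [h01.1], h01.2⟩) with hφbdef
  have hφbx : ∀ x, φb x = φ x := fun x => rfl
  have hgφ : ∀ x, (g * φb) x = g x * φ x := fun x => rfl
  set K : Set ℝ := Set.Icc a b \ Set.Ioo (a + δ) (b - δ) with hKdef
  have hKmeas : MeasurableSet K := measurableSet_Icc.diff measurableSet_Ioo
  have hKclosed : IsClosed K := isClosed_Icc.sdiff isOpen_Ioo
  have hsub : Set.Ioo (a + δ) (b - δ) ⊆ Set.Icc a b :=
    (Set.Ioo_subset_Icc_self).trans (Set.Icc_subset_Icc (by linarith) (by linarith))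
  have key : ∀ ρ : ProbabilityMeasure ℝ,
      |∫ x in Set.Icc a b, g x ∂ρ.toMeasure - ∫ x, (g * φb) x ∂ρ.toMeasure|
        ≤ M * (ρ.toMeasure K).toReal := by
    intro ρ
    have hint_g : Integrable (fun x => g x) ρ.toMeasure := g.integrable _
    have hint_h : Integrable (fun x => (g * φb) x) ρ.toMeasure := (g * φb).integrable _
    have h1 : ∫ x, (g * φb) x ∂ρ.toMeasure = ∫ x in Set.Icc a b, (g * φb) x ∂ρ.toMeasure := by
      refine (setIntegral_eq_integral_of_forall_compl_eq_zero fun x hx => ?_).symm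
      have hx' : x ∈ (Set.Ioo a b)ᶜ := fun hmem => hx (Set.Ioo_subset_Icc_self hmem)
      have hz : φ x = 0 := hφ0 hx'
      rw [hgφ, hz, mul_zero]
    have hsplit :
        ∫ x in Set.Icc a b, g x ∂ρ.toMeasure - ∫ x in Set.Icc a b, (g * φb) x ∂ρ.toMeasure
          = ∫ x in K, (g x - (g * φb) x) ∂ρ.toMeasure := by
      rw [← integral_sub hint_g.integrableOn hint_h.integrableOn]
      have hunion : Set.Icc a b = Set.Ioo (a + δ) (b - δ) ∪ K := (Set.union_diff_cancel hsub).symm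
      have hint_sub : Integrable (fun x => g x - (g * φb) x) ρ.toMeasure := hint_g.sub hint_h
      rw [hunion, setIntegral_union (f := fun x => g x - (g * φb) x)
        disjoint_sdiff_self_right hKmeas hint_sub.integrableOn hint_sub.integrableOn]
      rw [setIntegral_eq_zero_of_forall_eq_zero fun x hx => ?_, zero_add]
      have hone : φ x = 1 := hφ1 (Set.Ioo_subset_Icc_self hx)
      rw [hgφ, hone, mul_one, sub_self]
    rw [h1, hsplit]
    have := norm_setIntegral_le_of_norm_le_const (μ := ρ.toMeasure) (s := K) (C := M)
      (measure_lt_top _ _) (f := fun x => g x - (g * φb) x) (fun x _ => by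
        have h01 := hφ01 x
        have heq : g x - (g * φb) x = g x * (1 - φ x) := by rw [hgφ]; ring
        show ‖g x - (g * φb) x‖ ≤ M
        rw [Real.norm_eq_abs, heq, abs_mul]
        have habs : |1 - φ x| ≤ 1 := by rw [abs_le]; exact ⟨by linarith [h01.2], by linarith [h01.1]⟩
        calc |g x| * |1 - φ x| ≤ M * 1 := mul_le_mul (hgx x) habs (abs_nonneg _) hM0.le
          _ = M := mul_one M)
    exact this
  have hKμ : (μ.toMeasure K).toReal ≤ ε' := ENNReal.toReal_le_of_le_ofReal hε'0.le hKsmall.le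
  have E1 : ∀ᶠ i in L, ((μs i).toMeasure K).toReal ≤ ε' := by
    have hlimsup := ProbabilityMeasure.limsup_measure_closed_le_of_tendsto h hKclosed
    have hlt : L.limsup (fun i => (μs i).toMeasure K) < ENNReal.ofReal ε' :=
      lt_of_le_of_lt hlimsup hKsmall
    filter_upwards [eventually_lt_of_limsup_lt hlt] with i hi
    exact ENNReal.toReal_le_of_le_ofReal hε'0.le hi.le
  have E2 : ∀ᶠ i in L,
      dist (∫ x, (g * φb) x ∂(μs i).toMeasure) (∫ x, (g * φb) x ∂μ.toMeasure) < ε' :=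
    Metric.tendsto_nhds.mp
      (ProbabilityMeasure.tendsto_iff_forall_integral_tendsto.mp h (g * φb)) ε' hε'0
  filter_upwards [E1, E2] with i h1 h2
  have k1 := key (μs i)
  have k2 := key μ
  rw [Real.dist_eq] at h2 ⊢
  have hMε : M * ε' = ε / 4 := by
    rw [hε'def]; field_simp
  have btri : |∫ x in Set.Icc a b, g x ∂(μs i).toMeasure - ∫ x in Set.Icc a b, g x ∂μ.toMeasure|
      ≤ |∫ x in Set.Icc a b, g x ∂(μs i).toMeasure - ∫ x, (g * φb) x ∂(μs i).toMeasure|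
        + |∫ x, (g * φb) x ∂(μs i).toMeasure - ∫ x, (g * φb) x ∂μ.toMeasure|
        + |∫ x, (g * φb) x ∂μ.toMeasure - ∫ x in Set.Icc a b, g x ∂μ.toMeasure| := by
    have t1 := abs_sub_le (∫ x in Set.Icc a b, g x ∂(μs i).toMeasure)
      (∫ x, (g * φb) x ∂(μs i).toMeasure) (∫ x in Set.Icc a b, g x ∂μ.toMeasure)
    have t2 := abs_sub_le (∫ x, (g * φb) x ∂(μs i).toMeasure)
      (∫ x, (g * φb) x ∂μ.toMeasure) (∫ x in Set.Icc a b, g x ∂μ.toMeasure)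
    linarith
  have b1 : |∫ x in Set.Icc a b, g x ∂(μs i).toMeasure - ∫ x, (g * φb) x ∂(μs i).toMeasure|
      ≤ ε / 4 := by
    refine le_trans k1 ?_
    rw [← hMε]
    exact mul_le_mul_of_nonneg_left h1 hM0.le
  have b3 : |∫ x, (g * φb) x ∂μ.toMeasure - ∫ x in Set.Icc a b, g x ∂μ.toMeasure| ≤ ε / 4 := by
    rw [abs_sub_comm]
    refine le_trans k2 ?_
    rw [← hMε]
    exact mul_le_mul_of_nonneg_left hKμ hM0.le
  have hM1 : (1:ℝ) ≤ M := by rw [hMdef]; linarith [norm_nonneg g]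
  have hε4 : ε' ≤ ε / 4 := by
    rw [hε'def, div_le_div_iff₀ (by positivity) (by norm_num)]
    nlinarith [hε.le, hM1]
  linarith

/-- The conditional probability measure, as an element of `PcIcc a b`. -/
noncomputable def delta (ν : PcIccPos a b) : PcIcc a b :=
  ⟨⟨condM a b ν.1.1.toMeasure, ⟨condM_univ _ ν.2⟩⟩, fun x => condM_singleton _ ν.1.2 x⟩

lemma toReal_tendsto (hab : a < b) {ι : Type*} {L : Filter ι}
    {μs : ι → ProbabilityMeasure ℝ} {μ : ProbabilityMeasure ℝ}
    (h : Tendsto μs L (𝓝 μ)) (hna : μ.toMeasure {a} = 0) (hnb : μ.toMeasure {b} = 0) :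
    Tendsto (fun i => ((μs i).toMeasure (Set.Icc a b)).toReal) L
      (𝓝 ((μ.toMeasure (Set.Icc a b)).toReal)) := by
  have hfr : μ.toMeasure (frontier (Set.Icc a b)) = 0 := by
    rw [frontier_Icc hab.le, Set.insert_eq]
    exact measure_union_null hna hnb
  have := ProbabilityMeasure.tendsto_measure_of_null_frontier_of_tendsto' h hfr
  exact (ENNReal.tendsto_toReal (measure_ne_top _ _)).comp this

lemma continuous_delta (hab : a < b) : Continuous (fun ν : PcIccPos a b => delta ν) := by
  rw [continuous_iff_continuousAt]
  intro ν
  rw [ContinuousAt, tendsto_subtype_rng, ProbabilityMeasure.tendsto_iff_forall_integral_tendsto]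
  intro f
  set g : ℝ →ᵇ ℝ := f.compContinuous ⟨Set.projIcc a b hab.le, continuous_projIcc⟩ with hgdef
  have hfg : ∀ y : Set.Icc a b, f y = g (y : ℝ) := fun y => by
    rw [hgdef]
    simp [Set.projIcc_val]
  have hrw : ∀ ν' : PcIccPos a b,
      ∫ y, f y ∂(delta ν').1.toMeasure
        = ((ν'.1.1.toMeasure (Set.Icc a b)).toReal)⁻¹
            * ∫ x in Set.Icc a b, g x ∂ν'.1.1.toMeasure := by
    intro ν'
    calc ∫ y, f y ∂(delta ν').1.toMeasure
        = ∫ y, g (y : ℝ) ∂(condM a b ν'.1.1.toMeasure) := by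
          exact integral_congr_ae (Filter.Eventually.of_forall hfg)
      _ = _ := integral_condM _ g
  simp only [hrw]
  have hbase : Tendsto (fun ν' : PcIccPos a b => ν'.1.1) (𝓝 ν) (𝓝 ν.1.1) :=
    ((continuous_subtype_val.comp continuous_subtype_val).tendsto ν)
  have hc := toReal_tendsto hab hbase (ν.1.2 a) (ν.1.2 b)
  have hcne : ((ν.1.1.toMeasure (Set.Icc a b)).toReal) ≠ 0 :=
    ENNReal.toReal_ne_zero.mpr ⟨ν.2.ne', measure_ne_top _ _⟩
  exact (hc.inv₀ hcne).mul (tendsto_setIntegral hab hbase (ν.1.2 a) (ν.1.2 b) g)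

/-- The uniform probability measure on `[a,b]`. -/
noncomputable def uM (a b : ℝ) : Measure ℝ :=
  (volume (Set.Icc a b))⁻¹ • volume.restrict (Set.Icc a b)

lemma uM_apply (s : Set ℝ) (hs : MeasurableSet s) :
    uM a b s = (volume (Set.Icc a b))⁻¹ * volume (s ∩ Set.Icc a b) := by
  rw [uM, Measure.smul_apply, Measure.restrict_apply hs, smul_eq_mul]

lemma volIcc_pos (hab : a < b) : volume (Set.Icc a b) ≠ 0 := by
  rw [Real.volume_Icc]
  exact (ENNReal.ofReal_pos.mpr (by linarith)).ne'

lemma volIcc_ne_top : volume (Set.Icc a b) ≠ ⊤ := by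
  rw [Real.volume_Icc]; exact ENNReal.ofReal_ne_top

lemma uM_univ (hab : a < b) : uM a b Set.univ = 1 := by
  rw [uM_apply _ MeasurableSet.univ, Set.univ_inter]
  exact ENNReal.inv_mul_cancel (volIcc_pos hab) volIcc_ne_top

lemma uM_singleton (x : ℝ) : uM a b {x} = 0 := by
  rw [uM_apply _ (measurableSet_singleton x)]
  have h0 : volume ({x} ∩ Set.Icc a b) = 0 :=
    le_antisymm ((measure_mono Set.inter_subset_left).trans_eq (Real.volume_singleton))
      zero_le
  rw [h0, mul_zero]

lemma uM_Icc (hab : a < b) : uM a b (Set.Icc a b) = 1 := by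
  rw [uM_apply _ measurableSet_Icc, Set.inter_self]
  exact ENNReal.inv_mul_cancel (volIcc_pos hab) volIcc_ne_top

lemma dense_pos (hab : a < b) : Dense (PcIccPos a b) := by
  intro ν
  set r : ℕ → ℝ := fun n => 1 / ((n : ℝ) + 2) with hr
  have hr0 : ∀ n, 0 < r n := fun n => by positivity
  have hr1 : ∀ n, r n ≤ 1 := fun n => by
    rw [hr, div_le_one (by positivity)]
    linarith [Nat.cast_nonneg (α := ℝ) n]
  set e : ℕ → ℝ≥0∞ := fun n => ENNReal.ofReal (r n) with he
  have he1 : ∀ n, e n ≤ 1 := fun n => by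
    rw [he]; exact ENNReal.ofReal_le_one.mpr (hr1 n)
  have he0 : ∀ n, 0 < e n := fun n => ENNReal.ofReal_pos.mpr (hr0 n)
  have hetop : ∀ n, e n ≠ ⊤ := fun n => ENNReal.ofReal_ne_top
  set m : ℕ → Measure ℝ := fun n => (1 - e n) • ν.1.toMeasure + e n • uM a b with hm
  have hprob : ∀ n, IsProbabilityMeasure (m n) := by
    intro n
    constructor
    simp only [hm, Measure.add_apply, Measure.smul_apply, smul_eq_mul]
    rw [measure_univ, uM_univ hab, mul_one, mul_one]
    exact tsub_add_cancel_of_le (he1 n)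
  have hatom : ∀ n (x : ℝ), m n {x} = 0 := by
    intro n x
    simp only [hm, Measure.add_apply, Measure.smul_apply, smul_eq_mul]
    rw [ν.2 x, uM_singleton, mul_zero, mul_zero, add_zero]
  have hpos : ∀ n, 0 < m n (Set.Icc a b) := by
    intro n
    refine lt_of_lt_of_le (he0 n) ?_
    simp only [hm, Measure.add_apply, Measure.smul_apply, smul_eq_mul]
    rw [uM_Icc hab, mul_one]
    exact self_le_add_left _ _
  set seq : ℕ → PcR := fun n => ⟨⟨m n, hprob n⟩, hatom n⟩ with hseq
  have hrtend : Tendsto r atTop (𝓝 0) := by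
    have h1 : Tendsto (fun n : ℕ => (n : ℝ) + 2) atTop atTop :=
      tendsto_atTop_add_const_right _ _ tendsto_natCast_atTop_atTop
    exact h1.inv_tendsto_atTop.congr fun n => (one_div _).symm
  have htends : Tendsto seq atTop (𝓝 ν) := by
    rw [tendsto_subtype_rng, ProbabilityMeasure.tendsto_iff_forall_integral_tendsto]
    intro g
    haveI : IsProbabilityMeasure (uM a b) := ⟨uM_univ hab⟩
    have hint : ∀ n, ∫ x, g x ∂(m n)
        = (1 - r n) * ∫ x, g x ∂ν.1.toMeasure + r n * ∫ x, g x ∂uM a b := by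
      intro n
      rw [hm]
      rw [integral_add_measure ((g.integrable _).smul_measure (by
            exact ne_top_of_le_ne_top (by norm_num) (tsub_le_self.trans le_rfl)))
          ((g.integrable _).smul_measure (hetop n)),
        integral_smul_measure, integral_smul_measure]
      congr 2
      · rw [ENNReal.toReal_sub_of_le (he1 n) (by norm_num), ENNReal.toReal_one, he,
          ENNReal.toReal_ofReal (hr0 n).le]
      · rw [he, ENNReal.toReal_ofReal (hr0 n).le]
    have hlim : Tendsto (fun n => (1 - r n) * ∫ x, g x ∂ν.1.toMeasure
        + r n * ∫ x, g x ∂uM a b) atTop (𝓝 (∫ x, g x ∂ν.1.toMeasure)) := by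
      have h1 : Tendsto (fun n : ℕ => 1 - r n) atTop (𝓝 1) := by
        have := hrtend.const_sub 1
        simpa using this
      have := (h1.mul (tendsto_const_nhds (x := ∫ x, g x ∂ν.1.toMeasure))).add
        (hrtend.mul (tendsto_const_nhds (x := ∫ x, g x ∂uM a b)))
      simpa using this
    exact hlim.congr fun n => (hint n).symm
  exact mem_closure_of_tendsto htends (Filter.Eventually.of_forall fun n => hpos n)

lemma isOpen_pos (hab : a < b) : IsOpen (PcIccPos a b) := by
  have hU : IsOpen {μ : ProbabilityMeasure ℝ | 0 < μ.toMeasure (Set.Ioo a b)} := by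
    rw [← isClosed_compl_iff]
    refine isClosed_of_closure_subset fun μ hμ => ?_
    rcases mem_closure_iff_ultrafilter.mp hμ with ⟨u, husets, hu⟩
    have htd : Tendsto id (u : Filter (ProbabilityMeasure ℝ)) (𝓝 μ) := hu
    have hle := ProbabilityMeasure.le_liminf_measure_open_of_tendsto
      (μs := id) (L := (u : Filter (ProbabilityMeasure ℝ))) htd
      (isOpen_Ioo (a := a) (b := b))
    have hev : ∀ᶠ ρ in (u : Filter (ProbabilityMeasure ℝ)),
        (ρ.toMeasure (Set.Ioo a b)) = 0 := by
      filter_upwards [husets] with ρ hρ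
      simpa [Set.mem_compl_iff, not_lt, le_zero_iff] using hρ
    have hlim0 : (u : Filter (ProbabilityMeasure ℝ)).liminf
        (fun ρ => ρ.toMeasure (Set.Ioo a b)) = 0 := by
      rw [liminf_congr hev]
      exact liminf_const 0
    simp only [Set.mem_compl_iff, Set.mem_setOf_eq, not_lt, le_zero_iff]
    have := hle.trans_eq hlim0
    exact le_antisymm this zero_le
  have heq : PcIccPos a b
      = Subtype.val ⁻¹' {μ : ProbabilityMeasure ℝ | 0 < μ.toMeasure (Set.Ioo a b)} := by
    ext ν
    have hIcc : ν.1.toMeasure (Set.Icc a b) = ν.1.toMeasure (Set.Ioo a b) := by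
      haveI : NullSingletonClass ν.1.toMeasure := ⟨ν.2⟩
      exact (measure_congr Ioo_ae_eq_Icc).symm
    simp only [PcIccPos, Set.mem_setOf_eq, Set.mem_preimage, hIcc]
  rw [heq]
  exact hU.preimage continuous_subtype_val

lemma delta_preimage_dense (hab : a < b) {A : Set (PcIcc a b)} (hA : Dense A) :
    Dense ((fun ν : PcIccPos a b => delta ν) ⁻¹' A) := by
  intro ν
  set σ : PcIcc a b := delta ν with hσdef
  set c : ℝ≥0∞ := ν.1.1.toMeasure (Set.Icc a b) with hcdef
  have hc0 : c ≠ 0 := ν.2.ne'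
  have hctop : c ≠ ⊤ := measure_ne_top _ _
  set Fm : PcIcc a b → Measure ℝ := fun σ' =>
    ν.1.1.toMeasure.restrict (Set.Icc a b)ᶜ
      + c • Measure.map Subtype.val σ'.1.toMeasure with hFmdef
  have hmapuniv : ∀ σ' : PcIcc a b,
      Measure.map (Subtype.val : Set.Icc a b → ℝ) σ'.1.toMeasure Set.univ = 1 := by
    intro σ'
    rw [Measure.map_apply measurable_subtype_coe MeasurableSet.univ, Set.preimage_univ,
      measure_univ]
  have hmapIcc : ∀ σ' : PcIcc a b,
      Measure.map (Subtype.val : Set.Icc a b → ℝ) σ'.1.toMeasure (Set.Icc a b) = 1 := by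
    intro σ'
    rw [Measure.map_apply measurable_subtype_coe measurableSet_Icc]
    have : (Subtype.val : Set.Icc a b → ℝ) ⁻¹' (Set.Icc a b) = Set.univ :=
      Set.eq_univ_of_forall fun y => y.2
    rw [this, measure_univ]
  have hFprob : ∀ σ', IsProbabilityMeasure (Fm σ') := by
    intro σ'
    constructor
    simp only [hFmdef, Measure.add_apply, Measure.smul_apply, smul_eq_mul]
    rw [Measure.restrict_apply MeasurableSet.univ, Set.univ_inter, hmapuniv σ', mul_one,
      measure_compl measurableSet_Icc (measure_ne_top _ _), measure_univ]
    exact tsub_add_cancel_of_le prob_le_one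
  have hFatom : ∀ (σ' : PcIcc a b) (x : ℝ), Fm σ' {x} = 0 := by
    intro σ' x
    simp only [hFmdef, Measure.add_apply, Measure.smul_apply, smul_eq_mul]
    have h1 : ν.1.1.toMeasure.restrict (Set.Icc a b)ᶜ {x} = 0 := by
      rw [Measure.restrict_apply (measurableSet_singleton x)]
      exact le_antisymm ((measure_mono Set.inter_subset_left).trans (ν.1.2 x).le) zero_le
    have h2 : Measure.map (Subtype.val : Set.Icc a b → ℝ) σ'.1.toMeasure {x} = 0 := by
      rw [Measure.map_apply measurable_subtype_coe (measurableSet_singleton x)]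
      by_cases hx : x ∈ Set.Icc a b
      · have : (Subtype.val : Set.Icc a b → ℝ) ⁻¹' {x} = {⟨x, hx⟩} := by
          ext y; simp [Subtype.ext_iff]
        rw [this]
        exact σ'.2 _
      · have : (Subtype.val : Set.Icc a b → ℝ) ⁻¹' {x} = ∅ := by
          ext y
          simp only [Set.mem_preimage, Set.mem_singleton_iff, Set.mem_empty_iff_false,
            iff_false]
          exact fun h => hx (h ▸ y.2)
        rw [this, measure_empty]
    rw [h1, h2, mul_zero, add_zero]
  have hFIcc : ∀ σ', Fm σ' (Set.Icc a b) = c := by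
    intro σ'
    simp only [hFmdef, Measure.add_apply, Measure.smul_apply, smul_eq_mul]
    rw [Measure.restrict_apply measurableSet_Icc, Set.inter_compl_self, measure_empty,
      hmapIcc σ', mul_one, zero_add]
  have hFpos : ∀ σ', 0 < Fm σ' (Set.Icc a b) := by
    intro σ'
    rw [hFIcc σ']
    exact zero_lt_iff.mpr hc0
  set FP : PcIcc a b → PcIccPos a b := fun σ' =>
    ⟨⟨⟨Fm σ', hFprob σ'⟩, hFatom σ'⟩, hFpos σ'⟩ with hFPdef
  have hrestr : ∀ σ', (Fm σ').restrict (Set.Icc a b)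
      = c • Measure.map Subtype.val σ'.1.toMeasure := by
    intro σ'
    simp only [hFmdef]
    rw [Measure.restrict_add, Measure.restrict_restrict measurableSet_Icc,
      Set.inter_compl_self, Measure.restrict_empty, Measure.restrict_smul,
      Measure.restrict_map measurable_subtype_coe measurableSet_Icc]
    have : (Subtype.val : Set.Icc a b → ℝ) ⁻¹' (Set.Icc a b) = Set.univ :=
      Set.eq_univ_of_forall fun y => y.2
    rw [this, Measure.restrict_univ, zero_add]
  have hdeltaFP : ∀ σ', delta (FP σ') = σ' := by
    intro σ'
    apply Subtype.ext
    apply ProbabilityMeasure.toMeasure_injective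
    show condM a b (Fm σ') = σ'.1.toMeasure
    rw [condM, hFIcc σ', hrestr σ', smul_smul, ENNReal.inv_mul_cancel hc0 hctop, one_smul,
      (me a b).comap_map]
  have hL : (𝓝[A] σ).NeBot := mem_closure_iff_nhdsWithin_neBot.mp (hA σ)
  have hFσ : Fm σ = ν.1.1.toMeasure := by
    simp only [hFmdef]
    have hmap : Measure.map (Subtype.val : Set.Icc a b → ℝ) σ.1.toMeasure
        = c⁻¹ • ν.1.1.toMeasure.restrict (Set.Icc a b) := map_condM _
    rw [hmap, smul_smul, ENNReal.mul_inv_cancel hc0 hctop, one_smul]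
    have h2 := Measure.restrict_add_restrict_compl
      (μ := ν.1.1.toMeasure) (measurableSet_Icc (a := a) (b := b)).compl
    rwa [compl_compl] at h2
  have htend : Tendsto FP (𝓝[A] σ) (𝓝 ν) := by
    rw [tendsto_subtype_rng, tendsto_subtype_rng,
      ProbabilityMeasure.tendsto_iff_forall_integral_tendsto]
    intro g
    set gv : Set.Icc a b →ᵇ ℝ :=
      g.compContinuous ⟨Subtype.val, continuous_subtype_val⟩ with hgvdef
    have hint : ∀ σ' : PcIcc a b, ∫ x, g x ∂(Fm σ')
        = (∫ x in (Set.Icc a b)ᶜ, g x ∂ν.1.1.toMeasure)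
          + c.toReal * ∫ y, gv y ∂σ'.1.toMeasure := by
      intro σ'
      haveI : IsProbabilityMeasure
          (Measure.map (Subtype.val : Set.Icc a b → ℝ) σ'.1.toMeasure) :=
        Measure.isProbabilityMeasure_map measurable_subtype_coe.aemeasurable
      simp only [hFmdef]
      rw [integral_add_measure ((g.integrable _).restrict)
        ((g.integrable _).smul_measure hctop), integral_smul_measure, smul_eq_mul]
      congr 1
      congr 1
      rw [integral_map measurable_subtype_coe.aemeasurable g.continuous.aestronglyMeasurable]
      rfl
    have hlimpt : (∫ x, g x ∂ν.1.1.toMeasure)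
        = (∫ x in (Set.Icc a b)ᶜ, g x ∂ν.1.1.toMeasure)
          + c.toReal * ∫ y, gv y ∂σ.1.toMeasure := by
      rw [← hint σ, hFσ]
    rw [hlimpt]
    have hσtend : Tendsto (fun σ' : PcIcc a b => σ'.1) (𝓝[A] σ) (𝓝 σ.1) :=
      (continuous_subtype_val.tendsto σ).mono_left nhdsWithin_le_nhds
    have hI := ProbabilityMeasure.tendsto_iff_forall_integral_tendsto.mp hσtend gv
    exact (tendsto_const_nhds.add (hI.const_mul _)).congr fun σ' => (hint σ').symm
  refine mem_closure_of_tendsto htend ?_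
  filter_upwards [self_mem_nhdsWithin] with σ' hσ'
  show FP σ' ∈ _ ⁻¹' A
  simpa [Set.mem_preimage, hdeltaFP σ'] using hσ'

lemma isGδ_preimage {X Y : Type*} [TopologicalSpace X] [TopologicalSpace Y]
    {f : X → Y} (hf : Continuous f) {A : Set Y} (hA : IsGδ A) : IsGδ (f ⁻¹' A) := by
  obtain ⟨T, hTopen, hTcount, rfl⟩ := hA
  rw [Set.preimage_sInter]
  exact IsGδ.biInter hTcount fun t ht => ((hTopen t ht).preimage hf).isGδ

end S12

theorem statement12 (a b : ℝ) (hab : a < b) :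
    (IsOpen (PcIccPos a b) ∧ Dense (PcIccPos a b)) ∧
    ∃ Δ : PcIccPos a b → PcIcc a b,
      (∀ ν : PcIccPos a b, (Δ ν).1.toMeasure =
          Measure.comap Subtype.val
            ((ν.1.1.toMeasure (Set.Icc a b))⁻¹ •
              ν.1.1.toMeasure.restrict (Set.Icc a b))) ∧
      Continuous Δ ∧
      (∀ A : Set (PcIcc a b), Dense A → Dense (Δ ⁻¹' A)) ∧
      (∀ A : Set (PcIcc a b), IsGδ A → Dense A →
        IsGδ (Δ ⁻¹' A) ∧ Dense (Δ ⁻¹' A)) := by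
  refine ⟨⟨S12.isOpen_pos hab, S12.dense_pos hab⟩,
    ⟨fun ν => S12.delta ν, fun ν => rfl, S12.continuous_delta hab,
      fun A hA => S12.delta_preimage_dense hab hA,
      fun A hGδ hA => ⟨S12.isGδ_preimage (S12.continuous_delta hab) hGδ,
        S12.delta_preimage_dense hab hA⟩⟩⟩
end

section
/- Let σ and ν be Borel probability measures on ℝ. Then σ and ν are mutually singular if and only if for every n ∈ ℕ, n ≥ 1, there exists a set 𝓞 ⊂ ℝ which is a finite union of open intervals such that σ(𝓞) < 1/n and ν(𝓞) > 1 − 1/n. -/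
open MeasureTheory Filter Topology
open scoped ENNReal NNReal

theorem statement14 (σ ν : Measure ℝ) [IsProbabilityMeasure σ] [IsProbabilityMeasure ν] :
    σ ⟂ₘ ν ↔
      ∀ n : ℕ, 1 ≤ n → ∃ O : Set ℝ,
        (∃ S : Finset (ℝ × ℝ), O = ⋃ p ∈ S, Set.Ioo p.1 p.2) ∧
        σ O < 1 / (n : ℝ≥0∞) ∧ 1 - 1 / (n : ℝ≥0∞) < ν O := by
  constructor
  · intro h n hn
    obtain ⟨s, hsm, hs0, hsc⟩ := h
    have hn0 : (0 : ℝ≥0∞) < 1 / n :=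
      ENNReal.div_pos one_ne_zero (ENNReal.natCast_ne_top n)
    obtain ⟨U, hsU, hUopen, hUσ⟩ := Set.exists_isOpen_lt_of_lt s (1 / n) (by
      rw [hs0]; exact hn0)
    have hνs : ν s = 1 := by
      have := prob_compl_eq_zero_iff (μ := ν) hsm
      exact this.mp hsc
    have hνU : ν U = 1 := le_antisymm prob_le_one (hνs ▸ measure_mono hsU)
    -- cover U by rational intervals
    classical
    set g : ℚ × ℚ → ℝ × ℝ := fun q =>
      if Set.Ioo (q.1 : ℝ) (q.2 : ℝ) ⊆ U then ((q.1 : ℝ), (q.2 : ℝ)) else (0, 0) with hg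
    set f : ℚ × ℚ → Set ℝ := fun q => Set.Ioo (g q).1 (g q).2 with hf
    have hfU : ∀ q, f q ⊆ U := by
      intro q
      simp only [hf, hg]
      split
      · assumption
      · simp
    have hUf : U = ⋃ q : ℚ × ℚ, f q := by
      apply Set.Subset.antisymm
      · intro x hx
        obtain ⟨l, u, ⟨hl, hu⟩, hsub⟩ :=
          mem_nhds_iff_exists_Ioo_subset.mp (hUopen.mem_nhds hx)
        obtain ⟨a, hla, hax⟩ := exists_rat_btwn hl
        obtain ⟨b, hxb, hbu⟩ := exists_rat_btwn hu
        have hab : Set.Ioo (a : ℝ) (b : ℝ) ⊆ U := fun y hy =>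
          hsub ⟨hla.trans hy.1, hy.2.trans hbu⟩
        refine Set.mem_iUnion.mpr ⟨(a, b), ?_⟩
        simp only [hf, hg, hab, if_pos]
        exact ⟨hax, hxb⟩
      · exact Set.iUnion_subset hfU
    -- finite approximation
    set F : Finset (ℚ × ℚ) → Set ℝ := fun t => ⋃ q ∈ t, f q with hF
    have hmono : Monotone F := fun t t' htt' =>
      Set.biUnion_subset_biUnion_left (fun q hq => htt' hq)
    have hdir : Directed (· ⊆ ·) F := hmono.directed_le
    have hunion : ⋃ t : Finset (ℚ × ℚ), F t = ⋃ q : ℚ × ℚ, f q := by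
      apply Set.Subset.antisymm
      · exact Set.iUnion_subset fun t => Set.iUnion₂_subset fun q _ => Set.subset_iUnion f q
      · exact Set.iUnion_subset fun q =>
          Set.subset_iUnion_of_subset {q} (by simp [hF])
    have hsup : ν U = ⨆ t : Finset (ℚ × ℚ), ν (F t) := by
      rw [hUf, ← hunion, hdir.measure_iUnion]
    have hlt : 1 - 1 / (n : ℝ≥0∞) < ν U := by
      rw [hνU]
      exact ENNReal.sub_lt_self ENNReal.one_ne_top one_ne_zero hn0.ne'
    rw [hsup, lt_iSup_iff] at hlt
    obtain ⟨t, ht⟩ := hlt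
    refine ⟨F t, ⟨t.image g, ?_⟩, ?_, ht⟩
    · ext x
      simp only [hF, hf, Finset.set_biUnion_finset_image]
    · exact lt_of_le_of_lt
        (measure_mono (Set.iUnion₂_subset fun q _ => hfU q)) hUσ
  · intro h
    have key : ∀ k : ℕ, ∃ O : Set ℝ, MeasurableSet O ∧
        σ O < 1 / 2 ^ k ∧ 1 - 1 / 2 ^ k < ν O := by
      intro k
      obtain ⟨O, ⟨S, hS⟩, h1, h2⟩ := h (2 ^ k) (Nat.one_le_two_pow)
      have hcast : ((2 ^ k : ℕ) : ℝ≥0∞) = 2 ^ k := by push_cast; ring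
      rw [hcast] at h1 h2
      refine ⟨O, ?_, h1, h2⟩
      rw [hS]
      exact S.measurableSet_biUnion fun p _ => measurableSet_Ioo
    choose O hOm hOσ hOν using key
    set s : Set ℝ := limsup O atTop with hs
    have hslim : s = ⋂ N, ⋃ k, ⋃ (_ : N ≤ k), O k := by
      rw [hs, limsup_eq_iInf_iSup_of_nat]
      simp only [Set.iInf_eq_iInter, Set.iSup_eq_iUnion]
    have htendszero : Tendsto (fun k : ℕ => (1 : ℝ≥0∞) / 2 ^ k) atTop (𝓝 0) := by
      simp only [one_div, ENNReal.inv_pow]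
      exact ENNReal.tendsto_pow_atTop_nhds_zero_of_lt_one
        (by norm_num : (2 : ℝ≥0∞)⁻¹ < 1)
    refine ⟨s, ?_, ?_, ?_⟩
    · exact MeasurableSet.measurableSet_limsup fun k => hOm k
    · apply measure_limsup_atTop_eq_zero
      have hsum : ∑' k : ℕ, σ (O k) ≤ ∑' k : ℕ, (1 : ℝ≥0∞) / 2 ^ k :=
        ENNReal.tsum_le_tsum fun k => (hOσ k).le
      have : ∑' k : ℕ, (1 : ℝ≥0∞) / 2 ^ k = 2 := by
        simp only [one_div, ENNReal.inv_pow]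
        rw [ENNReal.tsum_geometric, ENNReal.one_sub_inv_two]
        simp
      rw [this] at hsum
      exact ne_top_of_le_ne_top (by norm_num) hsum
    · have hcompl : sᶜ = ⋃ N, ⋂ k, ⋂ (_ : N ≤ k), (O k)ᶜ := by
        rw [hslim]
        simp [Set.compl_iInter, Set.compl_iUnion]
      rw [hcompl]
      have hB : ∀ N : ℕ, ν (⋂ k, ⋂ (_ : N ≤ k), (O k)ᶜ) = 0 := by
        intro N
        have hle : ∀ M, N ≤ M → ν (⋂ k, ⋂ (_ : N ≤ k), (O k)ᶜ) ≤ 1 / 2 ^ M := by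
          intro M hNM
          calc ν (⋂ k, ⋂ (_ : N ≤ k), (O k)ᶜ) ≤ ν (O M)ᶜ :=
                measure_mono (Set.iInter₂_subset M hNM)
            _ = 1 - ν (O M) := prob_compl_eq_one_sub (hOm M)
            _ ≤ 1 / 2 ^ M := by
                rw [tsub_le_iff_right]
                have h2M : (1 : ℝ≥0∞) ≤ 2 ^ M := by
                  have := Nat.one_le_two_pow (n := M)
                  exact_mod_cast (by exact_mod_cast this : ((1 : ℕ) : ℝ≥0∞) ≤ ((2 ^ M : ℕ) : ℝ≥0∞))
                calc (1 : ℝ≥0∞) = 1 / 2 ^ M + (1 - 1 / 2 ^ M) :=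
                      (add_tsub_cancel_of_le
                        (ENNReal.div_le_of_le_mul (by simpa using h2M))).symm
                  _ ≤ 1 / 2 ^ M + ν (O M) := by gcongr; exact (hOν M).le
        have := ge_of_tendsto htendszero
          (eventually_atTop.mpr ⟨N, fun M hM => hle M hM⟩)
        exact le_antisymm this zero_le
      refine le_antisymm ?_ zero_le
      calc ν (⋃ N, ⋂ k, ⋂ (_ : N ≤ k), (O k)ᶜ) ≤ ∑' N, ν (⋂ k, ⋂ (_ : N ≤ k), (O k)ᶜ) :=
            measure_iUnion_le _
        _ = 0 := by simp [hB]
end
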